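/- arXiv:1511.03738 — 5 statements merged into one kernel-verified Lean document; each statement's English description precedes it below -/
import Mathlib

section
/- Let f : {1,...,N} → [0,∞), Σ_i f(i) = S, max_i f(i) = O(S^{1/2-τ}), r = O(S^{1/2-τ}) with r ≥ k for a fixed natural number k, and τ > 0. Define ξ = Σ over tuples with x_1,...,x_k unconstrained and x_{k+1},...,x_r pairwise distinct (and distinct from each other but not necessarily from x_1,...,x_k) of ∏_{i=1}^r f(x_i). Then Σ over tuples with x_1,...,x_r all pairwise distinct of ∏_{i=1}^r f(x_i) = ξ·(1 + O(S^{-2τ})), i.e., the relative error between the fully-distinct sum and ξ is bounded by a constant times S^{-2τ} (the constant depending on k and the implied constants). -/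
/-- `DistinctFrom k x` means the coordinates `x_i` with index `i ≥ k` are
pairwise distinct (coordinates with index `< k` are unconstrained). -/
abbrev DistinctFrom (k : ℕ) {r N : ℕ} (x : Fin r → Fin N) : Prop :=
  ∀ i j : Fin r, k ≤ (i : ℕ) → k ≤ (j : ℕ) → x i = x j → i = j

section Aux

variable {N r : ℕ}

lemma df_prod_nonneg {f : Fin N → ℝ} (hf : ∀ i, 0 ≤ f i) (x : Fin r → Fin N) :
    0 ≤ ∏ i, f (x i) :=
  Finset.prod_nonneg fun _ _ => hf _

lemma df_sum_nonneg {f : Fin N → ℝ} (hf : ∀ i, 0 ≤ f i) (m : ℕ) :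
    0 ≤ ∑ x : Fin r → Fin N, if DistinctFrom m x then ∏ i, f (x i) else 0 := by
  refine Finset.sum_nonneg fun x _ => ?_
  split_ifs
  · exact df_prod_nonneg hf x
  · exact le_rfl

lemma df_mono {f : Fin N → ℝ} (hf : ∀ i, 0 ≤ f i) {m m' : ℕ} (h : m ≤ m') :
    (∑ x : Fin r → Fin N, if DistinctFrom m x then ∏ i, f (x i) else 0)
      ≤ ∑ x : Fin r → Fin N, if DistinctFrom m' x then ∏ i, f (x i) else 0 := by
  refine Finset.sum_le_sum fun x _ => ?_
  split_ifs with h1 h2 h2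
  · exact le_rfl
  · exact absurd (fun i j hi hj => h1 i j (h.trans hi) (h.trans hj)) h2
  · exact df_prod_nonneg hf x
  · exact le_rfl

lemma df_step (f : Fin N → ℝ) (hf : ∀ i, 0 ≤ f i) (M : ℝ)
    (hM0 : 0 ≤ M) (hM : ∀ i, f i ≤ M) (m : ℕ) (hm : m < r) :
    (∑ i, f i) *
      ((∑ x : Fin r → Fin N, if DistinctFrom (m + 1) x then ∏ i, f (x i) else 0)
        - ∑ x : Fin r → Fin N, if DistinctFrom m x then ∏ i, f (x i) else 0)
    ≤ (r : ℝ) * M *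
        (∑ x : Fin r → Fin N, if DistinctFrom (m + 1) x then ∏ i, f (x i) else 0) := by
  set p : Fin r := ⟨m, hm⟩ with hp
  set e := Equiv.funSplitAt p (Fin N) with he
  have hsymm_p : ∀ (v : Fin N) (y : { j : Fin r // j ≠ p } → Fin N),
      e.symm (v, y) p = v := by
    intro v y; simp [he]
  have hsymm_ne : ∀ (v : Fin N) (y : { j : Fin r // j ≠ p } → Fin N) (j : Fin r)
      (hj : j ≠ p), e.symm (v, y) j = y ⟨j, hj⟩ := by
    intro v y j hj; simp [he, hj]
  set Q : ({ j : Fin r // j ≠ p } → Fin N) → Prop := fun y =>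
    ∀ a b : { j : Fin r // j ≠ p }, m + 1 ≤ ((a : Fin r) : ℕ) →
      m + 1 ≤ ((b : Fin r) : ℕ) → y a = y b → a = b with hQ
  have key_cond : ∀ (v : Fin N) (y : { j : Fin r // j ≠ p } → Fin N),
      DistinctFrom (m + 1) (e.symm (v, y)) ↔ Q y := by
    intro v y
    constructor
    · intro h a b ha hb hy
      refine Subtype.ext (h a.1 b.1 ha hb ?_)
      rw [hsymm_ne v y a.1 a.2, hsymm_ne v y b.1 b.2]
      exact hy
    · intro h i j hi hj hx
      have hip : i ≠ p := by
        intro hE; rw [hE] at hi; simp only [hp] at hi; omega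
      have hjp : j ≠ p := by
        intro hE; rw [hE] at hj; simp only [hp] at hj; omega
      have := h ⟨i, hip⟩ ⟨j, hjp⟩ hi hj (by
        rw [← hsymm_ne v y i hip, ← hsymm_ne v y j hjp]; exact hx)
      exact congrArg Subtype.val this
  have key_prod : ∀ (v : Fin N) (y : { j : Fin r // j ≠ p } → Fin N),
      (∏ i, f (e.symm (v, y) i)) = f v * ∏ a : { j : Fin r // j ≠ p }, f (y a) := by
    intro v y
    rw [← Finset.mul_prod_erase Finset.univ (fun i => f (e.symm (v, y) i))
      (Finset.mem_univ p), hsymm_p]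
    congr 1
    rw [Finset.prod_subtype (p := fun j => j ≠ p) (Finset.univ.erase p)
      (fun x => by simp) (fun j => f (e.symm (v, y) j))]
    exact Finset.prod_congr rfl fun a _ => by rw [hsymm_ne v y a.1 a.2]
  have split_sum : ∀ F : (Fin r → Fin N) → ℝ,
      (∑ x : Fin r → Fin N, F x)
        = ∑ v : Fin N, ∑ y : { j : Fin r // j ≠ p } → Fin N, F (e.symm (v, y)) := by
    intro F
    rw [← Equiv.sum_comp e.symm F, Fintype.sum_prod_type]
  set T := ∑ y : { j : Fin r // j ≠ p } → Fin N,
      if Q y then ∏ a : { j : Fin r // j ≠ p }, f (y a) else 0 with hTdef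
  have hT0 : 0 ≤ T := by
    refine Finset.sum_nonneg fun y _ => ?_
    split_ifs
    · exact Finset.prod_nonneg fun _ _ => hf _
    · exact le_rfl
  have hA : (∑ x : Fin r → Fin N, if DistinctFrom (m + 1) x then ∏ i, f (x i) else 0)
      = (∑ i, f i) * T := by
    rw [split_sum]
    have step : ∀ (v : Fin N) (y : { j : Fin r // j ≠ p } → Fin N),
        (if DistinctFrom (m + 1) (e.symm (v, y)) then ∏ i, f (e.symm (v, y) i) else 0)
          = f v * (if Q y then ∏ a : { j : Fin r // j ≠ p }, f (y a) else 0) := by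
      intro v y
      by_cases h : Q y
      · rw [if_pos ((key_cond v y).2 h), if_pos h, key_prod]
      · rw [if_neg (fun hh => h ((key_cond v y).1 hh)), if_neg h, mul_zero]
    simp_rw [step, ← Finset.mul_sum]
    rw [← Finset.sum_mul]
  have collision : ∀ j0 : Fin r, m + 1 ≤ (j0 : ℕ) →
      (∑ x : Fin r → Fin N,
          if DistinctFrom (m + 1) x ∧ x p = x j0 then ∏ i, f (x i) else 0)
        ≤ M * T := by
    intro j0 hj0
    have hj0p : j0 ≠ p := by
      intro hE; rw [hE] at hj0; simp only [hp] at hj0; omega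
    rw [split_sum]
    have hterm : ∀ (v : Fin N) (y : { j : Fin r // j ≠ p } → Fin N),
        (if DistinctFrom (m + 1) (e.symm (v, y)) ∧ e.symm (v, y) p = e.symm (v, y) j0
          then ∏ i, f (e.symm (v, y) i) else 0)
        = (if Q y ∧ v = y ⟨j0, hj0p⟩
            then f v * ∏ a : { j : Fin r // j ≠ p }, f (y a) else 0) := by
      intro v y
      have hc : (DistinctFrom (m + 1) (e.symm (v, y))
          ∧ e.symm (v, y) p = e.symm (v, y) j0) ↔ (Q y ∧ v = y ⟨j0, hj0p⟩) := by
        rw [key_cond, hsymm_p, hsymm_ne v y j0 hj0p]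
      rw [if_congr hc (key_prod v y) rfl]
    simp_rw [hterm]
    rw [Finset.sum_comm]
    have inner : ∀ y : { j : Fin r // j ≠ p } → Fin N,
        (∑ v : Fin N, if Q y ∧ v = y ⟨j0, hj0p⟩
            then f v * ∏ a : { j : Fin r // j ≠ p }, f (y a) else 0)
          ≤ M * (if Q y then ∏ a : { j : Fin r // j ≠ p }, f (y a) else 0) := by
      intro y
      by_cases h : Q y
      · rw [if_pos h,
          Finset.sum_congr rfl (fun v _ => if_congr (and_iff_right h) rfl rfl),
          Finset.sum_ite_eq' Finset.univ (y ⟨j0, hj0p⟩)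
          (fun v => f v * ∏ a : { j : Fin r // j ≠ p }, f (y a)),
          if_pos (Finset.mem_univ _)]
        exact mul_le_mul_of_nonneg_right (hM _) (Finset.prod_nonneg fun _ _ => hf _)
      · simp only [h, false_and, if_false, if_neg, mul_zero]
        simp
    calc (∑ y : { j : Fin r // j ≠ p } → Fin N, ∑ v : Fin N,
            if Q y ∧ v = y ⟨j0, hj0p⟩
              then f v * ∏ a : { j : Fin r // j ≠ p }, f (y a) else 0)
        ≤ ∑ y : { j : Fin r // j ≠ p } → Fin N,
            M * (if Q y then ∏ a : { j : Fin r // j ≠ p }, f (y a) else 0) :=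
          Finset.sum_le_sum fun y _ => inner y
      _ = M * T := by rw [← Finset.mul_sum]
  set J := Finset.univ.filter (fun j : Fin r => m + 1 ≤ (j : ℕ)) with hJdef
  have hstep1 :
      (∑ x : Fin r → Fin N, if DistinctFrom (m + 1) x then ∏ i, f (x i) else 0)
        - (∑ x : Fin r → Fin N, if DistinctFrom m x then ∏ i, f (x i) else 0)
      ≤ ∑ j0 ∈ J, ∑ x : Fin r → Fin N,
          if DistinctFrom (m + 1) x ∧ x p = x j0 then ∏ i, f (x i) else 0 := by
    rw [← Finset.sum_sub_distrib, Finset.sum_comm]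
    refine Finset.sum_le_sum fun x _ => ?_
    have hnn : ∀ j0 ∈ J,
        (0 : ℝ) ≤ if DistinctFrom (m + 1) x ∧ x p = x j0 then ∏ i, f (x i) else 0 := by
      intro j0 _
      split_ifs
      · exact df_prod_nonneg hf x
      · exact le_rfl
    by_cases h0 : DistinctFrom m x
    · have h1 : DistinctFrom (m + 1) x := fun i j hi hj =>
        h0 i j (by omega) (by omega)
      rw [if_pos h1, if_pos h0, sub_self]
      exact Finset.sum_nonneg hnn
    · by_cases h1 : DistinctFrom (m + 1) x
      · rw [if_pos h1, if_neg h0, sub_zero]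
        have hex : ∃ j0 ∈ J, x p = x j0 := by
          have h0' : ∃ i j : Fin r, m ≤ (i : ℕ) ∧ m ≤ (j : ℕ) ∧ x i = x j ∧ i ≠ j := by
            by_contra hcon
            push_neg at hcon
            exact h0 fun i j hi hj hx => hcon i j hi hj hx
          obtain ⟨i, j, hi, hj, hxij, hij⟩ := h0'
          by_cases hii : m + 1 ≤ (i : ℕ)
          · by_cases hjj : m + 1 ≤ (j : ℕ)
            · exact absurd (h1 i j hii hjj hxij) hij
            · have hjP : j = p := Fin.ext (by simp only [hp]; omega)
              exact ⟨i, Finset.mem_filter.2 ⟨Finset.mem_univ _, hii⟩,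
                by rw [← hjP]; exact hxij.symm⟩
          · have hiP : i = p := Fin.ext (by simp only [hp]; omega)
            have hjj : m + 1 ≤ (j : ℕ) := by
              rcases Nat.lt_or_ge (j : ℕ) (m + 1) with h | h
              · have hjP : j = p := Fin.ext (by simp only [hp]; omega)
                exact absurd (hiP.trans hjP.symm) hij
              · exact h
            exact ⟨j, Finset.mem_filter.2 ⟨Finset.mem_univ _, hjj⟩,
              by rw [← hiP]; exact hxij⟩
        obtain ⟨j0, hj0J, hxj0⟩ := hex
        have := Finset.single_le_sum hnn hj0J
        rwa [if_pos ⟨h1, hxj0⟩] at this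
      · rw [if_neg h1, if_neg h0, sub_self]
        exact Finset.sum_nonneg hnn
  have hstep2 :
      (∑ x : Fin r → Fin N, if DistinctFrom (m + 1) x then ∏ i, f (x i) else 0)
        - (∑ x : Fin r → Fin N, if DistinctFrom m x then ∏ i, f (x i) else 0)
      ≤ (J.card : ℝ) * (M * T) := by
    refine hstep1.trans ?_
    calc (∑ j0 ∈ J, ∑ x : Fin r → Fin N,
            if DistinctFrom (m + 1) x ∧ x p = x j0 then ∏ i, f (x i) else 0)
        ≤ ∑ _j0 ∈ J, M * T :=
          Finset.sum_le_sum fun j0 hj0 =>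
            collision j0 (Finset.mem_filter.1 hj0).2
      _ = (J.card : ℝ) * (M * T) := by
          rw [Finset.sum_const, nsmul_eq_mul]
  have hJcard : (J.card : ℝ) ≤ (r : ℝ) := by
    have : J.card ≤ r := by
      calc J.card ≤ Finset.univ.card := Finset.card_filter_le _ _
        _ = r := by simp
    exact_mod_cast this
  have hS0 : (0 : ℝ) ≤ ∑ i, f i := Finset.sum_nonneg fun i _ => hf i
  calc (∑ i, f i) *
        ((∑ x : Fin r → Fin N, if DistinctFrom (m + 1) x then ∏ i, f (x i) else 0)
          - ∑ x : Fin r → Fin N, if DistinctFrom m x then ∏ i, f (x i) else 0)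
      ≤ (∑ i, f i) * ((J.card : ℝ) * (M * T)) :=
        mul_le_mul_of_nonneg_left hstep2 hS0
    _ ≤ (∑ i, f i) * ((r : ℝ) * (M * T)) := by
        refine mul_le_mul_of_nonneg_left ?_ hS0
        exact mul_le_mul_of_nonneg_right hJcard (mul_nonneg hM0 hT0)
    _ = (r : ℝ) * M * ((∑ i, f i) * T) := by ring
    _ = (r : ℝ) * M *
          (∑ x : Fin r → Fin N, if DistinctFrom (m + 1) x then ∏ i, f (x i) else 0) := by
        rw [hA]

end Aux

/-- Lemma 2: for nonnegative `f` with `∑ f = S`, `max f = O(S^{1/2-τ})`,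
`r = O(S^{1/2-τ})` and fixed `k ≤ r`, the fully-distinct sum
`∑_{x₁≠⋯≠x_r} ∏ f(x_i)` equals
`ξ = ∑_{x₁,…,x_k, x_{k+1}≠⋯≠x_r} ∏ f(x_i)` up to a relative error
`O(S^{-2τ})`: there are constants `C' > 0` and `S₀` (depending only on
`k, τ` and the implied constant `C`) such that
`|∑_{x₁≠⋯≠x_r} ∏ f(x_i) - ξ| ≤ C'·S^{-2τ}·ξ` whenever `S ≥ S₀`. -/
theorem stmt_12 (k : ℕ) (C τ : ℝ) (hC : 0 < C) (hτ : 0 < τ) :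
    ∃ C' > 0, ∃ S₀ : ℝ, ∀ (N r : ℕ) (f : Fin N → ℝ) (S : ℝ),
      (∀ i, 0 ≤ f i) → (∑ i, f i) = S → S₀ ≤ S →
      (∀ i, f i ≤ C * S ^ ((1 : ℝ) / 2 - τ)) →
      (r : ℝ) ≤ C * S ^ ((1 : ℝ) / 2 - τ) → k ≤ r →
      |(∑ x : Fin r → Fin N,
          if DistinctFrom 0 x then ∏ i, f (x i) else 0)
        - (∑ x : Fin r → Fin N,
            if DistinctFrom k x then ∏ i, f (x i) else 0)|
        ≤ C' * S ^ (-(2 * τ)) *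
          (∑ x : Fin r → Fin N,
            if DistinctFrom k x then ∏ i, f (x i) else 0) := by
  refine ⟨((k : ℝ) + 1) * C ^ 2, by positivity, 1, ?_⟩
  intro N r f S hf hfS hS1 hfM hr hkr
  have hS0 : (0 : ℝ) < S := lt_of_lt_of_le one_pos hS1
  set M : ℝ := C * S ^ ((1 : ℝ) / 2 - τ) with hMdef
  have hMpos : 0 < M := mul_pos hC (Real.rpow_pos_of_pos hS0 _)
  set A : ℕ → ℝ := fun m =>
    ∑ x : Fin r → Fin N, if DistinctFrom m x then ∏ i, f (x i) else 0 with hAdef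
  have hmono : ∀ {m m' : ℕ}, m ≤ m' → A m ≤ A m' := fun h => df_mono hf h
  have hAnn : ∀ m, 0 ≤ A m := fun m => df_sum_nonneg hf m
  have tele : ∀ m, m ≤ r → S * (A m - A 0) ≤ (m : ℝ) * ((r : ℝ) * M) * A m := by
    intro m
    induction m with
    | zero => intro _; simp
    | succ n ih =>
      intro hn
      have hstep := df_step (r := r) f hf M hMpos.le hfM n (by omega)
      rw [hfS] at hstep
      have hmn : A n ≤ A (n + 1) := hmono (Nat.le_succ n)
      have hrM : (0 : ℝ) ≤ (r : ℝ) * M := by positivity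
      calc S * (A (n + 1) - A 0)
          = S * (A (n + 1) - A n) + S * (A n - A 0) := by ring
        _ ≤ (r : ℝ) * M * A (n + 1) + (n : ℝ) * ((r : ℝ) * M) * A n :=
            add_le_add hstep (ih (by omega))
        _ ≤ (r : ℝ) * M * A (n + 1) + (n : ℝ) * ((r : ℝ) * M) * A (n + 1) := by
            have : (0 : ℝ) ≤ (n : ℝ) * ((r : ℝ) * M) := by positivity
            exact add_le_add_right (mul_le_mul_of_nonneg_left hmn this) _
        _ = ((n : ℕ) + 1 : ℝ) * ((r : ℝ) * M) * A (n + 1) := by ring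
        _ = ((n + 1 : ℕ) : ℝ) * ((r : ℝ) * M) * A (n + 1) := by push_cast; ring
  have hrM : (r : ℝ) * M ≤ C ^ 2 * S ^ ((1 : ℝ) - 2 * τ) := by
    calc (r : ℝ) * M ≤ (C * S ^ ((1 : ℝ) / 2 - τ)) * M :=
          mul_le_mul_of_nonneg_right hr hMpos.le
      _ = C ^ 2 * (S ^ ((1 : ℝ) / 2 - τ) * S ^ ((1 : ℝ) / 2 - τ)) := by
          rw [hMdef]; ring
      _ = C ^ 2 * S ^ ((1 : ℝ) - 2 * τ) := by
          rw [← Real.rpow_add hS0,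
            show (1 : ℝ) / 2 - τ + ((1 : ℝ) / 2 - τ) = 1 - 2 * τ by ring]
  have hmain : S * (A k - A 0) ≤ (k : ℝ) * (C ^ 2 * S ^ ((1 : ℝ) - 2 * τ)) * A k := by
    refine (tele k hkr).trans ?_
    have hk0 : (0 : ℝ) ≤ (k : ℝ) := Nat.cast_nonneg k
    exact mul_le_mul_of_nonneg_right
      (mul_le_mul_of_nonneg_left hrM hk0) (hAnn k)
  have hpow : S ^ ((1 : ℝ) - 2 * τ) = S ^ (-(2 * τ)) * S := by
    rw [show (1 : ℝ) - 2 * τ = -(2 * τ) + 1 by ring, Real.rpow_add hS0, Real.rpow_one]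
  have hfinal : A k - A 0 ≤ (k : ℝ) * C ^ 2 * S ^ (-(2 * τ)) * A k := by
    have h2 : S * (A k - A 0) ≤ S * ((k : ℝ) * C ^ 2 * S ^ (-(2 * τ)) * A k) := by
      refine hmain.trans (le_of_eq ?_)
      rw [hpow]; ring
    exact (mul_le_mul_iff_right₀ hS0).1 h2
  have habs : |A 0 - A k| = A k - A 0 := by
    rw [abs_sub_comm, abs_of_nonneg (sub_nonneg.2 (hmono (Nat.zero_le k)))]
  rw [habs]
  refine hfinal.trans ?_
  have hx : (0 : ℝ) ≤ S ^ (-(2 * τ)) * A k :=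
    mul_nonneg (Real.rpow_nonneg hS0.le _) (hAnn k)
  calc (k : ℝ) * C ^ 2 * S ^ (-(2 * τ)) * A k
      = ((k : ℝ) * C ^ 2) * (S ^ (-(2 * τ)) * A k) := by ring
    _ ≤ (((k : ℝ) + 1) * C ^ 2) * (S ^ (-(2 * τ)) * A k) := by
        refine mul_le_mul_of_nonneg_right ?_ hx
        nlinarith [sq_nonneg C]
    _ = ((k : ℝ) + 1) * C ^ 2 * S ^ (-(2 * τ)) * A k := by ring
end

section
/- Let f, g : {1,...,N} → [0,∞) with g ≤ f pointwise, Σ_i f(i) = S, max f = O(S^{1/2-τ}), r = O(S^{1/2-τ}), fixed natural numbers k > m > 1 with r ≥ k, and τ > 0. Define ζ = Σ over tuples where x_1 = x_2 = ... = x_m, x_{m+1},...,x_k are unconstrained, and x_{k+1},...,x_r are pairwise distinct, of g(x_1)·∏_{i=2}^r f(x_i). Then Σ over tuples where x_1 = ... = x_m and x_m, x_{m+1},...,x_r are pairwise distinct of g(x_1)·∏_{i=2}^r f(x_i) equals ζ·(1 + O(S^{-2τ})). -/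
set_option maxHeartbeats 1000000


/-- `EqOnFirst k x` means the first `k` coordinates of `x` coincide. -/
abbrev EqOnFirst (k : ℕ) {r N : ℕ} (x : Fin r → Fin N) : Prop :=
  ∀ i j : Fin r, (i : ℕ) < k → (j : ℕ) < k → x i = x j

namespace Stmt13Aux

open Finset

variable {N r : ℕ}

noncomputable def wt (f g : Fin N → ℝ) (h0 : 0 < r) (x : Fin r → Fin N) : ℝ :=
  g (x ⟨0, h0⟩) * ∏ i ∈ univ.erase (⟨0, h0⟩ : Fin r), f (x i)

lemma wt_nonneg {f g : Fin N → ℝ} (hg : ∀ i, 0 ≤ g i) (hf : ∀ i, 0 ≤ f i)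
    (h0 : 0 < r) (x : Fin r → Fin N) : 0 ≤ wt f g h0 x :=
  mul_nonneg (hg _) (prod_nonneg fun i _ => hf _)

lemma wt_update (f g : Fin N → ℝ) (h0 : 0 < r) (x : Fin r → Fin N)
    (c : Fin r) (hc : c ≠ ⟨0, h0⟩) (v : Fin N) :
    f v * wt f g h0 x = f (x c) * wt f g h0 (Function.update x c v) := by
  have hcmem : c ∈ univ.erase (⟨0, h0⟩ : Fin r) := mem_erase.mpr ⟨hc, mem_univ _⟩
  have h1 : ∏ i ∈ univ.erase (⟨0, h0⟩ : Fin r), f (x i)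
      = f (x c) * ∏ i ∈ (univ.erase (⟨0, h0⟩ : Fin r)).erase c, f (x i) :=
    (Finset.mul_prod_erase _ _ hcmem).symm
  have h2 : ∏ i ∈ univ.erase (⟨0, h0⟩ : Fin r), f (Function.update x c v i)
      = f v * ∏ i ∈ (univ.erase (⟨0, h0⟩ : Fin r)).erase c, f (x i) := by
    rw [← Finset.mul_prod_erase _ _ hcmem, Function.update_self]
    congr 1
    refine Finset.prod_congr rfl fun i hi => ?_
    rw [Function.update_of_ne (Finset.mem_erase.mp hi).1]
  have h3 : Function.update x c v ⟨0, h0⟩ = x ⟨0, h0⟩ :=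
    Function.update_of_ne (Ne.symm hc) _ _
  unfold wt
  rw [h1, h2, h3]
  ring

/-- The key collision estimate. -/
lemma key (k m : ℕ) (h0 : 0 < r) (hm : 0 < m) (f g : Fin N → ℝ)
    (hg : ∀ i, 0 ≤ g i) (hf : ∀ i, 0 ≤ f i)
    (M S : ℝ) (hM : 0 ≤ M) (hfM : ∀ i, f i ≤ M) (hS : (∑ i, f i) = S)
    (c d : Fin r) (hcm : m ≤ (c : ℕ)) (hdc : d ≠ c) :
    (S - r * M) *
      (∑ x ∈ univ.filter (fun x : Fin r → Fin N =>
          (EqOnFirst m x ∧ DistinctFrom k x) ∧ x c = x d), wt f g h0 x)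
      ≤ M * (∑ x ∈ univ.filter (fun x : Fin r → Fin N =>
          EqOnFirst m x ∧ DistinctFrom k x), wt f g h0 x) := by
  classical
  have hc0 : c ≠ (⟨0, h0⟩ : Fin r) := by
    intro h
    have : (c : ℕ) = 0 := by rw [h]
    omega
  set Bs : Finset (Fin r → Fin N) :=
    univ.filter (fun x : Fin r → Fin N =>
      (EqOnFirst m x ∧ DistinctFrom k x) ∧ x c = x d) with hBs
  set Ps : Finset (Fin r → Fin N) :=
    univ.filter (fun x : Fin r → Fin N => EqOnFirst m x ∧ DistinctFrom k x) with hPs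
  set E : (Fin r → Fin N) → Finset (Fin N) :=
    fun x => (univ.filter (fun l : Fin r => k ≤ (l : ℕ) ∧ l ≠ c)).image x with hE
  set allowed : (Fin r → Fin N) → Finset (Fin N) :=
    fun x => (univ : Finset (Fin N)) \ E x with hAl
  -- Step A: lower bound on the allowed sum
  have stepA : ∀ x : Fin r → Fin N, S - r * M ≤ ∑ v ∈ allowed x, f v := by
    intro x
    have hsub : E x ⊆ univ := subset_univ _
    have h1 : ∑ v ∈ allowed x, f v = (∑ v, f v) - ∑ v ∈ E x, f v :=
      Finset.sum_sdiff_eq_sub hsub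
    have h2 : ∑ v ∈ E x, f v ≤ (E x).card • M :=
      Finset.sum_le_card_nsmul _ _ _ (fun v _ => hfM v)
    have h3 : (E x).card ≤ r := by
      calc (E x).card ≤ (univ.filter (fun l : Fin r => k ≤ (l : ℕ) ∧ l ≠ c)).card :=
            Finset.card_image_le
        _ ≤ (univ : Finset (Fin r)).card := Finset.card_filter_le _ _
        _ = r := by simp
    have h4 : ((E x).card : ℝ) * M ≤ (r : ℝ) * M :=
      mul_le_mul_of_nonneg_right (by exact_mod_cast h3) hM
    rw [h1, hS]
    have := h2
    rw [nsmul_eq_mul] at this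
    linarith
  -- the update map
  set e : (Σ _ : Fin r → Fin N, Fin N) → (Fin r → Fin N) :=
    fun p => Function.update p.1 c p.2 with he
  -- Step C : injectivity / image
  have himg : ∀ p ∈ Bs.sigma allowed, e p ∈ Ps := by
    rintro ⟨x, v⟩ hp
    rw [Finset.mem_sigma] at hp
    obtain ⟨hxB, hvA⟩ := hp
    rw [hBs, Finset.mem_filter] at hxB
    obtain ⟨-, ⟨⟨hEq, hDk⟩, hcd⟩⟩ := hxB
    have hvE : v ∉ E x := by
      rw [hAl] at hvA; simpa using (Finset.mem_sdiff.mp hvA).2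
    rw [hPs, Finset.mem_filter]
    refine ⟨mem_univ _, ?_, ?_⟩
    · intro i j hi hj
      have hic : i ≠ c := fun h => by rw [h] at hi; omega
      have hjc : j ≠ c := fun h => by rw [h] at hj; omega
      show Function.update x c v i = Function.update x c v j
      rw [Function.update_of_ne hic, Function.update_of_ne hjc]
      exact hEq i j hi hj
    · intro i j hik hjk hxy
      replace hxy : Function.update x c v i = Function.update x c v j := hxy
      by_cases hic : i = c
      · by_cases hjc : j = c
        · rw [hic, hjc]
        · exfalso
          rw [hic, Function.update_self, Function.update_of_ne hjc] at hxy
          exact hvE (Finset.mem_image.mpr ⟨j, Finset.mem_filter.mpr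
            ⟨mem_univ _, hjk, hjc⟩, hxy.symm⟩)
      · by_cases hjc : j = c
        · exfalso
          rw [hjc, Function.update_self, Function.update_of_ne hic] at hxy
          exact hvE (Finset.mem_image.mpr ⟨i, Finset.mem_filter.mpr
            ⟨mem_univ _, hik, hic⟩, hxy⟩)
        · rw [Function.update_of_ne hic, Function.update_of_ne hjc] at hxy
          exact hDk i j hik hjk hxy
  have hinj : ∀ p ∈ Bs.sigma allowed, ∀ q ∈ Bs.sigma allowed, e p = e q → p = q := by
    rintro ⟨x, v⟩ hp ⟨y, u⟩ hq heq
    rw [Finset.mem_sigma, hBs, Finset.mem_filter] at hp hq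
    obtain ⟨⟨-, -, hxcd⟩, -⟩ := hp
    obtain ⟨⟨-, -, hycd⟩, -⟩ := hq
    have hvu : v = u := by
      have := congrFun heq c
      simpa [he] using this
    have hxy : x = y := by
      funext i
      by_cases hic : i = c
      · subst hic
        have hd := congrFun heq d
        rw [he] at hd
        simp only at hd
        rw [Function.update_of_ne hdc, Function.update_of_ne hdc] at hd
        exact (show x i = x d from hxcd).trans (hd.trans (show y i = y d from hycd).symm)
      · have := congrFun heq i
        rw [he] at this
        simp only at this
        rwa [Function.update_of_ne hic, Function.update_of_ne hic] at this
    subst hvu; subst hxy; rfl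
  -- Step C : the image sum bound
  have stepC : (∑ p ∈ Bs.sigma allowed, wt f g h0 (e p)) ≤ ∑ y ∈ Ps, wt f g h0 y := by
    rw [← Finset.sum_image hinj]
    refine Finset.sum_le_sum_of_subset_of_nonneg ?_ (fun y _ _ => wt_nonneg hg hf h0 y)
    intro y hy
    obtain ⟨p, hp, rfl⟩ := Finset.mem_image.mp hy
    exact himg p hp
  calc (S - ↑r * M) * ∑ x ∈ Bs, wt f g h0 x
      = ∑ x ∈ Bs, (S - ↑r * M) * wt f g h0 x := by rw [Finset.mul_sum]
    _ ≤ ∑ x ∈ Bs, (∑ v ∈ allowed x, f v) * wt f g h0 x :=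
        Finset.sum_le_sum fun x _ =>
          mul_le_mul_of_nonneg_right (stepA x) (wt_nonneg hg hf h0 x)
    _ = ∑ x ∈ Bs, ∑ v ∈ allowed x, f v * wt f g h0 x := by
        refine Finset.sum_congr rfl fun x _ => ?_
        rw [Finset.sum_mul]
    _ = ∑ p ∈ Bs.sigma allowed, f p.2 * wt f g h0 p.1 := by
        exact (Finset.sum_sigma Bs allowed (fun p => f p.2 * wt f g h0 p.1)).symm
    _ = ∑ p ∈ Bs.sigma allowed, f (p.1 c) * wt f g h0 (e p) :=
        Finset.sum_congr rfl fun p _ => wt_update f g h0 p.1 c hc0 p.2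
    _ ≤ ∑ p ∈ Bs.sigma allowed, M * wt f g h0 (e p) :=
        Finset.sum_le_sum fun p _ =>
          mul_le_mul_of_nonneg_right (hfM _) (wt_nonneg hg hf h0 _)
    _ = M * ∑ p ∈ Bs.sigma allowed, wt f g h0 (e p) := by rw [Finset.mul_sum]
    _ ≤ M * ∑ y ∈ Ps, wt f g h0 y := mul_le_mul_of_nonneg_left stepC hM

lemma main (k m : ℕ) (hm : 1 < m) (hk : m < k) (C τ : ℝ) (hC : 0 < C) (hτ : 0 < τ)
    (N r : ℕ) (f g : Fin N → ℝ) (S : ℝ)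
    (hg : ∀ i, 0 ≤ g i) (hgf : ∀ i, g i ≤ f i) (hS : (∑ i, f i) = S)
    (hS0 : max 2 ((2 * C ^ 2) ^ ((1:ℝ) / (2 * τ))) ≤ S)
    (hfM : ∀ i, f i ≤ C * S ^ ((1 : ℝ) / 2 - τ))
    (hrM : (r : ℝ) ≤ C * S ^ ((1 : ℝ) / 2 - τ)) (hr : k ≤ r) (h0 : 0 < r) :
    |(∑ x : Fin r → Fin N,
        if EqOnFirst m x ∧ DistinctFrom (m - 1) x then wt f g h0 x else 0)
      - (∑ x : Fin r → Fin N,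
          if EqOnFirst m x ∧ DistinctFrom k x then wt f g h0 x else 0)|
      ≤ (2 * k * C ^ 2) * S ^ (-(2 * τ)) *
        (∑ x : Fin r → Fin N,
          if EqOnFirst m x ∧ DistinctFrom k x then wt f g h0 x else 0) := by
  classical
  have hf : ∀ i, 0 ≤ f i := fun i => (hg i).trans (hgf i)
  set M : ℝ := C * S ^ ((1 : ℝ) / 2 - τ) with hMdef
  have hS2 : (2:ℝ) ≤ S := (le_max_left _ _).trans hS0
  have hSpos : (0:ℝ) < S := by linarith
  have hM0 : 0 < M := by
    have := Real.rpow_pos_of_pos hSpos ((1:ℝ)/2 - τ)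
    exact mul_pos hC this
  have h2τ : (0:ℝ) < 2 * τ := by linarith
  have hCb : (0:ℝ) ≤ 2 * C ^ 2 := by positivity
  have hpow : 2 * C ^ 2 ≤ S ^ (2 * τ) := by
    have h1 : (2 * C ^ 2) ^ ((1:ℝ) / (2 * τ)) ≤ S := (le_max_right _ _).trans hS0
    calc 2 * C ^ 2 = ((2 * C ^ 2) ^ ((1:ℝ) / (2 * τ))) ^ (2 * τ) := by
          rw [← Real.rpow_mul hCb]
          rw [show (1:ℝ) / (2 * τ) * (2 * τ) = 1 by field_simp]
          rw [Real.rpow_one]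
      _ ≤ S ^ (2 * τ) := Real.rpow_le_rpow (Real.rpow_nonneg hCb _) h1 h2τ.le
  have hMM : M * M = C ^ 2 * (S * S ^ (-(2 * τ))) := by
    rw [hMdef, show C * S ^ ((1:ℝ)/2 - τ) * (C * S ^ ((1:ℝ)/2 - τ))
        = C ^ 2 * (S ^ ((1:ℝ)/2 - τ) * S ^ ((1:ℝ)/2 - τ)) by ring,
      ← Real.rpow_add hSpos,
      show ((1:ℝ)/2 - τ) + ((1:ℝ)/2 - τ) = 1 + -(2 * τ) by ring,
      Real.rpow_add hSpos, Real.rpow_one]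
  have hCS : C ^ 2 * S ^ (-(2 * τ)) ≤ 1 / 2 := by
    rw [Real.rpow_neg hSpos.le]
    have hp : (0:ℝ) < S ^ (2 * τ) := Real.rpow_pos_of_pos hSpos _
    have hCp : (0:ℝ) < 2 * C ^ 2 := by positivity
    have hinv : (S ^ (2 * τ))⁻¹ ≤ (2 * C ^ 2)⁻¹ := by
      exact inv_anti₀ hCp hpow
    calc C ^ 2 * (S ^ (2 * τ))⁻¹ ≤ C ^ 2 * (2 * C ^ 2)⁻¹ :=
          mul_le_mul_of_nonneg_left hinv (sq_nonneg C)
      _ = 1 / 2 := by field_simp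
  have hrMS : (r : ℝ) * M ≤ S / 2 := by
    have h5 : (r:ℝ) * M ≤ M * M := mul_le_mul_of_nonneg_right hrM hM0.le
    have hneg : (0:ℝ) < S ^ (-(2*τ)) := Real.rpow_pos_of_pos hSpos _
    nlinarith [hSpos.le]
  have hSrpos : (0:ℝ) < S - r * M := by linarith
  have hSrhalf : S / 2 ≤ S - r * M := by linarith
  -- convert the sums to filter form
  set P : (Fin r → Fin N) → Prop := fun x => EqOnFirst m x ∧ DistinctFrom k x with hP
  set Q : (Fin r → Fin N) → Prop :=
    fun x => EqOnFirst m x ∧ DistinctFrom (m - 1) x with hQ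
  have hsumZ : (∑ x : Fin r → Fin N, if P x then wt f g h0 x else 0)
      = ∑ x ∈ univ.filter P, wt f g h0 x := (Finset.sum_filter _ _).symm
  have hsumA : (∑ x : Fin r → Fin N, if Q x then wt f g h0 x else 0)
      = ∑ x ∈ univ.filter Q, wt f g h0 x := (Finset.sum_filter _ _).symm
  set Z : ℝ := ∑ x ∈ univ.filter P, wt f g h0 x with hZdef
  set A : ℝ := ∑ x ∈ univ.filter Q, wt f g h0 x with hAdef
  rw [hsumZ, hsumA]
  have hQP : ∀ x : Fin r → Fin N, Q x → P x := by
    rintro x ⟨h1, h2⟩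
    exact ⟨h1, fun i j hik hjk hx => h2 i j (by omega) (by omega) hx⟩
  have hZ0 : 0 ≤ Z := Finset.sum_nonneg fun x _ => wt_nonneg hg hf h0 x
  have hA0 : 0 ≤ A := Finset.sum_nonneg fun x _ => wt_nonneg hg hf h0 x
  have hAZ : A ≤ Z := by
    refine Finset.sum_le_sum_of_subset_of_nonneg ?_ fun x _ _ => wt_nonneg hg hf h0 x
    intro x hx
    rw [Finset.mem_filter] at hx ⊢
    exact ⟨hx.1, hQP x hx.2⟩
  rw [abs_of_nonpos (by linarith), neg_sub]
  -- the pairs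
  set pairs : Finset (Fin r × Fin r) := univ.filter
    (fun p : Fin r × Fin r =>
      (p.1 : ℕ) < k ∧ m - 1 ≤ (p.1 : ℕ) ∧ m - 1 ≤ (p.2 : ℕ) ∧ p.1 ≠ p.2) with hpairs
  have hcard : pairs.card ≤ k * r := by
    have hsub : pairs ⊆ (univ.filter fun a : Fin r => (a : ℕ) < k) ×ˢ univ := by
      intro p hp
      rw [hpairs, Finset.mem_filter] at hp
      rw [Finset.mem_product, Finset.mem_filter]
      exact ⟨⟨mem_univ _, hp.2.1⟩, mem_univ _⟩
    have h1 : (univ.filter fun a : Fin r => (a : ℕ) < k).card ≤ k := by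
      have h := Finset.card_le_card_of_injOn
          (s := univ.filter fun a : Fin r => (a : ℕ) < k)
          (t := Finset.range k) (f := Fin.val)
          (fun a ha => Finset.mem_range.mpr (Finset.mem_filter.mp ha).2)
          (fun a _ b _ hv => Fin.val_injective hv)
      simpa using h
    calc pairs.card ≤ ((univ.filter fun a : Fin r => (a : ℕ) < k) ×ˢ univ).card :=
          Finset.card_le_card hsub
      _ = (univ.filter fun a : Fin r => (a : ℕ) < k).card * r := by
          rw [Finset.card_product, Finset.card_univ, Fintype.card_fin]
      _ ≤ k * r := Nat.mul_le_mul_right _ h1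
  -- the union bound
  have hUnion : Z - A ≤ ∑ p ∈ pairs,
      ∑ x ∈ univ.filter (fun x : Fin r → Fin N => P x ∧ x p.1 = x p.2), wt f g h0 x := by
    have hrepr : ∀ p : Fin r × Fin r,
        (∑ x ∈ univ.filter (fun x : Fin r → Fin N => P x ∧ x p.1 = x p.2), wt f g h0 x)
        = ∑ x : Fin r → Fin N, if P x ∧ x p.1 = x p.2 then wt f g h0 x else 0 :=
      fun p => Finset.sum_filter _ _
    calc Z - A = ∑ x : Fin r → Fin N,
          ((if P x then wt f g h0 x else 0) - (if Q x then wt f g h0 x else 0)) := by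
          rw [Finset.sum_sub_distrib, ← hsumZ, ← hsumA]
      _ ≤ ∑ x : Fin r → Fin N, ∑ p ∈ pairs,
            (if P x ∧ x p.1 = x p.2 then wt f g h0 x else 0) := by
          refine Finset.sum_le_sum fun x _ => ?_
          have hw := wt_nonneg hg hf h0 x
          have hR0 : (0:ℝ) ≤ ∑ p ∈ pairs, (if P x ∧ x p.1 = x p.2 then wt f g h0 x else 0) :=
            Finset.sum_nonneg fun p _ => by positivity
          by_cases hPx : P x
          · by_cases hQx : Q x
            · rw [if_pos hPx, if_pos hQx, sub_self]; exact hR0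
            · rw [if_pos hPx, if_neg hQx, sub_zero]
              have hD : ¬ DistinctFrom (m - 1) x := fun h => hQx ⟨hPx.1, h⟩
              unfold DistinctFrom at hD
              push_neg at hD
              obtain ⟨i, j, hi, hj, hxij, hij⟩ := hD
              have hone : (i : ℕ) < k ∨ (j : ℕ) < k := by
                by_contra h
                push_neg at h
                exact hij (hPx.2 i j h.1 h.2 hxij)
              rcases hone with hik | hjk
              · have hp : (i, j) ∈ pairs := by
                  rw [hpairs, Finset.mem_filter]
                  exact ⟨mem_univ _, hik, hi, hj, hij⟩
                have := Finset.single_le_sum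
                  (f := fun p : Fin r × Fin r =>
                    if P x ∧ x p.1 = x p.2 then wt f g h0 x else 0)
                  (fun p _ => by positivity) hp
                simpa [if_pos (And.intro hPx hxij)] using this
              · have hp : (j, i) ∈ pairs := by
                  rw [hpairs, Finset.mem_filter]
                  exact ⟨mem_univ _, hjk, hj, hi, hij.symm⟩
                have := Finset.single_le_sum
                  (f := fun p : Fin r × Fin r =>
                    if P x ∧ x p.1 = x p.2 then wt f g h0 x else 0)
                  (fun p _ => by positivity) hp
                simpa [if_pos (And.intro hPx hxij.symm)] using this
          · have h1 : (if P x then wt f g h0 x else 0) = 0 := if_neg hPx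
            have h2 : (0:ℝ) ≤ (if Q x then wt f g h0 x else 0) := by positivity
            rw [h1]
            linarith
      _ = ∑ p ∈ pairs, ∑ x : Fin r → Fin N,
            (if P x ∧ x p.1 = x p.2 then wt f g h0 x else 0) := Finset.sum_comm
      _ = ∑ p ∈ pairs,
            ∑ x ∈ univ.filter (fun x : Fin r → Fin N => P x ∧ x p.1 = x p.2),
              wt f g h0 x := by
          exact Finset.sum_congr rfl fun p _ => (hrepr p).symm
  -- bound each collision sum
  have hEach : ∀ p ∈ pairs,
      (∑ x ∈ univ.filter (fun x : Fin r → Fin N => P x ∧ x p.1 = x p.2), wt f g h0 x)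
        ≤ M * Z / (S - r * M) := by
    intro p hp
    rw [hpairs, Finset.mem_filter] at hp
    obtain ⟨-, hp1k, hp1m, hp2m, hp12⟩ := hp
    by_cases hc : m ≤ (p.1 : ℕ)
    · have hkey := key k m h0 (by omega) f g hg hf M S hM0.le hfM hS p.1 p.2 hc
        (fun h => hp12 h.symm)
      rw [le_div_iff₀ hSrpos]
      calc (∑ x ∈ univ.filter (fun x : Fin r → Fin N => P x ∧ x p.1 = x p.2),
            wt f g h0 x) * (S - r * M)
          = (S - r * M) * ∑ x ∈ univ.filter
              (fun x : Fin r → Fin N => P x ∧ x p.1 = x p.2), wt f g h0 x := by ring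
        _ ≤ M * Z := hkey
    · have hc2 : m ≤ (p.2 : ℕ) := by
        have hne : (p.1 : ℕ) ≠ (p.2 : ℕ) := fun h => hp12 (Fin.eq_of_val_eq h)
        omega
      have hkey := key k m h0 (by omega) f g hg hf M S hM0.le hfM hS p.2 p.1 hc2 hp12
      have hflip : univ.filter (fun x : Fin r → Fin N => P x ∧ x p.1 = x p.2)
          = univ.filter (fun x : Fin r → Fin N => P x ∧ x p.2 = x p.1) := by
        refine Finset.filter_congr fun x _ => ?_
        rw [and_congr_right_iff]
        intro
        exact eq_comm
      rw [hflip, le_div_iff₀ hSrpos]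
      calc (∑ x ∈ univ.filter (fun x : Fin r → Fin N => P x ∧ x p.2 = x p.1),
            wt f g h0 x) * (S - r * M)
          = (S - r * M) * ∑ x ∈ univ.filter
              (fun x : Fin r → Fin N => P x ∧ x p.2 = x p.1), wt f g h0 x := by ring
        _ ≤ M * Z := hkey
  -- put everything together
  have hMZ0 : 0 ≤ M * Z / (S - r * M) := by positivity
  calc Z - A ≤ ∑ p ∈ pairs,
        ∑ x ∈ univ.filter (fun x : Fin r → Fin N => P x ∧ x p.1 = x p.2),
          wt f g h0 x := hUnion
    _ ≤ ∑ _p ∈ pairs, M * Z / (S - r * M) := Finset.sum_le_sum hEach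
    _ = (pairs.card : ℝ) * (M * Z / (S - r * M)) := by
        rw [Finset.sum_const, nsmul_eq_mul]
    _ ≤ ((k * r : ℕ) : ℝ) * (M * Z / (S - r * M)) := by
        exact mul_le_mul_of_nonneg_right (by exact_mod_cast hcard) hMZ0
    _ ≤ ((k * r : ℕ) : ℝ) * (M * Z / (S / 2)) := by
        have h2 : (0:ℝ) < S / 2 := by linarith
        have := div_le_div_of_nonneg_left (mul_nonneg hM0.le hZ0) h2 hSrhalf
        exact mul_le_mul_of_nonneg_left this (by positivity)
    _ = (k : ℝ) * ((r : ℝ) * M) * Z * 2 / S := by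
        push_cast
        field_simp
    _ ≤ (k : ℝ) * (C ^ 2 * (S * S ^ (-(2 * τ)))) * Z * 2 / S := by
        have hrm2 : (r : ℝ) * M ≤ C ^ 2 * (S * S ^ (-(2 * τ))) := by
          have h5 : (r:ℝ) * M ≤ M * M := mul_le_mul_of_nonneg_right hrM hM0.le
          linarith [hMM]
        have hk0 : (0:ℝ) ≤ (k : ℝ) := by positivity
        gcongr
    _ = (2 * k * C ^ 2) * S ^ (-(2 * τ)) * Z := by
        field_simp

end Stmt13Aux

/-- Corollary (to Lemma 2): for `0 ≤ g ≤ f` with `∑ f = S`,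
`max f = O(S^{1/2-τ})`, `r = O(S^{1/2-τ})`, and fixed `k > m > 1` with
`r ≥ k`, the sum over tuples with `x₁ = ⋯ = x_m` and `x_m, x_{m+1}, …, x_r`
pairwise distinct of `g(x₁)·∏_{i=2}^r f(x_i)` equals
`ζ` (the same sum with `x_{m+1},…,x_k` freed) up to a relative error
`O(S^{-2τ})`. -/


theorem stmt_13 (k m : ℕ) (hm : 1 < m) (hk : m < k) (C τ : ℝ)
    (hC : 0 < C) (hτ : 0 < τ) :
    ∃ C' > 0, ∃ S₀ : ℝ, ∀ (N r : ℕ) (f g : Fin N → ℝ) (S : ℝ),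
      (∀ i, 0 ≤ g i) → (∀ i, g i ≤ f i) → (∑ i, f i) = S → S₀ ≤ S →
      (∀ i, f i ≤ C * S ^ ((1 : ℝ) / 2 - τ)) →
      (r : ℝ) ≤ C * S ^ ((1 : ℝ) / 2 - τ) → ∀ hr : k ≤ r,
      |(∑ x : Fin r → Fin N,
          if EqOnFirst m x ∧ DistinctFrom (m - 1) x then
            g (x ⟨0, by omega⟩) *
              ∏ i ∈ Finset.univ.erase (⟨0, by omega⟩ : Fin r), f (x i)
          else 0)
        - (∑ x : Fin r → Fin N,
            if EqOnFirst m x ∧ DistinctFrom k x then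
              g (x ⟨0, by omega⟩) *
                ∏ i ∈ Finset.univ.erase (⟨0, by omega⟩ : Fin r), f (x i)
            else 0)|
        ≤ C' * S ^ (-(2 * τ)) *
          (∑ x : Fin r → Fin N,
            if EqOnFirst m x ∧ DistinctFrom k x then
              g (x ⟨0, by omega⟩) *
                ∏ i ∈ Finset.univ.erase (⟨0, by omega⟩ : Fin r), f (x i)
            else 0) := by
  have hk0 : (0:ℝ) < (k:ℝ) := by exact_mod_cast (by omega : 0 < k)
  refine ⟨2 * k * C ^ 2, mul_pos (mul_pos two_pos hk0) (pow_pos hC 2),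
    max 2 ((2 * C ^ 2) ^ ((1:ℝ) / (2 * τ))), ?_⟩
  intro N r f g S hg hgf hS hS0 hfM hrM hr
  have h0 : 0 < r := by omega
  exact Stmt13Aux.main k m hm hk C τ hC hτ N r f g S hg hgf hS hS0 hfM hrM hr h0
end

section
/- Suppose (d^N) is a sequence of bidegree sequences with maximum degree O(S^{1/2-τ}) for some τ > 0, x is an arbitrary node and y is a node whose degree is bounded uniformly in N. Then, among graphs realizing the sequence, the ratio of the number of realizations in which x and y have no common out-neighbor to the number of realizations in which x and y have exactly one common out-neighbor is at least c·S^{2τ} for some constant c > 0 and all large S. Equivalently, the degree preserving switch map from graphs with one common out-neighbor to graphs with none is at most O(S^{1-2τ})-to-1 while admitting Ω(S) distinct switches per input graph. -/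
/-- In-degree of node `v` (edge `u → v` when `A u v = true`); loops allowed. -/
def inDeg {N : ℕ} (A : Fin N → Fin N → Bool) (v : Fin N) : ℕ :=
  (Finset.univ.filter (fun u => A u v = true)).card

/-- Out-degree of node `v`. -/
def outDeg {N : ℕ} (A : Fin N → Fin N → Bool) (v : Fin N) : ℕ :=
  (Finset.univ.filter (fun u => A v u = true)).card

/-- `A` realizes the bidegree sequence `(a,b)`. -/
def Realizes {N : ℕ} (A : Fin N → Fin N → Bool) (a b : Fin N → ℕ) : Prop :=
  ∀ v, inDeg A v = a v ∧ outDeg A v = b v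

open Finset

namespace Stmt14

variable {n : ℕ}

def Good (x y : Fin n) (A : Fin n → Fin n → Bool) (t u v : Fin n) : Prop :=
  A x t = true ∧ A y t = true ∧ (∀ s, A x s = true → A y s = true → s = t) ∧
  A u v = true ∧ u ≠ x ∧ u ≠ y ∧ v ≠ t ∧ A u t = false ∧ A x v = false ∧ A y v = false

def Switch (x : Fin n) (A : Fin n → Fin n → Bool) (t u v : Fin n) :
    Fin n → Fin n → Bool := fun p q =>
  if p = x ∧ q = t then false
  else if p = u ∧ q = v then false
  else if p = u ∧ q = t then true
  else if p = x ∧ q = v then true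
  else A p q

def Unswitch (x : Fin n) (B : Fin n → Fin n → Bool) (t u v : Fin n) :
    Fin n → Fin n → Bool := fun p q =>
  if p = x ∧ q = t then true
  else if p = u ∧ q = v then true
  else if p = u ∧ q = t then false
  else if p = x ∧ q = v then false
  else B p q

variable {x y t u v : Fin n} {A : Fin n → Fin n → Bool}

lemma switch_xt : Switch x A t u v x t = false := by simp [Switch]

lemma switch_uv (hux : u ≠ x) : Switch x A t u v u v = false := by
  simp [Switch, hux]

lemma switch_ut (hux : u ≠ x) (hvt : v ≠ t) : Switch x A t u v u t = true := by
  simp [Switch, hux, Ne.symm hvt]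

lemma switch_xv (hux : u ≠ x) (hvt : v ≠ t) : Switch x A t u v x v = true := by
  simp [Switch, hvt, Ne.symm hux]

lemma switch_apply_ne (p q : Fin n) (h1 : ¬(p = x ∧ q = t)) (h2 : ¬(p = u ∧ q = v))
    (h3 : ¬(p = u ∧ q = t)) (h4 : ¬(p = x ∧ q = v)) : Switch x A t u v p q = A p q := by
  simp only [Switch, if_neg h1, if_neg h2, if_neg h3, if_neg h4]

lemma switch_row (p q : Fin n) (hpx : p ≠ x) (hpu : p ≠ u) : Switch x A t u v p q = A p q :=
  switch_apply_ne p q (fun h => hpx h.1) (fun h => hpu h.1) (fun h => hpu h.1) (fun h => hpx h.1)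

lemma switch_col (p q : Fin n) (hqt : q ≠ t) (hqv : q ≠ v) : Switch x A t u v p q = A p q :=
  switch_apply_ne p q (fun h => hqt h.2) (fun h => hqv h.2) (fun h => hqt h.2) (fun h => hqv h.2)

lemma sum_swap_two (f g : Fin n → ℕ) (p q : Fin n) (hpq : p ≠ q)
    (h : ∀ r, r ≠ p → r ≠ q → f r = g r) (h2 : f p + f q = g p + g q) :
    ∑ r, f r = ∑ r, g r := by
  classical
  have hsub : ({p, q} : Finset (Fin n)) ⊆ univ := subset_univ _
  rw [← Finset.sum_sdiff hsub, ← Finset.sum_sdiff hsub,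
    Finset.sum_pair hpq, Finset.sum_pair hpq, h2]
  congr 1
  apply Finset.sum_congr rfl
  intro r hr
  simp only [mem_sdiff, mem_insert, mem_singleton] at hr
  exact h r (fun h' => hr.2 (Or.inl h')) (fun h' => hr.2 (Or.inr h'))

lemma inDeg_switch (hg : Good x y A t u v) (w : Fin n) :
    inDeg (Switch x A t u v) w = inDeg A w := by
  obtain ⟨hxt, hyt, huniq, huv, hux, huy, hvt, hut, hxv, hyv⟩ := hg
  unfold inDeg
  rw [Finset.card_filter, Finset.card_filter]
  by_cases hwt : w = t
  · subst hwt
    refine sum_swap_two _ _ x u (Ne.symm hux) (fun r hrx hru => ?_) ?_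
    · rw [switch_row r _ hrx hru]
    · rw [switch_xt, switch_ut hux hvt, hxt, hut]
      simp
  · by_cases hwv : w = v
    · subst hwv
      refine sum_swap_two _ _ x u (Ne.symm hux) (fun r hrx hru => ?_) ?_
      · rw [switch_row r _ hrx hru]
      · rw [switch_xv hux hvt, switch_uv hux, hxv, huv]
        simp
    · refine Finset.sum_congr rfl fun r _ => ?_
      rw [switch_col r w hwt hwv]

lemma outDeg_switch (hg : Good x y A t u v) (w : Fin n) :
    outDeg (Switch x A t u v) w = outDeg A w := by
  obtain ⟨hxt, hyt, huniq, huv, hux, huy, hvt, hut, hxv, hyv⟩ := hg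
  unfold outDeg
  rw [Finset.card_filter, Finset.card_filter]
  by_cases hwx : w = x
  · subst hwx
    refine sum_swap_two _ _ t v (Ne.symm hvt) (fun r hrt hrv => ?_) ?_
    · rw [switch_col _ r hrt hrv]
    · rw [switch_xt, switch_xv hux hvt, hxt, hxv]
      simp
  · by_cases hwu : w = u
    · subst hwu
      refine sum_swap_two _ _ t v (Ne.symm hvt) (fun r hrt hrv => ?_) ?_
      · rw [switch_col _ r hrt hrv]
      · rw [switch_ut hux hvt, switch_uv hux, hut, huv]
        simp
    · refine Finset.sum_congr rfl fun r _ => ?_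
      rw [switch_row w r hwx hwu]

lemma realizes_switch {a b : Fin n → ℕ} (hg : Good x y A t u v) (hA : Realizes A a b) :
    Realizes (Switch x A t u v) a b := fun w =>
  ⟨(inDeg_switch hg w).trans (hA w).1, (outDeg_switch hg w).trans (hA w).2⟩

lemma switch_no_common (hxy : x ≠ y) (hg : Good x y A t u v) :
    ∀ s, ¬(Switch x A t u v x s = true ∧ Switch x A t u v y s = true) := by
  obtain ⟨hxt, hyt, huniq, huv, hux, huy, hvt, hut, hxv, hyv⟩ := hg
  intro s hs
  have hy' : Switch x A t u v y s = A y s := switch_row y s (Ne.symm hxy) (Ne.symm huy)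
  by_cases hst : s = t
  · subst hst
    rw [switch_xt] at hs
    exact Bool.false_ne_true hs.1
  · by_cases hsv : s = v
    · subst hsv
      rw [hy', hyv] at hs
      exact Bool.false_ne_true hs.2
    · rw [switch_col x s hst hsv] at hs
      rw [hy'] at hs
      exact hst (huniq s hs.1 hs.2)

lemma unswitch_switch (hg : Good x y A t u v) :
    Unswitch x (Switch x A t u v) t u v = A := by
  obtain ⟨hxt, hyt, huniq, huv, hux, huy, hvt, hut, hxv, hyv⟩ := hg
  funext p q
  simp only [Unswitch, Switch]
  split_ifs with h1 h2 h3 h4 <;>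
    first
    | (obtain ⟨rfl, rfl⟩ := h1; exact hxt.symm)
    | (obtain ⟨rfl, rfl⟩ := h2; exact huv.symm)
    | (obtain ⟨rfl, rfl⟩ := h3; exact hut.symm)
    | (obtain ⟨rfl, rfl⟩ := h4; exact hxv.symm)
    | rfl

lemma switch_yt (hxy : x ≠ y) (hg : Good x y A t u v) : Switch x A t u v y t = true := by
  obtain ⟨hxt, hyt, huniq, huv, hux, huy, hvt, hut, hxv, hyv⟩ := hg
  rw [switch_row y t (Ne.symm hxy) (Ne.symm huy)]; exact hyt

-- counting helpers
lemma fiber_fst_le_outDeg (A : Fin n → Fin n → Bool) (s : Finset (Fin n × Fin n))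
    (hs : ∀ z ∈ s, A z.1 z.2 = true) (w : Fin n) :
    (s.filter (fun z => z.1 = w)).card ≤ outDeg A w := by
  unfold outDeg
  apply Finset.card_le_card_of_injOn (fun z => z.2)
  · intro z hz
    rw [Finset.mem_coe, mem_filter] at hz
    simp only [Finset.mem_coe, mem_filter, mem_univ, true_and]
    rw [← hz.2]
    exact hs z hz.1
  · intro z hz w' hw' hzw
    simp only [Finset.coe_filter, Set.mem_setOf_eq] at hz hw'
    exact Prod.ext (hz.2.trans hw'.2.symm) hzw

lemma fiber_snd_le_inDeg (A : Fin n → Fin n → Bool) (s : Finset (Fin n × Fin n))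
    (hs : ∀ z ∈ s, A z.1 z.2 = true) (w : Fin n) :
    (s.filter (fun z => z.2 = w)).card ≤ inDeg A w := by
  unfold inDeg
  apply Finset.card_le_card_of_injOn (fun z => z.1)
  · intro z hz
    rw [Finset.mem_coe, mem_filter] at hz
    simp only [Finset.mem_coe, mem_filter, mem_univ, true_and]
    rw [← hz.2]
    exact hs z hz.1
  · intro z hz w' hw' hzw
    simp only [Finset.coe_filter, Set.mem_setOf_eq] at hz hw'
    exact Prod.ext hzw (hz.2.trans hw'.2.symm)

lemma card_edges (A : Fin n → Fin n → Bool) :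
    (univ.filter (fun z : Fin n × Fin n => A z.1 z.2 = true)).card = ∑ w, inDeg A w := by
  rw [Finset.card_filter, ← Finset.univ_product_univ, Finset.sum_product, Finset.sum_comm]
  refine Finset.sum_congr rfl fun w _ => ?_
  rw [inDeg, Finset.card_filter]

lemma card_le_of_fiber_bound (s : Finset (Fin n × Fin n)) (T : Finset (Fin n))
    (f : Fin n × Fin n → Fin n) (hmem : ∀ z ∈ s, f z ∈ T) (M : ℝ)
    (hfib : ∀ w ∈ T, (((s.filter (fun z => f z = w)).card : ℕ) : ℝ) ≤ M) :
    (s.card : ℝ) ≤ T.card * M := by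
  rw [Finset.card_eq_sum_card_fiberwise hmem]
  push_cast
  calc (∑ w ∈ T, ((s.filter (fun z => f z = w)).card : ℝ))
      ≤ ∑ _w ∈ T, M := Finset.sum_le_sum hfib
    _ = T.card * M := by rw [Finset.sum_const, nsmul_eq_mul]



lemma aux (K e : ℝ) (he : e < 1) :
    ∀ᶠ k : ℕ in Filter.atTop, K * (k:ℝ) ^ e ≤ (k:ℝ) / 8 := by
  have h : Filter.Tendsto (fun k : ℕ => (k:ℝ) ^ (1 - e)) Filter.atTop Filter.atTop :=
    (tendsto_rpow_atTop (by linarith)).comp tendsto_natCast_atTop_atTop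
  filter_upwards [h.eventually_ge_atTop (8 * K), Filter.eventually_ge_atTop 1] with k hk hk1
  have hk0 : (0:ℝ) < k := by exact_mod_cast Nat.lt_of_lt_of_le Nat.zero_lt_one hk1
  have hke : (0:ℝ) < (k:ℝ) ^ e := Real.rpow_pos_of_pos hk0 e
  have hK : K ≤ (k:ℝ) ^ (1 - e) / 8 := by linarith
  calc K * (k:ℝ) ^ e ≤ ((k:ℝ) ^ (1 - e) / 8) * (k:ℝ) ^ e :=
        mul_le_mul_of_nonneg_right hK hke.le
    _ = (k:ℝ) / 8 := by
        rw [div_mul_eq_mul_div, ← Real.rpow_add hk0, show (1:ℝ) - e + e = 1 by ring,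
          Real.rpow_one]

set_option maxHeartbeats 1600000 in
lemma main_step {n : ℕ} (a b : Fin n → ℕ) (x y : Fin n) (hxy : x ≠ y)
    (S : ℕ) (hS : S = ∑ i, a i) (C B' τ : ℝ) (hC : 0 ≤ C)
    (hmax : ∀ i, (a i : ℝ) ≤ C * (S:ℝ) ^ ((1:ℝ)/2 - τ) ∧ (b i : ℝ) ≤ C * (S:ℝ) ^ ((1:ℝ)/2 - τ))
    (hyB : (b y : ℝ) ≤ B')
    (hbad1 : (2*C + B'*C) * (S:ℝ) ^ ((1:ℝ)/2 - τ) ≤ (S:ℝ)/8)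
    (hbad2 : 2 * ((C * (S:ℝ) ^ ((1:ℝ)/2 - τ)) * (C * (S:ℝ) ^ ((1:ℝ)/2 - τ))) ≤ (S:ℝ)/8)
    (hbad3 : B' ≤ (S:ℝ)/8) :
    (S:ℝ)/2 * (Nat.card {A : Fin n → Fin n → Bool //
        Realizes A a b ∧ ∃! t, A x t = true ∧ A y t = true} : ℝ)
      ≤ (B' * ((C * (S:ℝ) ^ ((1:ℝ)/2 - τ)) * (C * (S:ℝ) ^ ((1:ℝ)/2 - τ)))) *
        (Nat.card {A : Fin n → Fin n → Bool //
        Realizes A a b ∧ ∀ t, ¬(A x t = true ∧ A y t = true)} : ℝ) := by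
  classical
  set DD : ℝ := C * (S:ℝ) ^ ((1:ℝ)/2 - τ) with hDDdef
  have hD0 : 0 ≤ DD := mul_nonneg hC (Real.rpow_nonneg (Nat.cast_nonneg S) _)
  have hB'0 : 0 ≤ B' := le_trans (Nat.cast_nonneg _) hyB
  set G1 := Finset.univ.filter (fun A : Fin n → Fin n → Bool =>
      Realizes A a b ∧ ∃! t, A x t = true ∧ A y t = true) with hG1def
  set G0 := Finset.univ.filter (fun A : Fin n → Fin n → Bool =>
      Realizes A a b ∧ ∀ t, ¬(A x t = true ∧ A y t = true)) with hG0def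
  set Q := Finset.univ.filter
      (fun z : (Fin n → Fin n → Bool) × (Fin n × Fin n × Fin n) =>
        Realizes z.1 a b ∧ Good x y z.1 z.2.1 z.2.2.1 z.2.2.2) with hQdef
  have hcard1 : Nat.card {A : Fin n → Fin n → Bool //
      Realizes A a b ∧ ∃! t, A x t = true ∧ A y t = true} = G1.card := by
    rw [Nat.card_eq_fintype_card, Fintype.card_subtype]
  have hcard0 : Nat.card {A : Fin n → Fin n → Bool //
      Realizes A a b ∧ ∀ t, ¬(A x t = true ∧ A y t = true)} = G0.card := by
    rw [Nat.card_eq_fintype_card, Fintype.card_subtype]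
  -- Lower bound: many switches from each graph with a unique common out-neighbor
  have hQlow : (G1.card : ℝ) * ((S:ℝ)/2) ≤ (Q.card : ℝ) := by
    have hmem : ∀ z ∈ Q, z.1 ∈ G1 := by
      intro z hz
      rw [hQdef, Finset.mem_filter] at hz
      obtain ⟨-, hre, hg⟩ := hz
      rw [hG1def, Finset.mem_filter]
      exact ⟨Finset.mem_univ _, hre, z.2.1, ⟨hg.1, hg.2.1⟩,
        fun s hs => hg.2.2.1 s hs.1 hs.2⟩
    rw [Finset.card_eq_sum_card_fiberwise hmem]
    push_cast
    rw [show (G1.card : ℝ) * ((S:ℝ)/2) = ∑ _A ∈ G1, (S:ℝ)/2 by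
      rw [Finset.sum_const, nsmul_eq_mul]]
    apply Finset.sum_le_sum
    intro A hA
    rw [hG1def, Finset.mem_filter] at hA
    obtain ⟨-, hre, t₀, ht₀, hun⟩ := hA
    set E := Finset.univ.filter (fun z : Fin n × Fin n => A z.1 z.2 = true) with hEdef
    have hE : ∀ z ∈ E, A z.1 z.2 = true := fun z hz => (Finset.mem_filter.mp hz).2
    set D := E.filter (fun z => z.1 ≠ x ∧ z.1 ≠ y ∧ z.2 ≠ t₀ ∧
        A z.1 t₀ = false ∧ A x z.2 = false ∧ A y z.2 = false) with hDdef
    have hDle : D.card ≤ (Q.filter fun z => z.1 = A).card := by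
      apply Finset.card_le_card_of_injOn (fun z => (A, (t₀, z.1, z.2)))
      · intro z hz
        rw [Finset.mem_coe, hDdef, Finset.mem_filter] at hz
        obtain ⟨hzE, h1, h2, h3, h4, h5, h6⟩ := hz
        have hzA := hE z hzE
        rw [Finset.mem_coe, Finset.mem_filter, hQdef, Finset.mem_filter]
        exact ⟨⟨Finset.mem_univ _, hre, ht₀.1, ht₀.2,
          (fun s hx' hy' => hun s ⟨hx', hy'⟩), hzA, h1, h2, h3, h4, h5, h6⟩, rfl⟩
      · intro z _ w _ h
        simp only [Prod.mk.injEq] at h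
        exact Prod.ext h.2.2.1 h.2.2.2
    set B1 := E.filter (fun z => z.1 = x) with hB1
    set B2 := E.filter (fun z => z.1 = y) with hB2
    set B3 := E.filter (fun z => A z.1 t₀ = true) with hB3
    set B4 := E.filter (fun z => A x z.2 = true) with hB4
    set B5 := E.filter (fun z => A y z.2 = true) with hB5
    set B6 := E.filter (fun z => z.2 = t₀) with hB6
    have hcover : E ⊆ D ∪ B1 ∪ B2 ∪ B3 ∪ B4 ∪ B5 ∪ B6 := by
      intro z hz
      simp only [hDdef, hB1, hB2, hB3, hB4, hB5, hB6, Finset.mem_union,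
        Finset.mem_filter]
      by_cases c1 : z.1 = x
      · tauto
      by_cases c2 : z.1 = y
      · tauto
      by_cases c6 : z.2 = t₀
      · tauto
      by_cases c3 : A z.1 t₀ = true
      · tauto
      by_cases c4 : A x z.2 = true
      · tauto
      by_cases c5 : A y z.2 = true
      · tauto
      have d3 : A z.1 t₀ = false := Bool.eq_false_iff.mpr c3
      have d4 : A x z.2 = false := Bool.eq_false_iff.mpr c4
      have d5 : A y z.2 = false := Bool.eq_false_iff.mpr c5
      tauto
    have hEcard : E.card ≤ D.card + B1.card + B2.card + B3.card + B4.card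
        + B5.card + B6.card := by
      refine le_trans (Finset.card_le_card hcover) ?_
      refine le_trans (Finset.card_union_le _ _) ?_
      refine Nat.add_le_add_right ?_ _
      refine le_trans (Finset.card_union_le _ _) ?_
      refine Nat.add_le_add_right ?_ _
      refine le_trans (Finset.card_union_le _ _) ?_
      refine Nat.add_le_add_right ?_ _
      refine le_trans (Finset.card_union_le _ _) ?_
      refine Nat.add_le_add_right ?_ _
      refine le_trans (Finset.card_union_le _ _) ?_
      refine Nat.add_le_add_right ?_ _
      exact Finset.card_union_le _ _
    have hES : (E.card : ℝ) = (S : ℝ) := by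
      have h1 : E.card = ∑ w, inDeg A w := by rw [hEdef]; exact card_edges A
      have h2 : ∑ w, inDeg A w = ∑ w, a w :=
        Finset.sum_congr rfl fun w _ => (hre w).1
      rw [h1, h2, ← hS]
    have hb1 : (B1.card : ℝ) ≤ DD := by
      calc (B1.card : ℝ) ≤ (outDeg A x : ℝ) := by
            exact_mod_cast fiber_fst_le_outDeg A E hE x
        _ = (b x : ℝ) := by rw [(hre x).2]
        _ ≤ DD := (hmax x).2
    have hb2 : (B2.card : ℝ) ≤ B' := by
      calc (B2.card : ℝ) ≤ (outDeg A y : ℝ) := by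
            exact_mod_cast fiber_fst_le_outDeg A E hE y
        _ = (b y : ℝ) := by rw [(hre y).2]
        _ ≤ B' := hyB
    have hb6 : (B6.card : ℝ) ≤ DD := by
      calc (B6.card : ℝ) ≤ (inDeg A t₀ : ℝ) := by
            exact_mod_cast fiber_snd_le_inDeg A E hE t₀
        _ = (a t₀ : ℝ) := by rw [(hre t₀).1]
        _ ≤ DD := (hmax t₀).1
    have hb3 : (B3.card : ℝ) ≤ DD * DD := by
      have hsub : ∀ z ∈ B3, A z.1 z.2 = true := by
        intro z hz; rw [hB3, Finset.mem_filter] at hz; exact hE z hz.1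
      have hT : ∀ z ∈ B3, z.1 ∈ Finset.univ.filter (fun p => A p t₀ = true) := by
        intro z hz; rw [hB3, Finset.mem_filter] at hz
        exact Finset.mem_filter.mpr ⟨Finset.mem_univ _, hz.2⟩
      have h := card_le_of_fiber_bound B3 _ Prod.fst hT DD (fun w _ => by
        calc (((B3.filter (fun z => z.1 = w)).card : ℕ) : ℝ) ≤ (outDeg A w : ℝ) := by
              exact_mod_cast fiber_fst_le_outDeg A B3 hsub w
          _ = (b w : ℝ) := by rw [(hre w).2]
          _ ≤ DD := (hmax w).2)
      have hTc : ((Finset.univ.filter (fun p => A p t₀ = true)).card : ℝ) = (a t₀ : ℝ) := by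
        rw [show (Finset.univ.filter (fun p => A p t₀ = true)).card = inDeg A t₀ from rfl,
          (hre t₀).1]
      calc (B3.card : ℝ) ≤ _ := h
        _ = (a t₀ : ℝ) * DD := by rw [hTc]
        _ ≤ DD * DD := mul_le_mul_of_nonneg_right (hmax t₀).1 hD0
    have hb4 : (B4.card : ℝ) ≤ DD * DD := by
      have hsub : ∀ z ∈ B4, A z.1 z.2 = true := by
        intro z hz; rw [hB4, Finset.mem_filter] at hz; exact hE z hz.1
      have hT : ∀ z ∈ B4, z.2 ∈ Finset.univ.filter (fun q => A x q = true) := by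
        intro z hz; rw [hB4, Finset.mem_filter] at hz
        exact Finset.mem_filter.mpr ⟨Finset.mem_univ _, hz.2⟩
      have h := card_le_of_fiber_bound B4 _ Prod.snd hT DD (fun w _ => by
        calc (((B4.filter (fun z => z.2 = w)).card : ℕ) : ℝ) ≤ (inDeg A w : ℝ) := by
              exact_mod_cast fiber_snd_le_inDeg A B4 hsub w
          _ = (a w : ℝ) := by rw [(hre w).1]
          _ ≤ DD := (hmax w).1)
      have hTc : ((Finset.univ.filter (fun q => A x q = true)).card : ℝ) = (b x : ℝ) := by
        rw [show (Finset.univ.filter (fun q => A x q = true)).card = outDeg A x from rfl,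
          (hre x).2]
      calc (B4.card : ℝ) ≤ _ := h
        _ = (b x : ℝ) * DD := by rw [hTc]
        _ ≤ DD * DD := mul_le_mul_of_nonneg_right (hmax x).2 hD0
    have hb5 : (B5.card : ℝ) ≤ B' * DD := by
      have hsub : ∀ z ∈ B5, A z.1 z.2 = true := by
        intro z hz; rw [hB5, Finset.mem_filter] at hz; exact hE z hz.1
      have hT : ∀ z ∈ B5, z.2 ∈ Finset.univ.filter (fun q => A y q = true) := by
        intro z hz; rw [hB5, Finset.mem_filter] at hz
        exact Finset.mem_filter.mpr ⟨Finset.mem_univ _, hz.2⟩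
      have h := card_le_of_fiber_bound B5 _ Prod.snd hT DD (fun w _ => by
        calc (((B5.filter (fun z => z.2 = w)).card : ℕ) : ℝ) ≤ (inDeg A w : ℝ) := by
              exact_mod_cast fiber_snd_le_inDeg A B5 hsub w
          _ = (a w : ℝ) := by rw [(hre w).1]
          _ ≤ DD := (hmax w).1)
      have hTc : ((Finset.univ.filter (fun q => A y q = true)).card : ℝ) = (b y : ℝ) := by
        rw [show (Finset.univ.filter (fun q => A y q = true)).card = outDeg A y from rfl,
          (hre y).2]
      calc (B5.card : ℝ) ≤ _ := h
        _ = (b y : ℝ) * DD := by rw [hTc]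
        _ ≤ B' * DD := mul_le_mul_of_nonneg_right hyB hD0
    have hEcast : (S : ℝ) ≤ (D.card : ℝ) + (B1.card : ℝ) + (B2.card : ℝ)
        + (B3.card : ℝ) + (B4.card : ℝ) + (B5.card : ℝ) + (B6.card : ℝ) := by
      rw [← hES]; exact_mod_cast hEcard
    have heq : (2*C + B'*C) * (S:ℝ) ^ ((1:ℝ)/2 - τ) = 2*DD + B'*DD := by
      rw [hDDdef]; ring
    have hbad2' : 2*(DD*DD) ≤ (S:ℝ)/8 := by rw [hDDdef]; exact hbad2
    have hbad1' : 2*DD + B'*DD ≤ (S:ℝ)/8 := by rw [← heq]; exact hbad1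
    have hDge : (S:ℝ)/2 ≤ (D.card : ℝ) := by linarith
    calc (S:ℝ)/2 ≤ (D.card : ℝ) := hDge
      _ ≤ ((Q.filter fun z => z.1 = A).card : ℝ) := by exact_mod_cast hDle
  -- Upper bound: each switched graph arises from few switches
  have hQup : (Q.card : ℝ) ≤ (G0.card : ℝ) * (B' * (DD * DD)) := by
    set R := Finset.univ.filter
        (fun w : (Fin n → Fin n → Bool) × (Fin n × Fin n × Fin n) =>
          (Realizes w.1 a b ∧ ∀ s, ¬(w.1 x s = true ∧ w.1 y s = true)) ∧
          w.1 y w.2.1 = true ∧ w.1 w.2.2.1 w.2.1 = true ∧ w.1 x w.2.2.2 = true) with hRdef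
    have hQR : Q.card ≤ R.card := by
      apply Finset.card_le_card_of_injOn
        (fun z => (Switch x z.1 z.2.1 z.2.2.1 z.2.2.2, z.2))
      · intro z hz
        rw [Finset.mem_coe, hQdef, Finset.mem_filter] at hz
        obtain ⟨-, hre', hg⟩ := hz
        rw [Finset.mem_coe, hRdef, Finset.mem_filter]
        refine ⟨Finset.mem_univ _, ⟨realizes_switch hg hre', switch_no_common hxy hg⟩,
          switch_yt hxy hg, switch_ut hg.2.2.2.2.1 hg.2.2.2.2.2.2.1,
          switch_xv hg.2.2.2.2.1 hg.2.2.2.2.2.2.1⟩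
      · intro z hz w hw h
        rw [Finset.mem_coe, hQdef, Finset.mem_filter] at hz hw
        simp only [Prod.mk.injEq] at h
        obtain ⟨hSw, h2⟩ := h
        have hz1 : z.1 = w.1 := by
          have e1 := unswitch_switch hz.2.2
          have e2 := unswitch_switch hw.2.2
          rw [← e1, ← e2, hSw, h2]
        exact Prod.ext hz1 h2
    have hmem0 : ∀ w ∈ R, w.1 ∈ G0 := by
      intro w hw
      rw [hRdef, Finset.mem_filter] at hw
      rw [hG0def, Finset.mem_filter]
      exact ⟨Finset.mem_univ _, hw.2.1⟩
    have hRsum := Finset.card_eq_sum_card_fiberwise hmem0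
    have hfib : ∀ A' ∈ G0, ((R.filter fun w => w.1 = A').card : ℝ) ≤ B' * (DD * DD) := by
      intro A' hA'
      rw [hG0def, Finset.mem_filter] at hA'
      obtain ⟨-, hre', -⟩ := hA'
      set EE := Finset.univ.filter
          (fun p : Fin n × Fin n => A' y p.2 = true ∧ A' p.1 p.2 = true) with hEEdef
      set OX := Finset.univ.filter (fun q => A' x q = true) with hOXdef
      have h1 : (R.filter fun w => w.1 = A').card ≤ (EE ×ˢ OX).card := by
        apply Finset.card_le_card_of_injOn (fun w => ((w.2.2.1, w.2.1), w.2.2.2))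
        · intro w hw
          rw [Finset.mem_coe, Finset.mem_filter, hRdef, Finset.mem_filter] at hw
          obtain ⟨⟨-, -, hw1, hw2, hw3⟩, hwA⟩ := hw
          rw [Finset.mem_coe, Finset.mem_product, hEEdef, Finset.mem_filter, hOXdef, Finset.mem_filter]
          rw [hwA] at hw1 hw2 hw3
          exact ⟨⟨Finset.mem_univ _, hw1, hw2⟩, Finset.mem_univ _, hw3⟩
        · intro z hz w hw h
          rw [Finset.mem_coe, Finset.mem_filter] at hz hw
          simp only [Prod.mk.injEq] at h
          refine Prod.ext (hz.2.trans hw.2.symm) ?_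
          exact Prod.ext h.1.2 (Prod.ext h.1.1 h.2)
      have hEE : (EE.card : ℝ) ≤ B' * DD := by
        have hsub : ∀ p ∈ EE, A' p.1 p.2 = true := by
          intro p hp; rw [hEEdef, Finset.mem_filter] at hp; exact hp.2.2
        have hT : ∀ p ∈ EE, p.2 ∈ Finset.univ.filter (fun s => A' y s = true) := by
          intro p hp; rw [hEEdef, Finset.mem_filter] at hp
          exact Finset.mem_filter.mpr ⟨Finset.mem_univ _, hp.2.1⟩
        have h := card_le_of_fiber_bound EE _ Prod.snd hT DD (fun w _ => by
          calc (((EE.filter (fun z => z.2 = w)).card : ℕ) : ℝ) ≤ (inDeg A' w : ℝ) := by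
                exact_mod_cast fiber_snd_le_inDeg A' EE hsub w
            _ = (a w : ℝ) := by rw [(hre' w).1]
            _ ≤ DD := (hmax w).1)
        have hTc : ((Finset.univ.filter (fun s => A' y s = true)).card : ℝ) = (b y : ℝ) := by
          rw [show (Finset.univ.filter (fun s => A' y s = true)).card = outDeg A' y from rfl,
            (hre' y).2]
        calc (EE.card : ℝ) ≤ _ := h
          _ = (b y : ℝ) * DD := by rw [hTc]
          _ ≤ B' * DD := mul_le_mul_of_nonneg_right hyB hD0
      have hOX : (OX.card : ℝ) ≤ DD := by
        have : OX.card = outDeg A' x := rfl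
        rw [this, (hre' x).2]
        exact (hmax x).2
      calc ((R.filter fun w => w.1 = A').card : ℝ) ≤ ((EE ×ˢ OX).card : ℝ) := by
            exact_mod_cast h1
        _ = (EE.card : ℝ) * (OX.card : ℝ) := by rw [Finset.card_product]; push_cast; ring
        _ ≤ (B' * DD) * DD := by
            apply mul_le_mul hEE hOX (Nat.cast_nonneg _)
            exact mul_nonneg hB'0 hD0
        _ = B' * (DD * DD) := by ring
    calc (Q.card : ℝ) ≤ (R.card : ℝ) := by exact_mod_cast hQR
      _ = ∑ A' ∈ G0, ((R.filter fun w => w.1 = A').card : ℝ) := by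
          rw [hRsum]; push_cast; rfl
      _ ≤ ∑ _A' ∈ G0, B' * (DD * DD) := Finset.sum_le_sum hfib
      _ = (G0.card : ℝ) * (B' * (DD * DD)) := by rw [Finset.sum_const, nsmul_eq_mul]
  rw [hcard1, hcard0]
  calc (S:ℝ)/2 * (G1.card : ℝ) = (G1.card : ℝ) * ((S:ℝ)/2) := by ring
    _ ≤ (Q.card : ℝ) := hQlow
    _ ≤ (G0.card : ℝ) * (B' * (DD * DD)) := hQup
    _ = (B' * (DD * DD)) * (G0.card : ℝ) := by ring

end Stmt14

/-- Theorem 2 (degree preserving switches): for a sequence of bidegree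
sequences with maximum degree `O(S^{1/2-τ})` and `S → ∞`, a node `x` and a
node `y` of uniformly bounded degree, the number of realizations in which
`x` and `y` have no common out-neighbor is at least `c·S^{2τ}` times the
number of realizations in which they have exactly one common out-neighbor,
for some `c > 0` and all sufficiently large indices. -/
theorem stmt_14 (τ C B : ℝ) (hτ : 0 < τ) (hC : 0 < C)
    (N : ℕ → ℕ) (a b : ∀ m, Fin (N m) → ℕ) (x y : ∀ m, Fin (N m))
    (S : ℕ → ℕ) (hS : ∀ m, S m = ∑ i, a m i)
    (hmax : ∀ m i, (a m i : ℝ) ≤ C * (S m : ℝ) ^ ((1 : ℝ) / 2 - τ) ∧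
                   (b m i : ℝ) ≤ C * (S m : ℝ) ^ ((1 : ℝ) / 2 - τ))
    (hy : ∀ m, (a m (y m) : ℝ) ≤ B ∧ (b m (y m) : ℝ) ≤ B)
    (hxy : ∀ m, x m ≠ y m)
    (hSinf : Filter.Tendsto S Filter.atTop Filter.atTop) :
    ∃ c > 0, ∀ᶠ m in Filter.atTop,
      c * (S m : ℝ) ^ (2 * τ) *
          (Nat.card {A : Fin (N m) → Fin (N m) → Bool //
            Realizes A (a m) (b m) ∧
            ∃! t, A (x m) t = true ∧ A (y m) t = true} : ℝ)
        ≤ (Nat.card {A : Fin (N m) → Fin (N m) → Bool //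
            Realizes A (a m) (b m) ∧
            ∀ t, ¬(A (x m) t = true ∧ A (y m) t = true)} : ℝ) := by

  have hB'1 : (1:ℝ) ≤ max B 1 := le_max_right _ _
  set B' : ℝ := max B 1 with hB'def
  have hB'0 : (0:ℝ) < B' := lt_of_lt_of_le one_pos hB'1
  have hC2 : (0:ℝ) < C^2 := pow_pos hC 2
  have hKpos : (0:ℝ) < 2*B'*C^2 := mul_pos (mul_pos two_pos hB'0) hC2
  refine ⟨1 / (2 * B' * C^2), div_pos one_pos hKpos, ?_⟩
  have h1 := Stmt14.aux (2*C + B'*C) ((1:ℝ)/2 - τ) (by linarith)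
  have h2 := Stmt14.aux (2*C^2) (1 - 2*τ) (by linarith)
  have h3 := Stmt14.aux B' 0 (by norm_num)
  have h4 : ∀ᶠ k : ℕ in Filter.atTop, 1 ≤ k := Filter.eventually_ge_atTop 1
  filter_upwards [hSinf.eventually h1, hSinf.eventually h2, hSinf.eventually h3,
    hSinf.eventually h4] with m hm1 hm2 hm3 hm4
  have hs0 : (0:ℝ) < (S m : ℝ) := by exact_mod_cast hm4
  have hee : (S m:ℝ)^((1:ℝ)/2-τ) * (S m:ℝ)^((1:ℝ)/2-τ) = (S m:ℝ)^((1:ℝ)-2*τ) := by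
    rw [← Real.rpow_add hs0, show (1:ℝ)/2-τ+((1:ℝ)/2-τ) = 1-2*τ by ring]
  have hbad2 : 2 * ((C * (S m:ℝ)^((1:ℝ)/2-τ)) * (C * (S m:ℝ)^((1:ℝ)/2-τ))) ≤ (S m:ℝ)/8 := by
    calc 2 * ((C * (S m:ℝ)^((1:ℝ)/2-τ)) * (C * (S m:ℝ)^((1:ℝ)/2-τ)))
        = 2*C^2 * ((S m:ℝ)^((1:ℝ)/2-τ) * (S m:ℝ)^((1:ℝ)/2-τ)) := by ring
      _ = 2*C^2 * (S m:ℝ)^(1-2*τ) := by rw [hee]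
      _ ≤ (S m:ℝ)/8 := hm2
  have hbad3 : B' ≤ (S m:ℝ)/8 := by simpa using hm3
  have key := Stmt14.main_step (a m) (b m) (x m) (y m) (hxy m) (S m) (hS m) C B' τ hC.le
    (hmax m) (le_trans (hy m).2 (le_max_left B 1)) hm1 hbad2 hbad3
  set X := (S m:ℝ)^(2*τ) with hXdef
  set Y := (S m:ℝ)^((1:ℝ)-2*τ) with hYdef
  have hXpos : 0 < X := Real.rpow_pos_of_pos hs0 _
  have hYpos : 0 < Y := Real.rpow_pos_of_pos hs0 _
  have hsXY : (S m:ℝ) = X * Y := by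
    rw [hXdef, hYdef, ← Real.rpow_add hs0, show 2*τ + ((1:ℝ)-2*τ) = 1 by ring,
      Real.rpow_one]
  have hCY : (C * (S m:ℝ)^((1:ℝ)/2-τ)) * (C * (S m:ℝ)^((1:ℝ)/2-τ)) = C^2 * Y := by
    calc (C * (S m:ℝ)^((1:ℝ)/2-τ)) * (C * (S m:ℝ)^((1:ℝ)/2-τ))
        = C^2 * ((S m:ℝ)^((1:ℝ)/2-τ) * (S m:ℝ)^((1:ℝ)/2-τ)) := by ring
      _ = C^2 * Y := by rw [hee]
  set N1 : ℝ := (Nat.card {A : Fin (N m) → Fin (N m) → Bool //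
      Realizes A (a m) (b m) ∧
      ∃! t, A (x m) t = true ∧ A (y m) t = true} : ℝ) with hN1def
  set N0 : ℝ := (Nat.card {A : Fin (N m) → Fin (N m) → Bool //
      Realizes A (a m) (b m) ∧
      ∀ t, ¬(A (x m) t = true ∧ A (y m) t = true)} : ℝ) with hN0def
  rw [hCY] at key
  have key2 : X/2 * N1 ≤ B' * C^2 * N0 := by
    have e1 : (S m:ℝ)/2 * N1 = (X/2 * N1) * Y := by rw [hsXY]; ring
    have e2 : (B' * (C^2 * Y)) * N0 = (B' * C^2 * N0) * Y := by ring
    refine le_of_mul_le_mul_right ?_ hYpos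
    rw [← e1, ← e2]
    exact key
  rw [div_mul_eq_mul_div, div_mul_eq_mul_div, div_le_iff₀ hKpos]
  nlinarith [key2]
end

section
/- Let d = (a,b) be a bidegree sequence with Σ a_n = Σ b_n + 1, and let i, j be indices with a_i, a_j ≥ 1. Let X_{0_i} be the set of residual sequences (a - a_i e_i - e_j, b - s) where s has a_i entries equal to 1 (rest 0), and X_{1_i} those where s has one entry equal to 2 and a_i - 2 entries equal to 1; define X_{0_j}, X_{1_j} analogously from (a - e_i - a_j e_j, b - s) with a_j in place of a_i. Then, assuming the denominators are nonzero, ‖G_{d_{-i}}‖ / ‖G_{d_{-j}}‖ = (a_i/a_j) · (1 + ‖G_{X_{1_i}}‖/(a_i ‖G_{X_{0_i}}‖)) / (1 + ‖G_{X_{1_j}}‖/(a_j ‖G_{X_{0_j}}‖)). -/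
/-- Number of directed graphs (loops allowed, no multi-edges) realizing `(a,b)`. -/
noncomputable def numGraphs {N : ℕ} (a b : Fin N → ℕ) : ℕ :=
  Nat.card {A : Fin N → Fin N → Bool // ∀ v, inDeg A v = a v ∧ outDeg A v = b v}

/-- Number of directed graphs realizing an integer bidegree sequence. -/
noncomputable def numGraphsZ {N : ℕ} (a b : Fin N → ℤ) : ℕ :=
  Nat.card {A : Fin N → Fin N → Bool //
    ∀ v, (inDeg A v : ℤ) = a v ∧ (outDeg A v : ℤ) = b v}

/-- `‖G_{X_{c_i}}‖`: the number of graphs realizing some residual sequence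
`(a - a_i e_i - e_j, b - s)` where `s : Fin N → {0,1,2}` has exactly `c`
entries equal to `2` and `∑ s = a_i` (so for `c = 0`, `s` has `a_i` ones,
and for `c = 1`, one `2` and `a_i - 2` ones). -/
noncomputable def GXi {N : ℕ} (a b : Fin N → ℕ) (i j : Fin N) (c : ℕ) : ℕ :=
  ∑ s : Fin N → Fin 3,
    (if (Finset.univ.filter (fun n => (s n : ℕ) = 2)).card = c ∧
        (∑ n, (s n : ℕ)) = a i
     then numGraphsZ
            (fun n => if n = i then 0
                      else if n = j then (a n : ℤ) - 1 else (a n : ℤ))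
            (fun n => (b n : ℤ) - ((s n : ℕ) : ℤ))
     else 0)

section AuxStmt15

open Finset

variable {N : ℕ}

def rset (α β : Fin N → ℤ) : Finset (Fin N → Fin N → Bool) :=
  Finset.univ.filter (fun A => ∀ v, (inDeg A v : ℤ) = α v ∧ (outDeg A v : ℤ) = β v)

lemma mem_rset {α β : Fin N → ℤ} {A : Fin N → Fin N → Bool} :
    A ∈ rset α β ↔ ∀ v, (inDeg A v : ℤ) = α v ∧ (outDeg A v : ℤ) = β v := by
  simp [rset]

lemma numGraphsZ_eq_card (α β : Fin N → ℤ) : numGraphsZ α β = (rset α β).card := by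
  rw [numGraphsZ, Nat.card_eq_fintype_card, Fintype.card_subtype, rset]

lemma numGraphs_eq_card (a b : Fin N → ℕ) :
    numGraphs a b = (rset (fun n => (a n : ℤ)) (fun n => (b n : ℤ))).card := by
  rw [numGraphs, Nat.card_eq_fintype_card, Fintype.card_subtype, rset]
  congr 1
  apply Finset.filter_congr
  intro A _
  constructor
  · intro h v; exact ⟨by exact_mod_cast (h v).1, by exact_mod_cast (h v).2⟩
  · intro h v; exact ⟨by exact_mod_cast (h v).1, by exact_mod_cast (h v).2⟩

lemma inDeg_eq_sum (A : Fin N → Fin N → Bool) (v : Fin N) :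
    inDeg A v = ∑ u, if A u v then 1 else 0 := Finset.card_filter _ _

lemma outDeg_eq_sum (A : Fin N → Fin N → Bool) (u : Fin N) :
    outDeg A u = ∑ v, if A u v then 1 else 0 := Finset.card_filter _ _

/-- column update: degrees -/
lemma inDeg_col_self (A : Fin N → Fin N → Bool) (i : Fin N) (c : Fin N → Bool) :
    inDeg (fun u v => if v = i then c u else A u v) i
      = (Finset.univ.filter (fun u => c u = true)).card := by
  unfold inDeg
  congr 1
  apply Finset.filter_congr
  intro u _; simp

lemma inDeg_col_ne (A : Fin N → Fin N → Bool) (i : Fin N) (c : Fin N → Bool)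
    {v : Fin N} (h : v ≠ i) :
    inDeg (fun u v => if v = i then c u else A u v) v = inDeg A v := by
  unfold inDeg
  congr 1
  apply Finset.filter_congr
  intro u _; simp [h]

lemma outDeg_col (A : Fin N → Fin N → Bool) (i : Fin N) (c : Fin N → Bool) (u : Fin N) :
    outDeg (fun u v => if v = i then c u else A u v) u + (if A u i then 1 else 0)
      = outDeg A u + (if c u then 1 else 0) := by
  rw [outDeg_eq_sum, outDeg_eq_sum]
  rw [← Finset.sum_erase_add _ _ (Finset.mem_univ i),
      ← Finset.sum_erase_add _ _ (Finset.mem_univ i)]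
  have h1 : ∀ v ∈ Finset.univ.erase i,
      (if (if v = i then c u else A u v) then (1:ℕ) else 0) = if A u v then 1 else 0 := by
    intro v hv
    rw [if_neg (Finset.ne_of_mem_erase hv)]
  rw [Finset.sum_congr rfl h1]
  simp
  omega

/-- single-entry update: degrees -/
lemma inDeg_upd_ne (A : Fin N → Fin N → Bool) (m j : Fin N) (d : Bool)
    {v : Fin N} (h : v ≠ j) :
    inDeg (fun u w => if u = m ∧ w = j then d else A u w) v = inDeg A v := by
  unfold inDeg
  congr 1
  apply Finset.filter_congr
  intro u _
  simp only []
  rw [if_neg (show ¬_ from by tauto)]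

lemma inDeg_upd_self (A : Fin N → Fin N → Bool) (m j : Fin N) (d : Bool) :
    inDeg (fun u w => if u = m ∧ w = j then d else A u w) j + (if A m j then 1 else 0)
      = inDeg A j + (if d then 1 else 0) := by
  rw [inDeg_eq_sum, inDeg_eq_sum]
  rw [← Finset.sum_erase_add _ _ (Finset.mem_univ m),
      ← Finset.sum_erase_add _ _ (Finset.mem_univ m)]
  have h1 : ∀ u ∈ Finset.univ.erase m,
      (if (if u = m ∧ j = j then d else A u j) then (1:ℕ) else 0) = if A u j then 1 else 0 := by
    intro u hu
    rw [if_neg (show ¬(u = m ∧ j = j) from fun hc => Finset.ne_of_mem_erase hu hc.1)]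
  rw [Finset.sum_congr rfl h1]
  simp
  omega

lemma outDeg_upd_ne (A : Fin N → Fin N → Bool) (m j : Fin N) (d : Bool)
    {u : Fin N} (h : u ≠ m) :
    outDeg (fun u w => if u = m ∧ w = j then d else A u w) u = outDeg A u := by
  unfold outDeg
  congr 1
  apply Finset.filter_congr
  intro w _
  simp only []
  rw [if_neg (show ¬_ from by tauto)]

lemma outDeg_upd_self (A : Fin N → Fin N → Bool) (m j : Fin N) (d : Bool) :
    outDeg (fun u w => if u = m ∧ w = j then d else A u w) m + (if A m j then 1 else 0)
      = outDeg A m + (if d then 1 else 0) := by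
  rw [outDeg_eq_sum, outDeg_eq_sum]
  rw [← Finset.sum_erase_add _ _ (Finset.mem_univ j),
      ← Finset.sum_erase_add _ _ (Finset.mem_univ j)]
  have h1 : ∀ w ∈ Finset.univ.erase j,
      (if (if m = m ∧ w = j then d else A m w) then (1:ℕ) else 0) = if A m w then 1 else 0 := by
    intro w hw
    rw [if_neg (show ¬(m = m ∧ w = j) from fun hc => Finset.ne_of_mem_erase hw hc.2)]
  rw [Finset.sum_congr rfl h1]
  simp
  omega

/-- from in-degree 0 at i, all column entries false -/
lemma col_false_of_inDeg_zero {A : Fin N → Fin N → Bool} {i : Fin N}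
    (h : inDeg A i = 0) (u : Fin N) : A u i = false := by
  unfold inDeg at h
  rw [Finset.card_eq_zero] at h
  by_contra hc
  have : u ∈ Finset.univ.filter (fun u => A u i = true) := by
    simp [Bool.not_eq_false] at hc ⊢; exact hc
  rw [h] at this
  exact absurd this (Finset.notMem_empty u)

lemma fin3_sum_no2 {s : Fin N → Fin 3} (h2 : ∀ u, (s u : ℕ) ≠ 2) :
    ∑ u, (s u : ℕ) = (Finset.univ.filter (fun u => (s u : ℕ) = 1)).card := by
  rw [Finset.card_filter]
  apply Finset.sum_congr rfl
  intro u _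
  by_cases h : (s u : ℕ) = 1
  · simp [h]
  · have := (s u).isLt
    have := h2 u
    simp only [if_neg h]
    omega

/-- GXi as a card of a sigma finset -/
lemma GXi_sigma_card (a b : Fin N → ℕ) (i j : Fin N) (c : ℕ) :
    GXi a b i j c =
      (Finset.univ.sigma (fun s : Fin N → Fin 3 =>
        if (Finset.univ.filter (fun n => (s n : ℕ) = 2)).card = c ∧ (∑ n, (s n : ℕ)) = a i
        then rset (fun n => if n = i then 0
                      else if n = j then (a n : ℤ) - 1 else (a n : ℤ))
                  (fun n => (b n : ℤ) - ((s n : ℕ) : ℤ))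
        else ∅)).card := by
  rw [Finset.card_sigma, GXi]
  apply Finset.sum_congr rfl
  intro s _
  by_cases h : (Finset.univ.filter (fun n => (s n : ℕ) = 2)).card = c ∧ (∑ n, (s n : ℕ)) = a i
  · rw [if_pos h, if_pos h, numGraphsZ_eq_card]
  · rw [if_neg h, if_neg h, Finset.card_empty]

lemma no2_of_card0 {s : Fin N → Fin 3}
    (h : (Finset.univ.filter (fun n => (s n : ℕ) = 2)).card = 0) :
    ∀ u, (s u : ℕ) ≠ 2 := by
  intro u hu
  rw [Finset.card_eq_zero] at h
  have : u ∈ Finset.univ.filter (fun n => (s n : ℕ) = 2) := by simp [hu]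
  rw [h] at this
  exact absurd this (Finset.notMem_empty u)

lemma fin3_ite_back : ∀ x : Fin 3, (x : ℕ) ≠ 2 →
    (if (if (x : ℕ) = 1 then true else false) = true then (1 : Fin 3) else 0) = x := by decide

lemma lemA (a b : Fin N → ℕ) (i j : Fin N) (hij : i ≠ j) (hj : 1 ≤ a j) :
    GXi a b i j 0 = numGraphs (fun n => if n = j then a j - 1 else a n) b := by
  rw [GXi_sigma_card, numGraphs_eq_card]
  set ρ : Fin N → ℤ := fun n => if n = i then 0
                      else if n = j then (a n : ℤ) - 1 else (a n : ℤ) with hρ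
  set a' : Fin N → ℤ := fun n => ((if n = j then a j - 1 else a n : ℕ) : ℤ) with ha'
  have ha'i : a' i = (a i : ℤ) := by simp [ha', hij]
  have ha'j : a' j = (a j : ℤ) - 1 := by
    have h1 : a' j = ((a j - 1 : ℕ) : ℤ) := by simp [ha']
    rw [h1]; omega
  have ha'o : ∀ v, v ≠ i → v ≠ j → a' v = (a v : ℤ) := by
    intro v _ hvj; simp [ha', hvj]
  apply Finset.card_nbij'
    (i := fun p => fun u v => if v = i then (if (p.1 u : ℕ) = 1 then true else false) else p.2 u v)
    (j := fun A => ⟨fun u => if A u i then 1 else 0,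
                    fun u v => if v = i then false else A u v⟩)
  · -- forward membership
    rintro ⟨s, H⟩ hp
    simp only [Finset.mem_coe] at hp ⊢
    rw [Finset.mem_sigma] at hp
    obtain ⟨-, hH⟩ := hp
    by_cases hc : (Finset.univ.filter (fun n => (s n : ℕ) = 2)).card = 0 ∧ (∑ n, (s n : ℕ)) = a i
    swap
    · rw [if_neg hc] at hH; exact absurd hH (Finset.notMem_empty _)
    rw [if_pos hc] at hH
    rw [mem_rset] at hH ⊢
    dsimp only at hH
    have hno2 := no2_of_card0 hc.1
    have hHi0 : inDeg H i = 0 := by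
      have := (hH i).1
      simp only [hρ, if_pos rfl] at this
      exact_mod_cast this
    have hcol := col_false_of_inDeg_zero hHi0
    intro v
    constructor
    · -- in-degrees
      by_cases hv : v = i
      · subst hv
        rw [inDeg_col_self, ha'i]
        have : (Finset.univ.filter (fun u => (if (s u : ℕ) = 1 then true else false) = true)).card
            = (Finset.univ.filter (fun u => (s u : ℕ) = 1)).card := by
          congr 1; apply Finset.filter_congr; intro u _; by_cases h : (s u : ℕ) = 1 <;> simp [h]
        rw [this, ← fin3_sum_no2 hno2, hc.2]
      · rw [inDeg_col_ne _ _ _ hv, (hH v).1]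
        by_cases hvj : v = j
        · subst hvj; rw [ha'j]; simp [hρ, hv]
        · rw [ha'o v hv hvj]; simp [hρ, hv, hvj]
    · -- out-degrees
      have h1 := outDeg_col H i (fun u => if (s u : ℕ) = 1 then true else false) v
      rw [hcol v, if_neg (Bool.false_ne_true)] at h1
      have h2 := (hH v).2
      have h3 : ((s v : ℕ) : ℤ) = (if (if (s v : ℕ) = 1 then true else false) = true then 1 else 0) := by
        have := (s v).isLt
        have := hno2 v
        by_cases h : (s v : ℕ) = 1 <;> simp [h] <;> omega
      have h4 : (outDeg (fun u v => if v = i then (if (s u : ℕ) = 1 then true else false) else H u v) v : ℤ)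
          = (outDeg H v : ℤ) + (if (if (s v : ℕ) = 1 then true else false) = true then 1 else 0) := by
        exact_mod_cast congrArg (Nat.cast : ℕ → ℤ) h1
      rw [h4, h2, ← h3]
      ring
  · -- backward membership
    intro A hA
    simp only [Finset.mem_coe] at hA ⊢
    rw [mem_rset] at hA
    rw [Finset.mem_sigma]
    refine ⟨Finset.mem_univ _, ?_⟩
    have hvals : ∀ u, (((if A u i then (1 : Fin 3) else 0) : Fin 3) : ℕ) = if A u i then 1 else 0 := by
      intro u; by_cases h : A u i <;> simp [h]
    have hcard : (Finset.univ.filter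
        (fun n => (((if A n i then (1:Fin 3) else 0) : Fin 3) : ℕ) = 2)).card = 0 := by
      rw [Finset.card_eq_zero, Finset.filter_eq_empty_iff]
      intro n _
      rw [hvals n]
      by_cases h : A n i <;> simp [h]
    have hsum : (∑ n, (((if A n i then (1:Fin 3) else 0) : Fin 3) : ℕ)) = a i := by
      have : (∑ n, (((if A n i then (1:Fin 3) else 0) : Fin 3) : ℕ))
          = ∑ n, (if A n i then 1 else 0) := by
        apply Finset.sum_congr rfl; intro n _; exact hvals n
      rw [this, ← inDeg_eq_sum]
      have := (hA i).1
      rw [ha'i] at this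
      exact_mod_cast this
    rw [if_pos ⟨hcard, hsum⟩, mem_rset]
    intro v
    constructor
    · by_cases hv : v = i
      · subst hv
        rw [inDeg_col_self]
        simp [hρ]
      · rw [inDeg_col_ne _ _ _ hv, (hA v).1]
        by_cases hvj : v = j
        · subst hvj; rw [ha'j]; simp [hρ, hv]
        · rw [ha'o v hv hvj]; simp [hρ, hv, hvj]
    · have h1 := outDeg_col A i (fun _ => false) v
      rw [if_neg (Bool.false_ne_true), Nat.add_zero] at h1
      have h2 : (outDeg (fun u v => if v = i then false else A u v) v : ℤ)
          + (if A v i then 1 else 0) = (outDeg A v : ℤ) := by exact_mod_cast congrArg (Nat.cast : ℕ → ℤ) h1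
      rw [(hA v).2] at h2
      rw [hvals v]
      push_cast
      omega
  · -- left inverse
    rintro ⟨s, H⟩ hp
    simp only [Finset.mem_coe] at hp ⊢
    rw [Finset.mem_sigma] at hp
    obtain ⟨-, hH⟩ := hp
    by_cases hc : (Finset.univ.filter (fun n => (s n : ℕ) = 2)).card = 0 ∧ (∑ n, (s n : ℕ)) = a i
    swap
    · rw [if_neg hc] at hH; exact absurd hH (Finset.notMem_empty _)
    rw [if_pos hc] at hH
    rw [mem_rset] at hH
    dsimp only at hH
    have hno2 := no2_of_card0 hc.1
    have hHi0 : inDeg H i = 0 := by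
      have := (hH i).1
      simp only [hρ, if_pos rfl] at this
      exact_mod_cast this
    have hcol := col_false_of_inDeg_zero hHi0
    rw [Sigma.ext_iff]
    constructor
    · funext u
      have h := fin3_ite_back (s u) (hno2 u)
      simpa using h
    · rw [heq_iff_eq]
      funext u v
      by_cases hv : v = i
      · subst hv
        simp only [if_pos rfl]
        exact (hcol u).symm
      · simp only [if_neg hv]
  · -- right inverse
    intro A hA
    simp only [Finset.mem_coe] at hA ⊢
    rw [mem_rset] at hA
    funext u v
    by_cases hv : v = i
    · subst hv
      simp only [if_pos rfl]
      by_cases h : A u v <;> simp [h]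
    · simp only [if_neg hv]

/-- the symmetric residual in-degree sequence a - e_i - e_j -/
def ares (a : Fin N → ℕ) (i j : Fin N) : Fin N → ℤ :=
  fun n => (a n : ℤ) - (if n = i then 1 else 0) - (if n = j then 1 else 0)

def bres (b : Fin N → ℕ) (m : Fin N) : Fin N → ℤ :=
  fun n => (b n : ℤ) - (if n = m then 1 else 0)

lemma ares_symm (a : Fin N → ℕ) (i j : Fin N) : ares a i j = ares a j i := by
  funext n; unfold ares; ring

lemma fin3_pick {s : Fin N → Fin 3} {m : Fin N}
    (hfm : Finset.univ.filter (fun u => (s u : ℕ) = 2) = {m}) :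
    (s m : ℕ) = 2 ∧ ∀ u, u ≠ m → (s u : ℕ) ≠ 2 := by
  constructor
  · have := Finset.mem_singleton_self m
    rw [← hfm] at this
    simpa using this
  · intro u hu hc
    apply hu
    have : u ∈ ({m} : Finset (Fin N)) := by rw [← hfm]; simp [hc]
    simpa using this



lemma lemB2 (a b : Fin N → ℕ) (i j : Fin N) (hij : i ≠ j) :
    GXi a b j i 1 =
      (Finset.univ.sigma (fun m : Fin N =>
        (rset (ares a i j) (bres b m)).filter (fun K => K m j = true))).card := by
  rw [GXi_sigma_card]
  have hji : j ≠ i := hij.symm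
  have haresj : ares a i j j = (a j : ℤ) - 1 := by simp [ares, hji]
  have haresi : ares a i j i = (a i : ℤ) - 1 := by simp [ares, hij]
  have hareso : ∀ v, v ≠ i → v ≠ j → ares a i j v = (a v : ℤ) := by
    intro v h1 h2; simp [ares, h1, h2]
  apply Finset.card_nbij'
    (i := fun p => ⟨(WithTop.untopD j (Finset.univ.filter (fun u => (p.1 u : ℕ) = 2)).min),
      fun u v => if v = j then (if 1 ≤ (p.1 u : ℕ) then true else false) else p.2 u v⟩)
    (j := fun q => ⟨fun u => if u = q.1 then (2 : Fin 3) else if q.2 u j then 1 else 0,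
      fun u v => if v = j then false else q.2 u v⟩)
  · -- forward membership
    rintro ⟨s, H⟩ hp
    simp only [Finset.mem_coe] at hp ⊢
    rw [Finset.mem_sigma] at hp
    obtain ⟨-, hH⟩ := hp
    by_cases hc : (Finset.univ.filter (fun n => (s n : ℕ) = 2)).card = 1 ∧ (∑ n, (s n : ℕ)) = a j
    swap
    · rw [if_neg hc] at hH; exact absurd hH (Finset.notMem_empty _)
    rw [if_pos hc] at hH
    rw [mem_rset] at hH
    dsimp only at hH
    obtain ⟨m, hfm⟩ := Finset.card_eq_one.mp hc.1
    obtain ⟨hsm, hso⟩ := fin3_pick hfm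
    have hpick : (WithTop.untopD j (Finset.univ.filter (fun u => (s u : ℕ) = 2)).min) = m := by
      rw [hfm, Finset.min_singleton]; rfl
    have hHj0 : inDeg H j = 0 := by
      have h0 : (inDeg H j : ℤ) = 0 := by simpa using (hH j).1
      exact_mod_cast h0
    have hcol := col_false_of_inDeg_zero hHj0
    have hcount : (Finset.univ.filter (fun u => (s u : ℕ) = 1)).card + 2 = a j := by
      have key : ∀ u ∈ Finset.univ,
          (s u : ℕ) = (if (s u : ℕ) = 1 then 1 else 0) + (if u = m then 2 else 0) := by
        intro u _
        have hl := (s u).isLt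
        by_cases hu : u = m
        · subst hu; simp [hsm]
        · have := hso u hu
          by_cases h1 : (s u : ℕ) = 1 <;> simp [h1, hu] <;> omega
      have hs : (∑ u, (s u : ℕ))
          = (Finset.univ.filter (fun u => (s u : ℕ) = 1)).card + 2 := by
        rw [Finset.sum_congr rfl key, Finset.sum_add_distrib, ← Finset.card_filter,
          Finset.sum_ite_eq' Finset.univ m (fun _ => 2)]
        simp
      rw [← hc.2, hs]
    rw [Finset.mem_sigma, hpick]
    refine ⟨Finset.mem_univ _, ?_⟩
    rw [Finset.mem_filter]
    constructor
    · rw [mem_rset]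
      intro v
      constructor
      · by_cases hv : v = j
        · subst hv
          rw [inDeg_col_self, haresj]
          have hcc : (Finset.univ.filter
              (fun u => (if 1 ≤ (s u : ℕ) then true else false) = true)).card
              = (Finset.univ.filter (fun u => (s u : ℕ) = 1)).card + 1 := by
            have key : ∀ u ∈ Finset.univ,
                (if (if 1 ≤ (s u : ℕ) then true else false) = true then 1 else 0)
                  = (if (s u : ℕ) = 1 then 1 else 0) + (if u = m then 1 else 0) := by
              intro u _
              have hl := (s u).isLt
              by_cases hu : u = m
              · subst hu; simp [hsm]
              · have := hso u hu
                by_cases h1 : (s u : ℕ) = 1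
                · simp [h1, hu]
                · have h0 : ¬ (1 ≤ (s u : ℕ)) := by omega
                  simp [h1, hu, h0]
            rw [Finset.card_filter, Finset.sum_congr rfl key, Finset.sum_add_distrib,
              ← Finset.card_filter, Finset.sum_ite_eq' Finset.univ m (fun _ => 1)]
            simp
          rw [hcc]
          push_cast
          omega
        · rw [inDeg_col_ne _ _ _ hv, (hH v).1]
          by_cases hvi : v = i
          · subst hvi; rw [haresi]; simp [hij]
          · rw [hareso v hvi hv]; simp [hvi, hv]
      · have h1 := outDeg_col H j (fun u => if 1 ≤ (s u : ℕ) then true else false) v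
        rw [hcol v, if_neg (Bool.false_ne_true), Nat.add_zero] at h1
        have h2 := (hH v).2
        have h4 : (outDeg (fun u w => if w = j then (if 1 ≤ (s u : ℕ) then true else false) else H u w) v : ℤ)
            = (outDeg H v : ℤ) + (if (if 1 ≤ (s v : ℕ) then true else false) = true then 1 else 0) := by
          exact_mod_cast congrArg (Nat.cast : ℕ → ℤ) h1
        rw [h4, h2]
        unfold bres
        have hl := (s v).isLt
        by_cases hv : v = m
        · subst hv
          simp [hsm] <;> omega
        · have h6 := hso v hv
          have hl2 := (s v).isLt
          by_cases hge : 1 ≤ (s v : ℕ)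
          · have h7 : (s v : ℕ) = 1 := by omega
            simp [h7, hv] <;> omega
          · have h7 : (s v : ℕ) = 0 := by omega
            simp [h7, hv] <;> omega
    · simp [hsm]
  · -- backward membership
    rintro ⟨m, K⟩ hq
    simp only [Finset.mem_coe] at hq ⊢
    rw [Finset.mem_sigma, Finset.mem_filter] at hq
    obtain ⟨-, hK, hKmj⟩ := hq
    rw [mem_rset] at hK
    dsimp only at hK hKmj
    have hsv : ∀ u, (((if u = m then (2 : Fin 3) else if K u j then 1 else 0) : Fin 3) : ℕ)
        = if u = m then 2 else if K u j then 1 else 0 := by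
      intro u
      by_cases h : u = m
      · simp [h]
      · by_cases h2 : K u j <;> simp [h, h2]
    have hKj : (inDeg K j : ℤ) = (a j : ℤ) - 1 := by rw [(hK j).1, haresj]
    rw [Finset.mem_sigma]
    refine ⟨Finset.mem_univ _, ?_⟩
    have hfm : (Finset.univ.filter (fun n =>
        (((if n = m then (2 : Fin 3) else if K n j then 1 else 0) : Fin 3) : ℕ) = 2)) = {m} := by
      ext u
      rw [Finset.mem_filter, hsv u]
      constructor
      · rintro ⟨-, h⟩
        rw [Finset.mem_singleton]
        by_contra hu
        rw [if_neg hu] at h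
        by_cases h2 : K u j <;> simp [h2] at h
      · intro h
        rw [Finset.mem_singleton] at h
        subst h
        exact ⟨Finset.mem_univ u, by simp⟩
    have hsum : (∑ n, (((if n = m then (2 : Fin 3) else if K n j then 1 else 0) : Fin 3) : ℕ)) = a j := by
      have key : ∀ u ∈ Finset.univ,
          (((if u = m then (2 : Fin 3) else if K u j then 1 else 0) : Fin 3) : ℕ)
            = (if K u j then 1 else 0) + (if u = m then 1 else 0) := by
        intro u _
        rw [hsv u]
        by_cases h : u = m
        · subst h; simp [hKmj]
        · simp [h]
      have hs : (∑ n, (((if n = m then (2 : Fin 3) else if K n j then 1 else 0) : Fin 3) : ℕ))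
          = inDeg K j + 1 := by
        rw [Finset.sum_congr rfl key, Finset.sum_add_distrib,
          Finset.sum_ite_eq' Finset.univ m (fun _ => 1), inDeg_eq_sum]
        simp
      have : ((inDeg K j + 1 : ℕ) : ℤ) = (a j : ℤ) := by push_cast; omega
      rw [hs]
      exact_mod_cast this
    rw [if_pos ⟨by rw [hfm]; simp, hsum⟩, mem_rset]
    have hHcol : ∀ u, (fun u v => if v = j then false else K u v) u j = false := by
      intro u; simp
    intro v
    constructor
    · by_cases hv : v = j
      · subst hv
        rw [inDeg_col_self]
        simp
      · rw [inDeg_col_ne _ _ _ hv, (hK v).1]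
        by_cases hvi : v = i
        · subst hvi; rw [haresi]; simp [hij]
        · rw [hareso v hvi hv]; simp [hvi, hv]
    · have h1 := outDeg_col K j (fun _ => false) v
      rw [if_neg (Bool.false_ne_true), Nat.add_zero] at h1
      have h2 : (outDeg (fun u w => if w = j then false else K u w) v : ℤ)
          + (if K v j then 1 else 0) = (outDeg K v : ℤ) := by
        exact_mod_cast congrArg (Nat.cast : ℕ → ℤ) h1
      rw [(hK v).2] at h2
      rw [hsv v]
      unfold bres at h2
      by_cases hv : v = m
      · subst hv
        simp only [if_pos rfl, hKmj, if_true] at h2 ⊢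
        push_cast
        omega
      · simp only [if_neg hv] at h2 ⊢
        by_cases h3 : K v j <;> simp [h3] at h2 ⊢ <;> omega
  · -- left inverse
    rintro ⟨s, H⟩ hp
    simp only [Finset.mem_coe] at hp ⊢
    rw [Finset.mem_sigma] at hp
    obtain ⟨-, hH⟩ := hp
    by_cases hc : (Finset.univ.filter (fun n => (s n : ℕ) = 2)).card = 1 ∧ (∑ n, (s n : ℕ)) = a j
    swap
    · rw [if_neg hc] at hH; exact absurd hH (Finset.notMem_empty _)
    rw [if_pos hc] at hH
    rw [mem_rset] at hH
    dsimp only at hH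
    obtain ⟨m, hfm⟩ := Finset.card_eq_one.mp hc.1
    obtain ⟨hsm, hso⟩ := fin3_pick hfm
    have hpick : (WithTop.untopD j (Finset.univ.filter (fun u => (s u : ℕ) = 2)).min) = m := by
      rw [hfm, Finset.min_singleton]; rfl
    have hHj0 : inDeg H j = 0 := by
      have h0 : (inDeg H j : ℤ) = 0 := by simpa using (hH j).1
      exact_mod_cast h0
    have hcol := col_false_of_inDeg_zero hHj0
    rw [Sigma.ext_iff]
    constructor
    · -- first components
      simp only [hpick]
      funext u
      by_cases hu : u = m
      · subst hu
        rw [if_pos rfl]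
        have h2 : s u = (2 : Fin 3) := by
          apply Fin.ext; rw [hsm]; rfl
        exact h2.symm
      · rw [if_neg hu]
        have hl := (s u).isLt
        have h2 := hso u hu
        rw [if_true]
        by_cases hge : 1 ≤ (s u : ℕ)
        · have h1 : (s u : ℕ) = 1 := by omega
          rw [if_pos hge]
          simp only [if_true]
          apply Fin.ext; rw [h1]; rfl
        · have h0 : (s u : ℕ) = 0 := by omega
          rw [if_neg hge]
          simp only [Bool.false_eq_true, if_false]
          apply Fin.ext; rw [h0]; rfl
    · rw [heq_iff_eq]
      funext u v
      by_cases hv : v = j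
      · subst hv
        simp only [if_pos rfl]
        exact (hcol u).symm
      · simp only [if_neg hv]
  · -- right inverse
    rintro ⟨m, K⟩ hq
    simp only [Finset.mem_coe] at hq ⊢
    rw [Finset.mem_sigma, Finset.mem_filter] at hq
    obtain ⟨-, hK, hKmj⟩ := hq
    rw [mem_rset] at hK
    dsimp only at hK hKmj
    rw [Sigma.ext_iff]
    have hsv : ∀ u, (((if u = m then (2 : Fin 3) else if K u j then 1 else 0) : Fin 3) : ℕ)
        = if u = m then 2 else if K u j then 1 else 0 := by
      intro u
      by_cases h : u = m
      · simp [h]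
      · by_cases h2 : K u j <;> simp [h, h2]
    have hfm : (Finset.univ.filter (fun n =>
        (((if n = m then (2 : Fin 3) else if K n j then 1 else 0) : Fin 3) : ℕ) = 2)) = {m} := by
      ext u
      rw [Finset.mem_filter, hsv u]
      constructor
      · rintro ⟨-, h⟩
        rw [Finset.mem_singleton]
        by_contra hu
        rw [if_neg hu] at h
        by_cases h2 : K u j <;> simp [h2] at h
      · intro h
        rw [Finset.mem_singleton] at h
        subst h
        exact ⟨Finset.mem_univ u, by simp⟩
    constructor
    · simp only []
      rw [hfm, Finset.min_singleton]
      rfl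
    · rw [heq_iff_eq]
      funext u v
      by_cases hv : v = j
      · subst hv
        simp only [if_pos rfl]
        by_cases hu : u = m
        · subst hu
          simp [hKmj] <;> decide
        · by_cases h2 : K u v <;> simp [hu, h2] <;> decide
      · simp only [if_neg hv]

lemma lemB1 (a b : Fin N → ℕ) (i j : Fin N) (hij : i ≠ j) (hi : 1 ≤ a i) :
    a j * numGraphs (fun n => if n = i then a i - 1 else a n) b =
      (Finset.univ.sigma (fun m : Fin N =>
        (rset (ares a i j) (bres b m)).filter (fun K => K m j = false))).card := by
  rw [numGraphs_eq_card]
  have hji : j ≠ i := hij.symm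
  have haresj : ares a i j j = (a j : ℤ) - 1 := by simp [ares, hji]
  have haresi : ares a i j i = (a i : ℤ) - 1 := by simp [ares, hij]
  have hareso : ∀ v, v ≠ i → v ≠ j → ares a i j v = (a v : ℤ) := by
    intro v h1 h2; simp [ares, h1, h2]
  set γ : Fin N → ℤ := fun n => ((if n = i then a i - 1 else a n : ℕ) : ℤ) with hγ
  have hγi : γ i = (a i : ℤ) - 1 := by
    have h1 : γ i = ((a i - 1 : ℕ) : ℤ) := by simp [hγ]
    rw [h1]; omega
  have hγo : ∀ v, v ≠ i → γ v = (a v : ℤ) := by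
    intro v hv; simp [hγ, hv]
  -- LHS as a sigma card
  have hL : a j * (rset γ (fun n => (b n : ℤ))).card =
      ((rset γ (fun n => (b n : ℤ))).sigma (fun G =>
        Finset.univ.filter (fun m => G m j = true))).card := by
    rw [Finset.card_sigma]
    rw [Finset.sum_congr rfl (fun G hG => ?_), Finset.sum_const, smul_eq_mul, mul_comm]
    show (Finset.univ.filter (fun m => G m j = true)).card = a j
    rw [mem_rset] at hG
    have h1 : (inDeg G j : ℤ) = (a j : ℤ) := by
      rw [(hG j).1, hγo j hji]
    exact_mod_cast h1
  rw [hL]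
  apply Finset.card_nbij'
    (i := fun p => ⟨p.2, fun u v => if u = p.2 ∧ v = j then false else p.1 u v⟩)
    (j := fun q => ⟨fun u v => if u = q.1 ∧ v = j then true else q.2 u v, q.1⟩)
  · -- forward membership
    rintro ⟨G, m⟩ hp
    simp only [Finset.mem_coe] at hp ⊢
    rw [Finset.mem_sigma, Finset.mem_filter] at hp
    obtain ⟨hG, -, hGmj⟩ := hp
    rw [mem_rset] at hG
    dsimp only at hG hGmj ⊢
    rw [Finset.mem_sigma]
    refine ⟨Finset.mem_univ _, ?_⟩
    rw [Finset.mem_filter]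
    refine ⟨?_, by simp⟩
    rw [mem_rset]
    intro v
    constructor
    · by_cases hv : v = j
      · subst hv
        have h1 := inDeg_upd_self G m v false
        rw [hGmj, if_pos rfl, if_neg (Bool.false_ne_true)] at h1
        have h2 : (inDeg (fun u w => if u = m ∧ w = v then false else G u w) v : ℤ) + 1
            = (inDeg G v : ℤ) := by exact_mod_cast congrArg (Nat.cast : ℕ → ℤ) h1
        rw [(hG v).1, hγo v hji] at h2
        rw [haresj]
        linarith
      · rw [inDeg_upd_ne _ _ _ _ hv, (hG v).1]
        by_cases hvi : v = i
        · subst hvi; rw [haresi, hγi]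
        · rw [hareso v hvi hv, hγo v hvi]
    · by_cases hv : v = m
      · subst hv
        have h1 := outDeg_upd_self G v j false
        rw [hGmj, if_pos rfl, if_neg (Bool.false_ne_true)] at h1
        have h2 : (outDeg (fun u w => if u = v ∧ w = j then false else G u w) v : ℤ) + 1
            = (outDeg G v : ℤ) := by exact_mod_cast congrArg (Nat.cast : ℕ → ℤ) h1
        rw [(hG v).2] at h2
        unfold bres
        simp only [if_pos rfl, if_true]
        linarith
      · rw [outDeg_upd_ne _ _ _ _ hv, (hG v).2]
        unfold bres
        simp [hv]
  · -- backward membership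
    rintro ⟨m, K⟩ hq
    simp only [Finset.mem_coe] at hq ⊢
    rw [Finset.mem_sigma, Finset.mem_filter] at hq
    obtain ⟨-, hK, hKmj⟩ := hq
    rw [mem_rset] at hK
    dsimp only at hK hKmj ⊢
    rw [Finset.mem_sigma, Finset.mem_filter]
    dsimp only
    refine ⟨?_, Finset.mem_univ _, by simp⟩
    rw [mem_rset]
    intro v
    constructor
    · by_cases hv : v = j
      · subst hv
        have h1 := inDeg_upd_self K m v true
        rw [hKmj, if_neg (Bool.false_ne_true), if_pos rfl, Nat.add_zero] at h1
        have h2 : (inDeg (fun u w => if u = m ∧ w = v then true else K u w) v : ℤ)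
            = (inDeg K v : ℤ) + 1 := by exact_mod_cast congrArg (Nat.cast : ℕ → ℤ) h1
        rw [(hK v).1, haresj] at h2
        rw [hγo v hji]
        linarith
      · rw [inDeg_upd_ne _ _ _ _ hv, (hK v).1]
        by_cases hvi : v = i
        · subst hvi; rw [haresi, hγi]
        · rw [hareso v hvi hv, hγo v hvi]
    · by_cases hv : v = m
      · subst hv
        have h1 := outDeg_upd_self K v j true
        rw [hKmj, if_neg (Bool.false_ne_true), if_pos rfl, Nat.add_zero] at h1
        have h2 : (outDeg (fun u w => if u = v ∧ w = j then true else K u w) v : ℤ)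
            = (outDeg K v : ℤ) + 1 := by exact_mod_cast congrArg (Nat.cast : ℕ → ℤ) h1
        rw [(hK v).2] at h2
        unfold bres at h2
        simp only [if_pos rfl, if_true] at h2
        linarith
      · rw [outDeg_upd_ne _ _ _ _ hv, (hK v).2]
        unfold bres
        simp [hv]
  · -- left inverse
    rintro ⟨G, m⟩ hp
    simp only [Finset.mem_coe] at hp ⊢
    rw [Finset.mem_sigma, Finset.mem_filter] at hp
    obtain ⟨-, -, hGmj⟩ := hp
    dsimp only at hGmj
    rw [Sigma.ext_iff]
    constructor
    · funext u v
      dsimp only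
      by_cases h : u = m ∧ v = j
      · rw [if_pos h, h.1, h.2]
        exact hGmj.symm
      · rw [if_neg h, if_neg h]
    · exact heq_of_eq rfl
  · -- right inverse
    rintro ⟨m, K⟩ hq
    simp only [Finset.mem_coe] at hq ⊢
    rw [Finset.mem_sigma, Finset.mem_filter] at hq
    obtain ⟨-, -, hKmj⟩ := hq
    dsimp only at hKmj
    rw [Sigma.ext_iff]
    refine ⟨rfl, heq_of_eq ?_⟩
    funext u v
    dsimp only
    by_cases h : u = m ∧ v = j
    · rw [if_pos h, h.1, h.2]
      exact hKmj.symm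
    · rw [if_neg h, if_neg h]

lemma lemB (a b : Fin N → ℕ) (i j : Fin N) (hij : i ≠ j) (hi : 1 ≤ a i) (hj : 1 ≤ a j) :
    a j * numGraphs (fun n => if n = i then a i - 1 else a n) b + GXi a b j i 1 =
      a i * numGraphs (fun n => if n = j then a j - 1 else a n) b + GXi a b i j 1 := by
  have key : ∀ (i j : Fin N), i ≠ j → 1 ≤ a i →
      a j * numGraphs (fun n => if n = i then a i - 1 else a n) b + GXi a b j i 1 =
        (Finset.univ.sigma (fun m : Fin N => rset (ares a i j) (bres b m))).card := by
    intro i j hij hi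
    rw [lemB1 a b i j hij hi, lemB2 a b i j hij, Finset.card_sigma, Finset.card_sigma,
      ← Finset.sum_add_distrib]
    rw [Finset.card_sigma]
    apply Finset.sum_congr rfl
    intro m _
    have h1 := Finset.card_filter_add_card_filter_not
      (s := rset (ares a i j) (bres b m)) (fun K => K m j = true)
    have h2 : Finset.filter (fun K => ¬ K m j = true) (rset (ares a i j) (bres b m))
        = Finset.filter (fun K => K m j = false) (rset (ares a i j) (bres b m)) := by
      apply Finset.filter_congr
      intro K _
      simp
    rw [h2] at h1
    linarith
  rw [key i j hij hi, key j i hij.symm hj, ares_symm]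

end AuxStmt15

/-- Corollary 5: if `∑ a = ∑ b + 1` and `a_i, a_j ≥ 1`, then (assuming the
denominators are nonzero)
`‖G_{d_{-i}}‖ / ‖G_{d_{-j}}‖ = (a_i/a_j) ·
  (1 + ‖G_{X_{1_i}}‖/(a_i ‖G_{X_{0_i}}‖)) / (1 + ‖G_{X_{1_j}}‖/(a_j ‖G_{X_{0_j}}‖))`. -/
theorem stmt_15 (N : ℕ) (a b : Fin N → ℕ) (i j : Fin N) (hij : i ≠ j)
    (hsum : ∑ n, a n = (∑ n, b n) + 1)
    (hi : 1 ≤ a i) (hj : 1 ≤ a j)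
    (h0i : GXi a b i j 0 ≠ 0) (h0j : GXi a b j i 0 ≠ 0)
    (hden : numGraphs (fun n => if n = j then a j - 1 else a n) b ≠ 0) :
    (numGraphs (fun n => if n = i then a i - 1 else a n) b : ℝ) /
      (numGraphs (fun n => if n = j then a j - 1 else a n) b : ℝ) =
    ((a i : ℝ) / (a j : ℝ)) *
      ((1 + (GXi a b i j 1 : ℝ) / ((a i : ℝ) * (GXi a b i j 0 : ℝ))) /
       (1 + (GXi a b j i 1 : ℝ) / ((a j : ℝ) * (GXi a b j i 0 : ℝ)))) := by
  have hq := lemA a b i j hij hj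
  have hp := lemA a b j i hij.symm hi
  have hB := lemB a b i j hij hi hj
  rw [hp] at h0j
  rw [hq, hp]
  set P := numGraphs (fun n => if n = i then a i - 1 else a n) b with hP
  set Q := numGraphs (fun n => if n = j then a j - 1 else a n) b with hQ
  set Xi := GXi a b i j 1 with hXi
  set Xj := GXi a b j i 1 with hXj
  -- real facts
  have hQ0 : (0:ℝ) < (Q:ℝ) := by
    exact_mod_cast Nat.pos_of_ne_zero hden
  have hP0 : (0:ℝ) < (P:ℝ) := by
    exact_mod_cast Nat.pos_of_ne_zero h0j
  have hai : (0:ℝ) < (a i : ℝ) := by exact_mod_cast hi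
  have haj : (0:ℝ) < (a j : ℝ) := by exact_mod_cast hj
  have hBR : (a j : ℝ) * P + Xj = (a i : ℝ) * Q + Xi := by exact_mod_cast hB
  have hd1 : ((a i : ℝ) * Q) ≠ 0 := by positivity
  have hd2 : ((a j : ℝ) * P) ≠ 0 := by positivity
  have hXj0 : (0:ℝ) ≤ (Xj:ℝ) := Nat.cast_nonneg _
  have hT : (0:ℝ) < (a j : ℝ) * P + Xj := by positivity
  have h1 : 1 + (Xi:ℝ)/((a i:ℝ)*Q) = ((a j:ℝ)*P + Xj)/((a i:ℝ)*Q) := by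
    rw [hBR, add_div, div_self hd1]
  have h2 : 1 + (Xj:ℝ)/((a j:ℝ)*P) = ((a j:ℝ)*P + Xj)/((a j:ℝ)*P) := by
    rw [add_div, div_self hd2]
  rw [h1, h2]
  rw [div_div_div_eq]
  field_simp
end

section
/- Let f : {1,...,N} → [0,∞) with Σ_i f(i) = S, max f = O(S^{1/2-τ}), and r = O(S^{1/2-τ}) with r ≥ 4 and τ > 0. Then Σ over pairwise-distinct tuples (x_1,...,x_r) of ∏_{i=1}^r f(x_i) equals [Σ over tuples with x_1,x_2,x_3,x_4 free and x_5,...,x_r pairwise distinct of ∏ f(x_i) − (4r − 10) · Σ over tuples with x_1 = x_2, x_3, x_4 free and x_5,...,x_r pairwise distinct of ∏ f(x_i)] · (1 + O(S^{-4τ})). -/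
open Finset

section Aux
variable {N r : ℕ}

open scoped Classical in
noncomputable def phi (f : Fin N → ℝ) (P : (Fin r → Fin N) → Prop) : ℝ :=
  ∑ x : Fin r → Fin N, if P x then ∏ i, f (x i) else 0

lemma ite_prod_nonneg {f : Fin N → ℝ} (hf : ∀ i, 0 ≤ f i) (c : Prop) [Decidable c]
    (x : Fin r → Fin N) : 0 ≤ if c then ∏ i, f (x i) else 0 := by
  split
  · exact Finset.prod_nonneg fun i _ => hf _
  · exact le_refl _

lemma sum_eq_phi (f : Fin N → ℝ) (P : (Fin r → Fin N) → Prop) [DecidablePred P] :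
    (∑ x : Fin r → Fin N, if P x then ∏ i, f (x i) else 0) = phi f P := by
  unfold phi
  apply Finset.sum_congr rfl
  intro x _
  by_cases hx : P x
  · rw [if_pos hx, if_pos hx]
  · rw [if_neg hx, if_neg hx]

lemma phi_congr {f : Fin N → ℝ} {P Q : (Fin r → Fin N) → Prop} (h : ∀ x, P x ↔ Q x) :
    phi f P = phi f Q := by
  unfold phi
  apply Finset.sum_congr rfl
  intro x _
  by_cases hx : P x
  · rw [if_pos hx, if_pos ((h x).mp hx)]
  · rw [if_neg hx, if_neg (fun hq => hx ((h x).mpr hq))]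

lemma phi_nonneg {f : Fin N → ℝ} (hf : ∀ i, 0 ≤ f i) (P : (Fin r → Fin N) → Prop) :
    0 ≤ phi f P := by
  classical
  exact Finset.sum_nonneg fun x _ => ite_prod_nonneg hf _ x

lemma phi_mono {f : Fin N → ℝ} (hf : ∀ i, 0 ≤ f i) {P Q : (Fin r → Fin N) → Prop}
    (h : ∀ x, P x → Q x) : phi f P ≤ phi f Q := by
  classical
  apply Finset.sum_le_sum
  intro x _
  by_cases hx : P x
  · rw [if_pos hx, if_pos (h x hx)]
  · rw [if_neg hx]
    exact ite_prod_nonneg hf _ x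

lemma phi_split {f : Fin N → ℝ} (P Q : (Fin r → Fin N) → Prop) :
    phi f P = phi f (fun x => P x ∧ Q x) + phi f (fun x => P x ∧ ¬ Q x) := by
  classical
  rw [phi, phi, phi, ← Finset.sum_add_distrib]
  apply Finset.sum_congr rfl
  intro x _
  by_cases hP : P x <;> by_cases hQ : Q x <;> simp [hP, hQ]

lemma phi_union {f : Fin N → ℝ} (hf : ∀ i, 0 ≤ f i) {ι : Type*} (s : Finset ι)
    (Q : (Fin r → Fin N) → Prop) (Cnd : ι → (Fin r → Fin N) → Prop)
    (h : ∀ x, Q x → ∃ j ∈ s, Cnd j x) :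
    phi f Q ≤ ∑ j ∈ s, phi f (Cnd j) := by
  classical
  have step : phi f Q ≤ ∑ x : Fin r → Fin N, ∑ j ∈ s,
      (if Cnd j x then ∏ i, f (x i) else 0) := by
    apply Finset.sum_le_sum
    intro x _
    by_cases hQ : Q x
    · obtain ⟨j, hj, hc⟩ := h x hQ
      have h1 : (if Cnd j x then ∏ i, f (x i) else 0) ≤ ∑ j ∈ s,
          (if Cnd j x then ∏ i, f (x i) else 0) :=
        Finset.single_le_sum (f := fun j => if Cnd j x then ∏ i, f (x i) else 0)
          (fun k _ => ite_prod_nonneg hf _ x) hj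
      rw [if_pos hc] at h1
      rw [if_pos hQ]
      exact h1
    · rw [if_neg hQ]
      exact Finset.sum_nonneg fun k _ => ite_prod_nonneg hf _ x
  refine step.trans_eq ?_
  rw [Finset.sum_comm]
  apply Finset.sum_congr rfl
  intro j _
  exact (sum_eq_phi f (Cnd j)).symm

lemma phi_perm {f : Fin N → ℝ} (P : (Fin r → Fin N) → Prop) (σ : Equiv.Perm (Fin r)) :
    phi f (fun x => P (x ∘ σ)) = phi f P := by
  classical
  apply Fintype.sum_bijective (fun x : Fin r → Fin N => x ∘ σ)
  · exact (Equiv.arrowCongr σ.symm (Equiv.refl (Fin N))).bijective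
  · intro x
    by_cases h : P (x ∘ σ)
    · rw [if_pos h, if_pos h]
      exact (Equiv.prod_comp σ (fun i => f (x i))).symm
    · rw [if_neg h, if_neg h]

/-- Gluing lemma: summed over a coordinate `a` glued to `b`, with `P` not
depending on coordinate `a`. -/
lemma glue (f : Fin N → ℝ) (M S : ℝ) (hf : ∀ i, 0 ≤ f i) (hM : ∀ i, f i ≤ M)
    (hM0 : 0 ≤ M) (hS : ∑ i, f i = S)
    (a b : Fin r) (hba : b ≠ a) (P : (Fin r → Fin N) → Prop)
    (hP : ∀ x v, P x → P (Function.update x a v)) :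
    S * phi f (fun x => x a = x b ∧ P x) ≤ M * phi f P := by
  classical
  -- step 1: S * LHS as a sum over pairs
  have h1 : S * phi f (fun x => x a = x b ∧ P x)
      = ∑ xv : (Fin r → Fin N) × Fin N,
          (if xv.1 a = xv.1 b ∧ P xv.1 then f xv.2 * ∏ i, f (xv.1 i) else 0) := by
    rw [phi, Finset.mul_sum, Fintype.sum_prod_type]
    apply Finset.sum_congr rfl
    intro x _
    by_cases hx : x a = x b ∧ P x
    · rw [if_pos hx]
      rw [show (∑ y : Fin N, if x a = x b ∧ P x then f y * ∏ i, f (x i) else 0)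
          = ∑ y : Fin N, f y * ∏ i, f (x i) from
        Finset.sum_congr rfl fun y _ => if_pos hx]
      rw [← Finset.sum_mul, hS]
    · rw [if_neg hx, mul_zero]
      symm
      exact Finset.sum_eq_zero fun y _ => if_neg hx
  rw [h1]
  -- restrict to support
  set sset : Finset ((Fin r → Fin N) × Fin N) :=
    Finset.univ.filter (fun xv => xv.1 a = xv.1 b ∧ P xv.1) with hsset
  have h2 : (∑ xv : (Fin r → Fin N) × Fin N,
        (if xv.1 a = xv.1 b ∧ P xv.1 then f xv.2 * ∏ i, f (xv.1 i) else 0))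
      = ∑ xv ∈ sset, f xv.2 * ∏ i, f (xv.1 i) := by
    rw [hsset, Finset.sum_filter]
  rw [h2]
  -- the injection
  set Θ : ((Fin r → Fin N) × Fin N) → (Fin r → Fin N) :=
    fun xv => Function.update xv.1 a xv.2 with hΘ
  have hinj : ∀ xv ∈ sset, ∀ yv ∈ sset, Θ xv = Θ yv → xv = yv := by
    intro ⟨x, v⟩ hx ⟨y, w⟩ hy hxy
    simp only [hsset, Finset.mem_filter] at hx hy
    have hv : v = w := by
      have := congrFun hxy a
      simpa [hΘ] using this
    have hoff : ∀ i, i ≠ a → x i = y i := by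
      intro i hi
      have := congrFun hxy i
      simpa [hΘ, Function.update_of_ne hi] using this
    have hxa : x a = y a := by
      rw [hx.2.1, hy.2.1]
      exact hoff b hba
    have : x = y := funext fun i => by
      by_cases hia : i = a
      · rw [hia]; exact hxa
      · exact hoff i hia
    rw [this, hv]
  have h3 : (∑ xv ∈ sset, f xv.2 * ∏ i, f (xv.1 i))
      = ∑ y ∈ sset.image Θ, f (y a) * f (y b) * ∏ i ∈ Finset.univ.erase a, f (y i) := by
    rw [Finset.sum_image hinj]
    apply Finset.sum_congr rfl
    intro ⟨x, v⟩ hx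
    simp only [hsset, Finset.mem_filter] at hx
    have e1 : Θ (x, v) a = v := by simp [hΘ]
    have e2 : Θ (x, v) b = x b := by simp [hΘ, Function.update_of_ne hba]
    have e3 : ∀ i ∈ Finset.univ.erase a, f (Θ (x, v) i) = f (x i) := by
      intro i hi
      rw [hΘ]
      simp only []
      rw [Function.update_of_ne (Finset.mem_erase.mp hi).1]
    rw [e1, e2, Finset.prod_congr rfl e3]
    rw [← Finset.mul_prod_erase Finset.univ (fun i => f (x i)) (Finset.mem_univ a)]
    rw [hx.2.1]
    ring
  rw [h3]
  -- bound each term and extend the sum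
  have h4 : ∀ y ∈ sset.image Θ,
      f (y a) * f (y b) * ∏ i ∈ Finset.univ.erase a, f (y i)
        ≤ (if P y then M * ∏ i, f (y i) else 0) := by
    intro y hy
    obtain ⟨⟨x, v⟩, hx, rfl⟩ := Finset.mem_image.mp hy
    simp only [hsset, Finset.mem_filter] at hx
    have hPy : P (Θ (x, v)) := hP x v hx.2.2
    rw [if_pos hPy]
    rw [← Finset.mul_prod_erase Finset.univ (fun i => f (Θ (x,v) i)) (Finset.mem_univ a)]
    have hnn : (0:ℝ) ≤ f (Θ (x,v) a) * ∏ i ∈ Finset.univ.erase a, f (Θ (x,v) i) :=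
      mul_nonneg (hf _) (Finset.prod_nonneg fun i _ => hf _)
    calc f (Θ (x,v) a) * f (Θ (x,v) b) * ∏ i ∈ Finset.univ.erase a, f (Θ (x,v) i)
        ≤ f (Θ (x,v) a) * M * ∏ i ∈ Finset.univ.erase a, f (Θ (x,v) i) := by
          apply mul_le_mul_of_nonneg_right _ (Finset.prod_nonneg fun i _ => hf _)
          exact mul_le_mul_of_nonneg_left (hM _) (hf _)
      _ = M * (f (Θ (x,v) a) * ∏ i ∈ Finset.univ.erase a, f (Θ (x,v) i)) := by ring
  have h5 : (∑ y ∈ sset.image Θ, f (y a) * f (y b) * ∏ i ∈ Finset.univ.erase a, f (y i))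
      ≤ ∑ y ∈ sset.image Θ, (if P y then M * ∏ i, f (y i) else 0) :=
    Finset.sum_le_sum h4
  have h6 : (∑ y ∈ sset.image Θ, (if P y then M * ∏ i, f (y i) else 0))
      ≤ ∑ y : Fin r → Fin N, (if P y then M * ∏ i, f (y i) else 0) := by
    apply Finset.sum_le_sum_of_subset_of_nonneg (Finset.subset_univ _)
    intro y _ _
    split
    · exact mul_nonneg hM0 (Finset.prod_nonneg fun i _ => hf _)
    · exact le_refl _
  have h7 : (∑ y : Fin r → Fin N, (if P y then M * ∏ i, f (y i) else 0))
      = M * phi f P := by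
    rw [phi, Finset.mul_sum]
    apply Finset.sum_congr rfl
    intro y _
    by_cases hy : P y
    · rw [if_pos hy, if_pos hy]
    · rw [if_neg hy, if_neg hy, mul_zero]
  exact le_trans h5 (le_trans h6 (le_of_eq h7))

lemma bonferroni (f : Fin N → ℝ) (hf : ∀ i, 0 ≤ f i)
    (Pset : Finset (Fin r × Fin r))
    (D D0 : (Fin r → Fin N) → Prop)
    (hiff : ∀ x, D0 x ↔ (D x ∧ ∀ p ∈ Pset, x p.1 ≠ x p.2)) :
    phi f D - (∑ p ∈ Pset, phi f (fun x => x p.1 = x p.2 ∧ D x)) ≤ phi f D0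
    ∧ phi f D0 ≤ phi f D - (∑ p ∈ Pset, phi f (fun x => x p.1 = x p.2 ∧ D x))
      + ∑ pq ∈ Pset.offDiag,
          phi f (fun x => x pq.1.1 = x pq.1.2 ∧ (x pq.2.1 = x pq.2.2 ∧ D x)) := by
  classical
  have hsum1 : (∑ p ∈ Pset, phi f (fun x => x p.1 = x p.2 ∧ D x))
      = ∑ x : Fin r → Fin N, ∑ p ∈ Pset,
          (if x p.1 = x p.2 ∧ D x then ∏ i, f (x i) else 0) := by
    rw [Finset.sum_comm]
    apply Finset.sum_congr rfl
    intro p _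
    rw [phi]
    apply Finset.sum_congr rfl
    intro x _
    by_cases h : x p.1 = x p.2 ∧ D x
    · rw [if_pos h, if_pos h]
    · rw [if_neg h, if_neg h]
  have hsum2 : (∑ pq ∈ Pset.offDiag,
        phi f (fun x => x pq.1.1 = x pq.1.2 ∧ (x pq.2.1 = x pq.2.2 ∧ D x)))
      = ∑ x : Fin r → Fin N, ∑ pq ∈ Pset.offDiag,
          (if x pq.1.1 = x pq.1.2 ∧ (x pq.2.1 = x pq.2.2 ∧ D x)
            then ∏ i, f (x i) else 0) := by
    rw [Finset.sum_comm]
    apply Finset.sum_congr rfl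
    intro p _
    rw [phi]
    apply Finset.sum_congr rfl
    intro x _
    by_cases h : x p.1.1 = x p.1.2 ∧ (x p.2.1 = x p.2.2 ∧ D x)
    · rw [if_pos h, if_pos h]
    · rw [if_neg h, if_neg h]
  -- pointwise analysis
  have point : ∀ x : Fin r → Fin N,
      ((if D x then ∏ i, f (x i) else 0)
        - ∑ p ∈ Pset, (if x p.1 = x p.2 ∧ D x then ∏ i, f (x i) else 0)
        ≤ (if D0 x then ∏ i, f (x i) else 0))
      ∧ ((if D0 x then ∏ i, f (x i) else 0)
        ≤ (if D x then ∏ i, f (x i) else 0)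
          - (∑ p ∈ Pset, (if x p.1 = x p.2 ∧ D x then ∏ i, f (x i) else 0))
          + ∑ pq ∈ Pset.offDiag,
            (if x pq.1.1 = x pq.1.2 ∧ (x pq.2.1 = x pq.2.2 ∧ D x)
              then ∏ i, f (x i) else 0)) := by
    intro x
    set w : ℝ := ∏ i, f (x i) with hw
    have hw0 : 0 ≤ w := Finset.prod_nonneg fun i _ => hf _
    by_cases hD : D x
    · set cset : Finset (Fin r × Fin r) := Pset.filter (fun p => x p.1 = x p.2) with hcset
      set c : ℕ := cset.card with hc
      have e1 : (∑ p ∈ Pset, (if x p.1 = x p.2 ∧ D x then ∏ i, f (x i) else 0))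
          = c * w := by
        rw [hc, hcset]
        rw [Finset.sum_ite]
        rw [Finset.sum_const, Finset.sum_const_zero, add_zero, nsmul_eq_mul]
        have hfe : Finset.filter (fun p => x p.1 = x p.2 ∧ D x) Pset
            = Finset.filter (fun p => x p.1 = x p.2) Pset :=
          Finset.filter_congr (fun p hp => by simp [hD])
        rw [hfe]
      have e2 : (∑ pq ∈ Pset.offDiag,
            (if x pq.1.1 = x pq.1.2 ∧ (x pq.2.1 = x pq.2.2 ∧ D x)
              then ∏ i, f (x i) else 0)) = ((c * c - c : ℕ) : ℝ) * w := by
        rw [Finset.sum_ite]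
        rw [Finset.sum_const, Finset.sum_const_zero, add_zero, nsmul_eq_mul]
        congr 2
        rw [← Finset.offDiag_card]
        congr 1
        ext pq
        simp only [Finset.mem_filter, Finset.mem_offDiag, hcset]
        constructor
        · rintro ⟨⟨h1, h2, h3⟩, h4, h5, _⟩
          exact ⟨⟨h1, h4⟩, ⟨h2, h5⟩, h3⟩
        · rintro ⟨⟨h1, h4⟩, ⟨h2, h5⟩, h3⟩
          exact ⟨⟨h1, h2, h3⟩, h4, h5, hD⟩
      have e3 : D0 x ↔ c = 0 := by
        rw [hiff x, hc, hcset, Finset.card_eq_zero, Finset.filter_eq_empty_iff]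
        constructor
        · rintro ⟨_, h⟩ p hp
          exact h p hp
        · intro h
          exact ⟨hD, fun p hp => h hp⟩
      have hccn : c ≤ c * c := by
        rcases Nat.eq_zero_or_pos c with h | h
        · simp [h]
        · exact Nat.le_mul_of_pos_left c h
      have hcast : ((c * c - c : ℕ) : ℝ) = (c:ℝ) * c - c := by
        rw [Nat.cast_sub hccn]
        push_cast
        ring
      rw [e1, e2, if_pos hD, hcast]
      by_cases hc0 : c = 0
      · rw [if_pos (e3.mpr hc0), hc0]
        norm_num
      · rw [if_neg (fun h => hc0 (e3.mp h))]
        have hc1 : (1:ℝ) ≤ c := by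
          have : 1 ≤ c := Nat.one_le_iff_ne_zero.mpr hc0
          exact_mod_cast this
        constructor
        · nlinarith
        · nlinarith [mul_nonneg hw0 (sq_nonneg ((c:ℝ) - 1))]
    · have hD0 : ¬ D0 x := fun h => hD ((hiff x).mp h).1
      rw [if_neg hD, if_neg hD0]
      have z1 : (∑ p ∈ Pset, (if x p.1 = x p.2 ∧ D x then ∏ i, f (x i) else 0)) = 0 :=
        Finset.sum_eq_zero fun p _ => if_neg (fun h => hD h.2)
      have z2 : (∑ pq ∈ Pset.offDiag,
          (if x pq.1.1 = x pq.1.2 ∧ (x pq.2.1 = x pq.2.2 ∧ D x)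
            then ∏ i, f (x i) else 0)) = 0 :=
        Finset.sum_eq_zero fun p _ => if_neg (fun h => hD h.2.2)
      rw [z1, z2]
      simp
  constructor
  · rw [hsum1, phi, phi, ← Finset.sum_sub_distrib]
    exact Finset.sum_le_sum fun x _ => (point x).1
  · rw [hsum1, hsum2, phi, phi, ← Finset.sum_sub_distrib, ← Finset.sum_add_distrib]
    exact Finset.sum_le_sum fun x _ => (point x).2

lemma pset_card (hr : 4 ≤ r) :
    (Finset.univ.filter (fun p : Fin r × Fin r => p.1 < p.2 ∧ (p.1 : ℕ) < 4)).card
      = 4 * r - 10 := by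
  classical
  rw [Finset.card_filter]
  rw [Fintype.sum_prod_type]
  have inner : ∀ a : Fin r, (∑ b : Fin r, if a < b ∧ (a:ℕ) < 4 then 1 else 0)
      = if (a:ℕ) < 4 then r - ((a:ℕ) + 1) else 0 := by
    intro a
    by_cases ha : (a:ℕ) < 4
    · rw [if_pos ha]
      have : (∑ b : Fin r, if a < b ∧ (a:ℕ) < 4 then 1 else 0)
          = ∑ b : Fin r, if a < b then 1 else 0 := by
        apply Finset.sum_congr rfl
        intro b _
        by_cases hb : a < b
        · rw [if_pos ⟨hb, ha⟩, if_pos hb]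
        · rw [if_neg (fun h => hb h.1), if_neg hb]
      rw [this, Finset.sum_boole, Finset.filter_lt_eq_Ioi, Fin.card_Ioi]
      norm_cast
      omega
    · rw [if_neg ha]
      exact Finset.sum_eq_zero fun b _ => if_neg (fun h => ha h.2)
  calc (∑ a : Fin r, ∑ b : Fin r, if a < b ∧ (a:ℕ) < 4 then 1 else 0)
      = ∑ a : Fin r, (if (a:ℕ) < 4 then r - ((a:ℕ) + 1) else 0) :=
        Finset.sum_congr rfl fun a _ => inner a
    _ = ∑ k ∈ Finset.range r, (if k < 4 then r - (k + 1) else 0) :=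
        Fin.sum_univ_eq_sum_range (fun k => if k < 4 then r - (k+1) else 0) r
    _ = ∑ k ∈ Finset.range 4, (r - (k + 1)) := by
        rw [← Finset.sum_filter]
        have : Finset.filter (fun k => k < 4) (Finset.range r) = Finset.range 4 := by
          ext k
          simp only [Finset.mem_filter, Finset.mem_range]
          omega
        rw [this]
    _ = 4 * r - 10 := by
        rw [Finset.sum_range_succ, Finset.sum_range_succ, Finset.sum_range_succ,
          Finset.sum_range_one]
        omega

def DFE (b : Fin r) {N : ℕ} (x : Fin r → Fin N) : Prop :=
  ∀ i j : Fin r, 4 ≤ (i : ℕ) → 4 ≤ (j : ℕ) → i ≠ b → j ≠ b → x i = x j → i = j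

lemma swap_spec (i0 i1 a b : Fin r) (h01 : i0 ≠ i1) (h0b : i0 ≠ b) (hba : b ≠ a)
    (hb0 : b ≠ i0) :
    (Equiv.swap i0 a * Equiv.swap i1 b) i0 = a
    ∧ (Equiv.swap i0 a * Equiv.swap i1 b) i1 = b
    ∧ ∀ i, i ≠ i0 → i ≠ i1 → i ≠ a → i ≠ b →
        (Equiv.swap i0 a * Equiv.swap i1 b) i = i := by
  refine ⟨?_, ?_, ?_⟩
  · simp only [Equiv.Perm.mul_apply]
    rw [Equiv.swap_apply_of_ne_of_ne h01 h0b, Equiv.swap_apply_left]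
  · simp only [Equiv.Perm.mul_apply]
    rw [Equiv.swap_apply_left, Equiv.swap_apply_of_ne_of_ne hb0 hba]
  · intro i h1 h2 h3 h4
    simp only [Equiv.Perm.mul_apply]
    rw [Equiv.swap_apply_of_ne_of_ne h2 h4, Equiv.swap_apply_of_ne_of_ne h1 h3]

lemma d4_comp (σ : Equiv.Perm (Fin r)) (hfix : ∀ i : Fin r, 4 ≤ (i:ℕ) → σ i = i)
    (x : Fin r → Fin N) : DistinctFrom 4 (x ∘ σ) ↔ DistinctFrom 4 x := by
  constructor
  · intro h i j hi hj hxy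
    apply h i j hi hj
    show x (σ i) = x (σ j)
    rw [hfix i hi, hfix j hj]
    exact hxy
  · intro h i j hi hj hxy
    apply h i j hi hj
    rw [← hfix i hi, ← hfix j hj]
    exact hxy

lemma dfe_comp (b : Fin r) (σ : Equiv.Perm (Fin r))
    (hfix : ∀ i : Fin r, 4 ≤ (i:ℕ) → i ≠ b → σ i = i)
    (x : Fin r → Fin N) : DFE b (x ∘ σ) ↔ DFE b x := by
  constructor
  · intro h i j hi hj hib hjb hxy
    apply h i j hi hj hib hjb
    show x (σ i) = x (σ j)
    rw [hfix i hi hib, hfix j hj hjb]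
    exact hxy
  · intro h i j hi hj hib hjb hxy
    apply h i j hi hj hib hjb
    rw [← hfix i hi hib, ← hfix j hj hjb]
    exact hxy

lemma head_est (f : Fin N → ℝ) (i0 i1 : Fin r) (hv0 : (i0:ℕ) = 0)
    (hv1 : (i1:ℕ) = 1) (a b : Fin r) (hab : a < b) (hb4 : (b:ℕ) < 4) :
    phi f (fun x => x a = x b ∧ DistinctFrom 4 x)
      = phi f (fun x => x i0 = x i1 ∧ DistinctFrom 4 x) := by
  have hb1 : 1 ≤ (b:ℕ) := by
    have hvlt : (a:ℕ) < (b:ℕ) := hab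
    omega
  have h01 : i0 ≠ i1 := Fin.ne_of_val_ne (by omega)
  have h0b : i0 ≠ b := Fin.ne_of_val_ne (by omega)
  have hba : b ≠ a := hab.ne'
  have hb0 : b ≠ i0 := h0b.symm
  obtain ⟨hσ0, hσ1, hσfix⟩ := swap_spec i0 i1 a b h01 h0b hba hb0
  set σ := Equiv.swap i0 a * Equiv.swap i1 b with hσ
  have hfix4 : ∀ i : Fin r, 4 ≤ (i:ℕ) → σ i = i := by
    intro i hi
    have hab4 : (a:ℕ) < 4 := by
      have hvlt : (a:ℕ) < (b:ℕ) := hab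
      omega
    apply hσfix i
    · exact Fin.ne_of_val_ne (by omega)
    · exact Fin.ne_of_val_ne (by omega)
    · exact Fin.ne_of_val_ne (by omega)
    · exact Fin.ne_of_val_ne (by omega)
  have key := phi_perm (f := f)
    (fun y => y i0 = y i1 ∧ DistinctFrom 4 y) σ
  rw [← key]
  apply phi_congr
  intro x
  show (x a = x b ∧ DistinctFrom 4 x) ↔ ((x ∘ σ) i0 = (x ∘ σ) i1 ∧ DistinctFrom 4 (x ∘ σ))
  rw [d4_comp σ hfix4 x]
  have e0 : (x ∘ σ) i0 = x a := by simp [Function.comp, hσ0]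
  have e1 : (x ∘ σ) i1 = x b := by simp [Function.comp, hσ1]
  rw [e0, e1]

lemma d4_update {x : Fin r → Fin N} {a : Fin r} (ha : (a:ℕ) < 4) (v : Fin N)
    (h : DistinctFrom 4 x) : DistinctFrom 4 (Function.update x a v) := by
  intro i j hi hj hxy
  apply h i j hi hj
  rwa [Function.update_of_ne (Fin.ne_of_val_ne (by omega)),
    Function.update_of_ne (Fin.ne_of_val_ne (by omega))] at hxy

lemma dfe_update_self {x : Fin r → Fin N} {b : Fin r} (v : Fin N)
    (h : DFE b x) : DFE b (Function.update x b v) := by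
  intro i j hi hj hib hjb hxy
  apply h i j hi hj hib hjb
  rwa [Function.update_of_ne hib, Function.update_of_ne hjb] at hxy

lemma dfe_update_head {x : Fin r → Fin N} {b a : Fin r} (ha : (a:ℕ) < 4) (v : Fin N)
    (h : DFE b x) : DFE b (Function.update x a v) := by
  intro i j hi hj hib hjb hxy
  apply h i j hi hj hib hjb
  rwa [Function.update_of_ne (Fin.ne_of_val_ne (by omega)),
    Function.update_of_ne (Fin.ne_of_val_ne (by omega))] at hxy

lemma exists_coll {x : Fin r → Fin N} {b : Fin r} (hD' : DFE b x)
    (hD : ¬ DistinctFrom 4 x) :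
    ∃ j : Fin r, (4 ≤ (j:ℕ) ∧ j ≠ b) ∧ x b = x j := by
  unfold DistinctFrom at hD
  push_neg at hD
  obtain ⟨i, j, hi, hj, hxy, hne⟩ := hD
  by_cases hib : i = b
  · refine ⟨j, ⟨hj, fun h => hne (hib.trans h.symm)⟩, ?_⟩
    rw [← hib]
    exact hxy
  · by_cases hjb : j = b
    · refine ⟨i, ⟨hi, fun h => hne (h.trans hjb.symm)⟩, ?_⟩
      rw [← hjb]
      exact hxy.symm
    · exact absurd (hD' i j hi hj hib hjb hxy) hne

lemma tail_perm (f : Fin N → ℝ) (i0 i1 : Fin r) (hv0 : (i0:ℕ) = 0)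
    (hv1 : (i1:ℕ) = 1) (a b : Fin r) (ha4 : (a:ℕ) < 4) (hb4 : 4 ≤ (b:ℕ)) :
    phi f (fun x => x a = x b ∧ DFE b x)
      = phi f (fun x => x i0 = x i1 ∧ DFE b x) := by
  have h01 : i0 ≠ i1 := Fin.ne_of_val_ne (by omega)
  have h0b : i0 ≠ b := Fin.ne_of_val_ne (by omega)
  have hba : b ≠ a := Fin.ne_of_val_ne (by omega)
  have hb0 : b ≠ i0 := h0b.symm
  obtain ⟨hσ0, hσ1, hσfix⟩ := swap_spec i0 i1 a b h01 h0b hba hb0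
  set σ := Equiv.swap i0 a * Equiv.swap i1 b with hσ
  have hfix : ∀ i : Fin r, 4 ≤ (i:ℕ) → i ≠ b → σ i = i := by
    intro i hi hib
    apply hσfix i
    · exact Fin.ne_of_val_ne (by omega)
    · exact Fin.ne_of_val_ne (by omega)
    · exact Fin.ne_of_val_ne (by omega)
    · exact hib
  have key := phi_perm (f := f) (fun y => y i0 = y i1 ∧ DFE b y) σ
  rw [← key]
  apply phi_congr
  intro x
  show (x a = x b ∧ DFE b x) ↔ ((x ∘ σ) i0 = (x ∘ σ) i1 ∧ DFE b (x ∘ σ))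
  rw [dfe_comp b σ hfix x]
  have e0 : (x ∘ σ) i0 = x a := by simp [Function.comp, hσ0]
  have e1 : (x ∘ σ) i1 = x b := by simp [Function.comp, hσ1]
  rw [e0, e1]

lemma tail_est (f : Fin N → ℝ) (M S : ℝ) (hf : ∀ i, 0 ≤ f i) (hM : ∀ i, f i ≤ M)
    (hM0 : 0 ≤ M) (hS : ∑ i, f i = S) (hS0 : 0 < S) (hrM : 8 * (r:ℝ) * M ≤ S)
    (hr : 4 ≤ r) (i0 i1 : Fin r) (hv0 : (i0:ℕ) = 0) (hv1 : (i1:ℕ) = 1)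
    (a b : Fin r) (ha4 : (a:ℕ) < 4) (hb4 : 4 ≤ (b:ℕ)) :
    S^2 * (phi f (fun x => x a = x b ∧ DistinctFrom 4 x)
        - phi f (fun x => x i0 = x i1 ∧ DistinctFrom 4 x))
      ≤ 2 * (r:ℝ) * M^2 * phi f (DistinctFrom 4 (r := r) (N := N))
    ∧ S^2 * (phi f (fun x => x i0 = x i1 ∧ DistinctFrom 4 x)
        - phi f (fun x => x a = x b ∧ DistinctFrom 4 x))
      ≤ 2 * (r:ℝ) * M^2 * phi f (DistinctFrom 4 (r := r) (N := N)) := by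
  set B := phi f (DistinctFrom 4 (r := r) (N := N)) with hB
  set B' := phi f (DFE b (N := N)) with hB'
  set E := phi f (fun x => x i0 = x i1 ∧ DistinctFrom 4 x) with hE
  set I := phi f (fun x => x i0 = x i1 ∧ DFE b x) with hI
  set I' := phi f (fun x => x a = x b ∧ DFE b x) with hI'
  set Sp := phi f (fun x => x a = x b ∧ DistinctFrom 4 x) with hSp
  have hd4_dfe : ∀ x : Fin r → Fin N, DistinctFrom 4 x → DFE b x :=
    fun x h i j hi hj _ _ hxy => h i j hi hj hxy
  have hB0 : 0 ≤ B := phi_nonneg hf _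
  have hB'0 : 0 ≤ B' := phi_nonneg hf _
  have hI0 : 0 ≤ I := phi_nonneg hf _
  have hr0 : (0:ℝ) < (r:ℝ) := by
    have : 0 < r := by omega
    exact_mod_cast this
  -- the collision index set
  set sset : Finset (Fin r) := Finset.univ.filter (fun j => 4 ≤ (j:ℕ) ∧ j ≠ b)
    with hsset
  have hcards : ((sset.card : ℝ)) ≤ (r:ℝ) := by
    have : sset.card ≤ r := le_trans (Finset.card_filter_le _ _)
      (by simp)
    exact_mod_cast this
  have hmem : ∀ j ∈ sset, 4 ≤ (j:ℕ) ∧ j ≠ b := by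
    intro j hj
    simpa [hsset] using (Finset.mem_filter.mp hj).2
  -- generic union-of-glues bound
  have union_bound : ∀ (P : (Fin r → Fin N) → Prop),
      (∀ x v, P x → P (Function.update x b v)) →
      (∀ x, (P x ∧ ¬ DistinctFrom 4 x) → DFE b x) →
      S * phi f (fun x => P x ∧ ¬ DistinctFrom 4 x) ≤ (r:ℝ) * (M * phi f P) := by
    intro P hPupd hPdfe
    have hu : phi f (fun x => P x ∧ ¬ DistinctFrom 4 x)
        ≤ ∑ j ∈ sset, phi f (fun x => x b = x j ∧ P x) := by
      apply phi_union hf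
      intro x hx
      obtain ⟨j, ⟨hj4, hjb⟩, hcol⟩ := exists_coll (hPdfe x hx) hx.2
      exact ⟨j, Finset.mem_filter.mpr ⟨Finset.mem_univ _, hj4, hjb⟩, hcol, hx.1⟩
    have hglue : ∀ j ∈ sset, S * phi f (fun x => x b = x j ∧ P x)
        ≤ M * phi f P := by
      intro j hj
      exact glue f M S hf hM hM0 hS b j (hmem j hj).2 P hPupd
    calc S * phi f (fun x => P x ∧ ¬ DistinctFrom 4 x)
        ≤ S * ∑ j ∈ sset, phi f (fun x => x b = x j ∧ P x) :=
          mul_le_mul_of_nonneg_left hu hS0.le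
      _ = ∑ j ∈ sset, S * phi f (fun x => x b = x j ∧ P x) := Finset.mul_sum _ _ _
      _ ≤ ∑ j ∈ sset, M * phi f P := Finset.sum_le_sum hglue
      _ = (sset.card : ℝ) * (M * phi f P) := by
          rw [Finset.sum_const, nsmul_eq_mul]
      _ ≤ (r:ℝ) * (M * phi f P) := by
          apply mul_le_mul_of_nonneg_right hcards
          exact mul_nonneg hM0 (phi_nonneg hf _)
  -- B' vs B
  have hBB' : B ≤ B' := phi_mono hf hd4_dfe
  have hB'split : B' = B + phi f (fun x => DFE b x ∧ ¬ DistinctFrom 4 x) := by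
    rw [hB', phi_split (DFE b) (DistinctFrom 4)]
    congr 1
    rw [hB]
    exact phi_congr fun x => ⟨fun h => h.2, fun h => ⟨hd4_dfe x h, h⟩⟩
  have hB'B : S * (B' - B) ≤ (r:ℝ) * (M * B') := by
    have hd : B' - B = phi f (fun x => DFE b x ∧ ¬ DistinctFrom 4 x) := by
      rw [hB'split]; ring
    rw [hd]
    have := union_bound (DFE b) (fun x v h => dfe_update_self v h)
      (fun x h => h.1)
    rw [← hB'] at this
    exact this
  have hB'2B : B' ≤ 2 * B := by
    have h1 : (8 * (r:ℝ) * M) * B' ≤ S * B' :=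
      mul_le_mul_of_nonneg_right hrM hB'0
    have h2 : S * (7 * B') ≤ S * (8 * B) := by nlinarith [hB'B]
    have h3 : 7 * B' ≤ 8 * B := (mul_le_mul_iff_right₀ hS0).mp h2
    linarith
  -- E vs I
  have hEI : E ≤ I := phi_mono hf fun x h => ⟨h.1, hd4_dfe x h.2⟩
  have hIsplit : I = E + phi f (fun x => (x i0 = x i1 ∧ DFE b x)
      ∧ ¬ DistinctFrom 4 x) := by
    rw [hI, phi_split _ (DistinctFrom 4)]
    congr 1
    rw [hE]
    exact phi_congr fun x => ⟨fun h => ⟨h.1.1, h.2⟩,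
      fun h => ⟨⟨h.1, hd4_dfe x h.2⟩, h.2⟩⟩
  have hi0b : i0 ≠ b := Fin.ne_of_val_ne (by omega)
  have hi1b : i1 ≠ b := Fin.ne_of_val_ne (by omega)
  have hIE : S * (I - E) ≤ (r:ℝ) * (M * I) := by
    have hd : I - E = phi f (fun x => (x i0 = x i1 ∧ DFE b x)
        ∧ ¬ DistinctFrom 4 x) := by
      rw [hIsplit]; ring
    rw [hd]
    have := union_bound (fun x => x i0 = x i1 ∧ DFE b x)
      (fun x v h => by
        constructor
        · rw [Function.update_of_ne hi0b, Function.update_of_ne hi1b]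
          exact h.1
        · exact dfe_update_self v h.2)
      (fun x h => h.1.2)
    rw [← hI] at this
    exact this
  have hSI : S * I ≤ M * B' := by
    rw [hI, hB']
    exact glue f M S hf hM hM0 hS i0 i1 (Fin.ne_of_val_ne (by omega))
      (DFE b) (fun x v h => dfe_update_head (by omega) v h)
  -- Sp vs I'
  have hSpI' : Sp ≤ I' := phi_mono hf fun x h => ⟨h.1, hd4_dfe x h.2⟩
  have hI'split : I' = Sp + phi f (fun x => (x a = x b ∧ DFE b x)
      ∧ ¬ DistinctFrom 4 x) := by
    rw [hI', phi_split _ (DistinctFrom 4)]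
    congr 1
    rw [hSp]
    exact phi_congr fun x => ⟨fun h => ⟨h.1.1, h.2⟩,
      fun h => ⟨⟨h.1, hd4_dfe x h.2⟩, h.2⟩⟩
  -- double-glue bound for the I' - Sp remainder
  have hba : b ≠ a := Fin.ne_of_val_ne (by omega)
  have hI'Sp : S^2 * (I' - Sp) ≤ (r:ℝ) * (M^2 * B') := by
    have hu : phi f (fun x => (x a = x b ∧ DFE b x) ∧ ¬ DistinctFrom 4 x)
        ≤ ∑ j ∈ sset, phi f (fun x => x a = x b ∧ (x b = x j ∧ DFE b x)) := by
      apply phi_union hf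
      intro x hx
      obtain ⟨j, ⟨hj4, hjb⟩, hcol⟩ := exists_coll hx.1.2 hx.2
      exact ⟨j, Finset.mem_filter.mpr ⟨Finset.mem_univ _, hj4, hjb⟩,
        hx.1.1, hcol, hx.1.2⟩
    have hglue2 : ∀ j ∈ sset,
        S^2 * phi f (fun x => x a = x b ∧ (x b = x j ∧ DFE b x)) ≤ M^2 * B' := by
      intro j hj
      obtain ⟨hj4, hjb⟩ := hmem j hj
      have g1 : S * phi f (fun x => x a = x b ∧ (x b = x j ∧ DFE b x))
          ≤ M * phi f (fun x => x b = x j ∧ DFE b x) := by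
        apply glue f M S hf hM hM0 hS a b hba
        intro x v h
        constructor
        · rw [Function.update_of_ne (Fin.ne_of_val_ne (by omega : (b:ℕ) ≠ (a:ℕ))),
            Function.update_of_ne (Fin.ne_of_val_ne (by omega : (j:ℕ) ≠ (a:ℕ)))]
          exact h.1
        · exact dfe_update_head ha4 v h.2
      have g2 : S * phi f (fun x => x b = x j ∧ DFE b x) ≤ M * B' := by
        rw [hB']
        exact glue f M S hf hM hM0 hS b j hjb (DFE b)
          (fun x v h => dfe_update_self v h)
      have p1 : 0 ≤ phi f (fun x => x b = x j ∧ DFE b x) := phi_nonneg hf _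
      nlinarith [mul_le_mul_of_nonneg_left g1 hS0.le,
        mul_le_mul_of_nonneg_left g2 hM0]
    have hsum : S^2 * phi f (fun x => (x a = x b ∧ DFE b x) ∧ ¬ DistinctFrom 4 x)
        ≤ (r:ℝ) * (M^2 * B') := by
      calc S^2 * phi f (fun x => (x a = x b ∧ DFE b x) ∧ ¬ DistinctFrom 4 x)
          ≤ S^2 * ∑ j ∈ sset, phi f (fun x => x a = x b ∧ (x b = x j ∧ DFE b x)) :=
            mul_le_mul_of_nonneg_left hu (by positivity)
        _ = ∑ j ∈ sset, S^2 * phi f (fun x => x a = x b ∧ (x b = x j ∧ DFE b x)) :=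
            Finset.mul_sum _ _ _
        _ ≤ ∑ j ∈ sset, M^2 * B' := Finset.sum_le_sum hglue2
        _ = (sset.card : ℝ) * (M^2 * B') := by rw [Finset.sum_const, nsmul_eq_mul]
        _ ≤ (r:ℝ) * (M^2 * B') := by
            apply mul_le_mul_of_nonneg_right hcards
            positivity
    have : S^2 * (I' - Sp) = S^2 * phi f (fun x => (x a = x b ∧ DFE b x)
        ∧ ¬ DistinctFrom 4 x) := by
      rw [hI'split]; ring
    rw [this]
    exact hsum
  -- the exact symmetry
  have hI'I : I' = I := by
    rw [hI', hI]
    exact tail_perm f i0 i1 hv0 hv1 a b ha4 hb4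
  -- combine
  have hMB' : M * B' ≤ M * (2 * B) := mul_le_mul_of_nonneg_left hB'2B hM0
  have hM2B' : M^2 * B' ≤ M^2 * (2 * B) :=
    mul_le_mul_of_nonneg_left hB'2B (by positivity)
  constructor
  · -- S^2 (Sp - E) ≤ 2 r M^2 B
    have h1 : Sp - E ≤ I - E := by
      have : Sp ≤ I := hI'I ▸ hSpI'
      linarith
    have h2 : S^2 * (Sp - E) ≤ S^2 * (I - E) :=
      mul_le_mul_of_nonneg_left h1 (by positivity)
    have h3 : S * (S * (I - E)) ≤ S * ((r:ℝ) * (M * I)) :=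
      mul_le_mul_of_nonneg_left hIE hS0.le
    have h4 : (r:ℝ) * M * (S * I) ≤ (r:ℝ) * M * (M * (2*B)) :=
      mul_le_mul_of_nonneg_left (le_trans hSI hMB')
        (mul_nonneg hr0.le hM0)
    calc S^2 * (Sp - E) ≤ S^2 * (I - E) := h2
      _ = S * (S * (I - E)) := by ring
      _ ≤ S * ((r:ℝ) * (M * I)) := h3
      _ = (r:ℝ) * M * (S * I) := by ring
      _ ≤ (r:ℝ) * M * (M * (2*B)) := h4
      _ = 2 * (r:ℝ) * M^2 * B := by ring
  · -- S^2 (E - Sp) ≤ 2 r M^2 B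
    have h1 : E - Sp ≤ I' - Sp := by
      have : E ≤ I' := hI'I ▸ hEI
      linarith
    have h2 : S^2 * (E - Sp) ≤ S^2 * (I' - Sp) :=
      mul_le_mul_of_nonneg_left h1 (by positivity)
    have h3 : (r:ℝ) * (M^2 * B') ≤ (r:ℝ) * (M^2 * (2*B)) :=
      mul_le_mul_of_nonneg_left hM2B' hr0.le
    calc S^2 * (E - Sp) ≤ S^2 * (I' - Sp) := h2
      _ ≤ (r:ℝ) * (M^2 * B') := hI'Sp
      _ ≤ (r:ℝ) * (M^2 * (2*B)) := h3
      _ = 2 * (r:ℝ) * M^2 * B := by ring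

lemma double_est (f : Fin N → ℝ) (M S : ℝ) (hf : ∀ i, 0 ≤ f i) (hM : ∀ i, f i ≤ M)
    (hM0 : 0 ≤ M) (hS : ∑ i, f i = S) (hS0 : 0 < S)
    (a b c d : Fin r) (hab : a < b) (ha4 : (a:ℕ) < 4) (hcd : c < d)
    (hc4 : (c:ℕ) < 4) (hne : (a, b) ≠ (c, d)) :
    S^2 * phi f (fun x => x a = x b ∧ (x c = x d ∧ DistinctFrom 4 x))
      ≤ M^2 * phi f (DistinctFrom 4 (r := r) (N := N)) := by
  set B := phi f (DistinctFrom 4 (r := r) (N := N)) with hB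
  have hB0 : 0 ≤ B := phi_nonneg hf _
  have comb : ∀ X Y : ℝ, 0 ≤ Y → S * X ≤ M * Y → S * Y ≤ M * B →
      S^2 * X ≤ M^2 * B := by
    intro X Y hY h1 h2
    nlinarith [mul_le_mul_of_nonneg_left h1 hS0.le,
      mul_le_mul_of_nonneg_left h2 hM0]
  have hba : b ≠ a := hab.ne'
  have hdc : d ≠ c := hcd.ne'
  by_cases hac : a = c
  · -- shared first coordinate; b ≠ d
    have hbd : b ≠ d := by
      intro h
      exact hne (by rw [hac, h])
    have had : d ≠ a := (hac ▸ hcd).ne'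
    have hcongr : phi f (fun x => x a = x b ∧ (x c = x d ∧ DistinctFrom 4 x))
        = phi f (fun x => x a = x b ∧ (x b = x d ∧ DistinctFrom 4 x)) := by
      apply phi_congr
      intro x
      constructor
      · rintro ⟨h1, h2, h3⟩
        exact ⟨h1, by rw [← h1, hac]; exact h2, h3⟩
      · rintro ⟨h1, h2, h3⟩
        exact ⟨h1, by rw [← hac, h1]; exact h2, h3⟩
    rw [hcongr]
    have g1 : S * phi f (fun x => x a = x b ∧ (x b = x d ∧ DistinctFrom 4 x))
        ≤ M * phi f (fun x => x b = x d ∧ DistinctFrom 4 x) := by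
      apply glue f M S hf hM hM0 hS a b hba
      intro x v h
      refine ⟨?_, d4_update ha4 v h.2⟩
      rw [Function.update_of_ne hba, Function.update_of_ne had]
      exact h.1
    by_cases hb4 : (b:ℕ) < 4
    · refine comb _ _ (phi_nonneg hf _) g1 ?_
      rw [hB]
      exact glue f M S hf hM hM0 hS b d (fun h => hbd h.symm) _
        (fun x v h => d4_update hb4 v h)
    · by_cases hd4 : (d:ℕ) < 4
      · have hcongr2 : phi f (fun x => x b = x d ∧ DistinctFrom 4 x)
            = phi f (fun x => x d = x b ∧ DistinctFrom 4 x) :=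
          phi_congr fun x => by rw [eq_comm (a := x b)]
        rw [hcongr2] at g1
        refine comb _ _ (phi_nonneg hf _) g1 ?_
        rw [hB]
        exact glue f M S hf hM hM0 hS d b hbd _ (fun x v h => d4_update hd4 v h)
      · -- b, d ≥ 4 and b ≠ d : the middle phi is zero
        have hz : phi f (fun x => x b = x d ∧ DistinctFrom 4 x) = 0 := by
          rw [phi]
          apply Finset.sum_eq_zero
          intro x _
          apply if_neg
          rintro ⟨h1, h2⟩
          exact hbd (h2 b d (by omega) (by omega) h1)
        rw [hz, mul_zero] at g1
        have hp0 : 0 ≤ phi f (fun x => x a = x b ∧ (x b = x d ∧ DistinctFrom 4 x)) :=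
          phi_nonneg hf _
        have : phi f (fun x => x a = x b ∧ (x b = x d ∧ DistinctFrom 4 x)) = 0 := by
          nlinarith
        rw [this, mul_zero]
        positivity
  · by_cases hcb : c = b
    · -- chain a < b = c < d
      have had : d ≠ a := ((hcb ▸ hab).trans hcd).ne'
      have hcongr : phi f (fun x => x a = x b ∧ (x c = x d ∧ DistinctFrom 4 x))
          = phi f (fun x => x a = x b ∧ (x b = x d ∧ DistinctFrom 4 x)) :=
        phi_congr fun x => by rw [hcb]
      rw [hcongr]
      have g1 : S * phi f (fun x => x a = x b ∧ (x b = x d ∧ DistinctFrom 4 x))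
          ≤ M * phi f (fun x => x b = x d ∧ DistinctFrom 4 x) := by
        apply glue f M S hf hM hM0 hS a b hba
        intro x v h
        refine ⟨?_, d4_update ha4 v h.2⟩
        rw [Function.update_of_ne hba, Function.update_of_ne had]
        exact h.1
      refine comb _ _ (phi_nonneg hf _) g1 ?_
      rw [hB]
      have hb4 : (b:ℕ) < 4 := hcb ▸ hc4
      exact glue f M S hf hM hM0 hS b d (hcb ▸ hdc) _
        (fun x v h => d4_update hb4 v h)
    · -- c ∉ {a, b}
      have hca : c ≠ a := fun h => hac h.symm
      have hcongr : phi f (fun x => x a = x b ∧ (x c = x d ∧ DistinctFrom 4 x))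
          = phi f (fun x => x c = x d ∧ (x a = x b ∧ DistinctFrom 4 x)) :=
        phi_congr fun x => by tauto
      rw [hcongr]
      have g1 : S * phi f (fun x => x c = x d ∧ (x a = x b ∧ DistinctFrom 4 x))
          ≤ M * phi f (fun x => x a = x b ∧ DistinctFrom 4 x) := by
        apply glue f M S hf hM hM0 hS c d hdc
        intro x v h
        refine ⟨?_, d4_update hc4 v h.2⟩
        rw [Function.update_of_ne hca.symm, Function.update_of_ne (fun h' => hcb h'.symm)]
        exact h.1
      refine comb _ _ (phi_nonneg hf _) g1 ?_
      rw [hB]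
      exact glue f M S hf hM hM0 hS a b hba _ (fun x v h => d4_update ha4 v h)

end Aux


set_option maxHeartbeats 1000000 in
/-- Lemma 3 (first identity): for nonnegative `f` with `∑ f = S`,
`max f = O(S^{1/2-τ})` and `4 ≤ r = O(S^{1/2-τ})`,
`∑_{x₁≠⋯≠x_r} ∏ f(x_i)
  = [∑_{x₁,…,x₄, x₅≠⋯≠x_r} ∏ f(x_i)
     − (4r−10) ∑_{x₁=x₂,x₃,x₄, x₅≠⋯≠x_r} ∏ f(x_i)]·(1 + O(S^{-4τ}))`. -/
theorem stmt_18 (C τ : ℝ) (hC : 0 < C) (hτ : 0 < τ) :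
    ∃ C' > 0, ∃ S₀ : ℝ, ∀ (N r : ℕ) (f : Fin N → ℝ) (S : ℝ),
      (∀ i, 0 ≤ f i) → (∑ i, f i) = S → S₀ ≤ S →
      (∀ i, f i ≤ C * S ^ ((1 : ℝ) / 2 - τ)) →
      (r : ℝ) ≤ C * S ^ ((1 : ℝ) / 2 - τ) → 4 ≤ r →
      ∃ θ : ℝ, |θ| ≤ C' * S ^ (-(4 * τ)) ∧
        (∑ x : Fin r → Fin N,
            if DistinctFrom 0 x then ∏ i, f (x i) else 0)
          = ((∑ x : Fin r → Fin N,
                if DistinctFrom 4 x then ∏ i, f (x i) else 0)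
              - (4 * (r : ℝ) - 10) *
                (∑ x : Fin r → Fin N,
                  if EqOnFirst 2 x ∧ DistinctFrom 4 x then ∏ i, f (x i)
                  else 0)) * (1 + θ) := by
  classical
  refine ⟨48 * C^4 + 1, by positivity, max 1 ((8 * C^2) ^ ((2*τ)⁻¹)), ?_⟩
  intro N r f S hf hsum hS₀ hfM hrM hr4
  have hS1 : (1:ℝ) ≤ S := le_trans (le_max_left _ _) hS₀
  have hS0 : 0 < S := lt_of_lt_of_le one_pos hS1
  set M : ℝ := C * S ^ ((1:ℝ)/2 - τ) with hMdef
  have hM0 : 0 ≤ M := by positivity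
  have h0r : 0 < r := by omega
  have hr4R : (4:ℝ) ≤ (r:ℝ) := by exact_mod_cast hr4
  have h8C : 8 * C^2 ≤ S ^ (2*τ) := by
    have h1 : (8*C^2) ^ ((2*τ)⁻¹) ≤ S := le_trans (le_max_right _ _) hS₀
    have h2 : ((8*C^2) ^ ((2*τ)⁻¹)) ^ (2*τ) ≤ S ^ (2*τ) :=
      Real.rpow_le_rpow (Real.rpow_nonneg (by positivity) _) h1 (by positivity)
    rwa [Real.rpow_inv_rpow (by positivity) (by positivity)] at h2
  have hrMle : (r:ℝ) * M ≤ C^2 * S ^ (1 - 2*τ) := by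
    calc (r:ℝ) * M ≤ (C * S ^ ((1:ℝ)/2-τ)) * (C * S ^ ((1:ℝ)/2-τ)) := by
          apply mul_le_mul hrM (le_refl M) hM0 (by positivity)
      _ = C^2 * (S ^ ((1:ℝ)/2-τ) * S ^ ((1:ℝ)/2-τ)) := by ring
      _ = C^2 * S ^ (1 - 2*τ) := by
          rw [← Real.rpow_add hS0, show ((1:ℝ)/2-τ)+((1:ℝ)/2-τ) = 1-2*τ by ring]
  have hkey : 8 * (r:ℝ) * M ≤ S := by
    have e1 : S ^ (1-2*τ) * S ^ (2*τ) = S := by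
      rw [← Real.rpow_add hS0, show (1-2*τ)+(2*τ) = (1:ℝ) by ring, Real.rpow_one]
    calc 8 * (r:ℝ) * M ≤ 8 * (C^2 * S ^ (1-2*τ)) := by linarith
      _ = (8*C^2) * S ^ (1-2*τ) := by ring
      _ ≤ S ^ (2*τ) * S ^ (1-2*τ) :=
          mul_le_mul_of_nonneg_right h8C (Real.rpow_nonneg hS0.le _)
      _ = S := by rw [mul_comm]; exact e1
  -- convert the three sums to `phi`
  rw [sum_eq_phi f (DistinctFrom 0), sum_eq_phi f (DistinctFrom 4),
    sum_eq_phi f (fun x => EqOnFirst 2 x ∧ DistinctFrom 4 x)]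
  set i0 : Fin r := ⟨0, by omega⟩ with hi0
  set i1 : Fin r := ⟨1, by omega⟩ with hi1
  have hv0 : (i0:ℕ) = 0 := by rw [hi0]
  have hv1 : (i1:ℕ) = 1 := by rw [hi1]
  have hEeq : phi f (fun x : Fin r → Fin N => EqOnFirst 2 x ∧ DistinctFrom 4 x)
      = phi f (fun x => x i0 = x i1 ∧ DistinctFrom 4 x) := by
    apply phi_congr
    intro x
    constructor
    · rintro ⟨h1, h2⟩
      exact ⟨h1 i0 i1 (by omega) (by omega), h2⟩
    · rintro ⟨h1, h2⟩
      refine ⟨?_, h2⟩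
      have hcase : ∀ k : Fin r, (k:ℕ) < 2 → k = i0 ∨ k = i1 := by
        intro k hk
        rcases (by omega : (k:ℕ) = 0 ∨ (k:ℕ) = 1) with h | h
        · exact Or.inl (Fin.ext (by omega))
        · exact Or.inr (Fin.ext (by omega))
      intro i j hij hji
      rcases hcase i hij with rfl | rfl <;> rcases hcase j hji with rfl | rfl
      · rfl
      · exact h1
      · exact h1.symm
      · rfl
  rw [hEeq]
  set A : ℝ := phi f (DistinctFrom 0 (r := r) (N := N)) with hA
  set B : ℝ := phi f (DistinctFrom 4 (r := r) (N := N)) with hB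
  set E : ℝ := phi f (fun x : Fin r → Fin N => x i0 = x i1 ∧ DistinctFrom 4 x)
    with hE
  have hB0 : 0 ≤ B := phi_nonneg hf _
  have hE0 : 0 ≤ E := phi_nonneg hf _
  have hA0 : 0 ≤ A := phi_nonneg hf _
  have hS2 : (0:ℝ) < S^2 := by positivity
  -- the set of constrained pairs
  set Pset : Finset (Fin r × Fin r) :=
    Finset.univ.filter (fun p => p.1 < p.2 ∧ (p.1:ℕ) < 4) with hPset
  have hmemP : ∀ p ∈ Pset, p.1 < p.2 ∧ (p.1:ℕ) < 4 :=
    fun p hp => (Finset.mem_filter.mp hp).2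
  have hD0iff : ∀ x : Fin r → Fin N,
      DistinctFrom 0 x ↔ (DistinctFrom 4 x ∧ ∀ p ∈ Pset, x p.1 ≠ x p.2) := by
    intro x
    constructor
    · intro h
      refine ⟨fun i j _ _ hxy => h i j (Nat.zero_le _) (Nat.zero_le _) hxy, ?_⟩
      intro p hp hxy
      exact (hmemP p hp).1.ne (h p.1 p.2 (Nat.zero_le _) (Nat.zero_le _) hxy)
    · rintro ⟨h4, hnc⟩ i j _ _ hxy
      by_contra hij
      rcases lt_or_gt_of_ne hij with hlt | hgt
      · by_cases hi4 : (i:ℕ) < 4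
        · exact hnc (i, j)
            (Finset.mem_filter.mpr ⟨Finset.mem_univ _, hlt, hi4⟩) hxy
        · have hj4 : 4 ≤ (j:ℕ) := by
            have hvlt : (i:ℕ) < (j:ℕ) := hlt
            omega
          exact hij (h4 i j (by omega) hj4 hxy)
      · by_cases hj4 : (j:ℕ) < 4
        · exact hij ((hnc (j, i)
            (Finset.mem_filter.mpr ⟨Finset.mem_univ _, hgt, hj4⟩) hxy.symm).elim)
        · have hi4 : 4 ≤ (i:ℕ) := by
            have hvlt : (j:ℕ) < (i:ℕ) := hgt
            omega
          exact hij (h4 i j hi4 (by omega) hxy)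
  obtain ⟨hlow, hup⟩ := bonferroni f hf Pset (DistinctFrom 4) (DistinctFrom 0) hD0iff
  rw [← hA, ← hB] at hlow hup
  -- per-pair estimates
  have hSpE : ∀ p ∈ Pset,
      |phi f (fun x => x p.1 = x p.2 ∧ DistinctFrom 4 x) - E|
        ≤ 2*(r:ℝ)*M^2*B/S^2 := by
    intro p hp
    obtain ⟨hlt, h14⟩ := hmemP p hp
    by_cases hb4 : (p.2:ℕ) < 4
    · have heq : phi f (fun x => x p.1 = x p.2 ∧ DistinctFrom 4 x) = E :=
        head_est f i0 i1 hv0 hv1 p.1 p.2 hlt hb4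
      rw [heq, sub_self, abs_zero]
      positivity
    · have hb4' : 4 ≤ (p.2:ℕ) := by omega
      obtain ⟨hu1, hl1⟩ := tail_est f M S hf hfM hM0 hsum hS0 hkey hr4
        i0 i1 hv0 hv1 p.1 p.2 h14 hb4'
      rw [← hB] at hu1 hl1
      rw [abs_le]
      constructor
      · have h1 : E - phi f (fun x => x p.1 = x p.2 ∧ DistinctFrom 4 x)
            ≤ 2*(r:ℝ)*M^2*B/S^2 := by
          rw [le_div_iff₀ hS2, mul_comm _ (S^2)]
          exact hl1
        linarith [h1]
      · have h1 : phi f (fun x => x p.1 = x p.2 ∧ DistinctFrom 4 x) - E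
            ≤ 2*(r:ℝ)*M^2*B/S^2 := by
          rw [le_div_iff₀ hS2, mul_comm _ (S^2)]
          exact hu1
        linarith [h1]
  -- summed first-order estimate
  have hsum_abs : |(∑ p ∈ Pset, phi f (fun x => x p.1 = x p.2 ∧ DistinctFrom 4 x))
      - (Pset.card:ℝ)*E| ≤ (Pset.card:ℝ) * (2*(r:ℝ)*M^2*B/S^2) := by
    have h1 : (∑ p ∈ Pset, phi f (fun x => x p.1 = x p.2 ∧ DistinctFrom 4 x))
        - (Pset.card:ℝ)*E
        = ∑ p ∈ Pset, (phi f (fun x => x p.1 = x p.2 ∧ DistinctFrom 4 x) - E) := by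
      rw [Finset.sum_sub_distrib, Finset.sum_const, nsmul_eq_mul]
    rw [h1]
    refine (Finset.abs_sum_le_sum_abs _ _).trans ?_
    refine (Finset.sum_le_card_nsmul _ _ _ hSpE).trans_eq ?_
    rw [nsmul_eq_mul]
  -- second-order (double collision) bound
  have hdd : (∑ pq ∈ Pset.offDiag,
        phi f (fun x => x pq.1.1 = x pq.1.2 ∧ (x pq.2.1 = x pq.2.2
          ∧ DistinctFrom 4 x)))
      ≤ (Pset.offDiag.card:ℝ) * (M^2*B/S^2) := by
    refine (Finset.sum_le_card_nsmul _ _ _ ?_).trans_eq (nsmul_eq_mul _ _)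
    intro pq hpq
    obtain ⟨hp1, hp2, hne⟩ := Finset.mem_offDiag.mp hpq
    obtain ⟨hlt1, h14⟩ := hmemP _ hp1
    obtain ⟨hlt2, h24⟩ := hmemP _ hp2
    have hne2 : (pq.1.1, pq.1.2) ≠ (pq.2.1, pq.2.2) := by
      rw [Prod.mk.eta, Prod.mk.eta]
      exact hne
    have hde := double_est f M S hf hfM hM0 hsum hS0 pq.1.1 pq.1.2 pq.2.1 pq.2.2
      hlt1 h14 hlt2 h24 hne2
    rw [← hB] at hde
    rw [le_div_iff₀ hS2, mul_comm]
    exact hde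
  -- cardinalities
  have hmcard : Pset.card = 4*r - 10 := pset_card hr4
  have hmR : (Pset.card : ℝ) = 4*(r:ℝ) - 10 := by
    have h10 : 10 ≤ 4*r := by omega
    rw [hmcard, Nat.cast_sub h10]
    push_cast
    ring
  have hmle : (Pset.card:ℝ) ≤ 4*(r:ℝ) := by rw [hmR]; linarith
  have hodd_le : (Pset.offDiag.card : ℝ) ≤ 16*(r:ℝ)^2 := by
    have h1 : Pset.offDiag.card ≤ Pset.card * Pset.card := by
      rw [Finset.offDiag_card]
      omega
    calc (Pset.offDiag.card:ℝ) ≤ (Pset.card:ℝ)*(Pset.card:ℝ) := by exact_mod_cast h1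
      _ ≤ (4*(r:ℝ))*(4*(r:ℝ)) :=
          mul_le_mul hmle hmle (Nat.cast_nonneg _) (by positivity)
      _ = 16*(r:ℝ)^2 := by ring
  -- total error bound
  have hbnd0 : (0:ℝ) ≤ 2*(r:ℝ)*M^2*B/S^2 := by positivity
  have hbnd0' : (0:ℝ) ≤ M^2*B/S^2 := by positivity
  have hscale1 : (Pset.card:ℝ) * (2*(r:ℝ)*M^2*B/S^2)
      ≤ 8*((r:ℝ)^2*M^2*B/S^2) := by
    calc (Pset.card:ℝ) * (2*(r:ℝ)*M^2*B/S^2)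
        ≤ (4*(r:ℝ)) * (2*(r:ℝ)*M^2*B/S^2) := mul_le_mul_of_nonneg_right hmle hbnd0
      _ = 8*((r:ℝ)^2*M^2*B/S^2) := by ring
  have hscale2 : (Pset.offDiag.card:ℝ) * (M^2*B/S^2)
      ≤ 16*((r:ℝ)^2*M^2*B/S^2) := by
    calc (Pset.offDiag.card:ℝ) * (M^2*B/S^2)
        ≤ (16*(r:ℝ)^2) * (M^2*B/S^2) := mul_le_mul_of_nonneg_right hodd_le hbnd0'
      _ = 16*((r:ℝ)^2*M^2*B/S^2) := by ring
  have hX0 : (0:ℝ) ≤ (r:ℝ)^2 * M^2 * B / S^2 :=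
    div_nonneg (mul_nonneg (mul_nonneg (sq_nonneg _) (sq_nonneg _)) hB0) hS2.le
  have keylin : ∀ a bb e sp dd mm kk kk' xx : ℝ, bb - sp ≤ a → a ≤ bb - sp + dd →
      -(kk) ≤ sp - mm*e → sp - mm*e ≤ kk → dd ≤ kk' → kk ≤ 8*xx → kk' ≤ 16*xx →
      0 ≤ xx → |a - (bb - mm*e)| ≤ 24*xx := by
    intro a bb e sp dd mm kk kk' xx h1 h2 h3 h4 h5 h6 h7 h8
    rw [abs_le]
    constructor <;> linarith
  have herr : |A - (B - (4*(r:ℝ)-10)*E)| ≤ 24*((r:ℝ)^2*M^2*B/S^2) := by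
    obtain ⟨hq1, hq2⟩ := abs_le.mp hsum_abs
    rw [← hmR]
    exact keylin A B E _ _ _ _ _ _ hlow hup hq1 hq2 hdd hscale1 hscale2 hX0
  -- convert the error bound to the `S^{-4τ}` form
  have hr2M2 : (r:ℝ)^2*M^2 ≤ C^4 * (S^2 * S^(-(4*τ))) := by
    have h1 : ((r:ℝ)*M)*((r:ℝ)*M) ≤ (C^2*S^(1-2*τ))*(C^2*S^(1-2*τ)) :=
      mul_le_mul hrMle hrMle (mul_nonneg (Nat.cast_nonneg _) hM0) (by positivity)
    have h2 : S^(1-2*τ)*S^(1-2*τ) = S^2 * S^(-(4*τ)) := by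
      rw [← Real.rpow_add hS0, ← Real.rpow_natCast S 2, ← Real.rpow_add hS0]
      congr 1
      push_cast
      ring
    calc (r:ℝ)^2*M^2 = ((r:ℝ)*M)*((r:ℝ)*M) := by ring
      _ ≤ (C^2*S^(1-2*τ))*(C^2*S^(1-2*τ)) := h1
      _ = C^4 * (S^(1-2*τ)*S^(1-2*τ)) := by ring
      _ = C^4 * (S^2 * S^(-(4*τ))) := by rw [h2]
  have num2 : 24*((r:ℝ)^2*M^2*B/S^2) ≤ 24*C^4*S^(-(4*τ))*B := by
    rw [show 24*((r:ℝ)^2*M^2*B/S^2) = 24*(r:ℝ)^2*M^2*B/S^2 by ring]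
    rw [div_le_iff₀ hS2]
    calc 24*(r:ℝ)^2*M^2*B = 24*((r:ℝ)^2*M^2)*B := by ring
      _ ≤ 24*(C^4 * (S^2 * S^(-(4*τ))))*B := by
          apply mul_le_mul_of_nonneg_right _ hB0
          apply mul_le_mul_of_nonneg_left hr2M2 (by norm_num)
      _ = 24*C^4*S^(-(4*τ))*B*S^2 := by ring
  have herr2 : |A - (B - (4*(r:ℝ)-10)*E)| ≤ 24*C^4*S^(-(4*τ))*B :=
    herr.trans num2
  -- denominator bound
  have hSE : S*E ≤ M*B := by
    rw [hE, hB]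
    exact glue f M S hf hfM hM0 hsum i0 i1 (Fin.ne_of_val_ne (by omega))
      (DistinctFrom 4) (fun x v h => d4_update (by omega) v h)
  have hden : (4*(r:ℝ)-10)*E ≤ B/2 := by
    have h1 : (4*(r:ℝ)-10)*E ≤ 4*(r:ℝ)*E := by nlinarith
    have h2 : S*(4*(r:ℝ)*E) ≤ S*(B/2) := by
      calc S*(4*(r:ℝ)*E) = 4*(r:ℝ)*(S*E) := by ring
        _ ≤ 4*(r:ℝ)*(M*B) := by
            apply mul_le_mul_of_nonneg_left hSE (by positivity)
        _ = (4*(r:ℝ)*M)*B := by ring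
        _ ≤ (S/2)*B := by
            apply mul_le_mul_of_nonneg_right _ hB0
            linarith
        _ = S*(B/2) := by ring
    have h3 : 4*(r:ℝ)*E ≤ B/2 := (mul_le_mul_iff_right₀ hS0).mp h2
    linarith
  -- final split
  by_cases hBz : B = 0
  · have hAB : A ≤ B := phi_mono hf
      (fun x h i j hi hj hxy => h i j (Nat.zero_le _) (Nat.zero_le _) hxy)
    have hAz : A = 0 := le_antisymm (hBz ▸ hAB) hA0
    have hEz : E = 0 := by nlinarith [hSE, hS0, hE0, hBz]
    refine ⟨0, ?_, ?_⟩
    · rw [abs_zero]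
      positivity
    · rw [hAz, hBz, hEz]
      ring
  · have hBpos : 0 < B := lt_of_le_of_ne hB0 (Ne.symm hBz)
    set Dd : ℝ := B - (4*(r:ℝ)-10)*E with hDd
    have hDpos : 0 < Dd := by rw [hDd]; linarith
    refine ⟨A/Dd - 1, ?_, ?_⟩
    · have heq : A/Dd - 1 = (A - Dd)/Dd := by field_simp
      rw [heq, abs_div, abs_of_pos hDpos, div_le_iff₀ hDpos]
      have hB2D : B/2 ≤ Dd := by rw [hDd]; linarith
      have hx0 : (0:ℝ) ≤ S^(-(4*τ)) := Real.rpow_nonneg hS0.le _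
      calc |A - Dd| ≤ 24*C^4*S^(-(4*τ))*B := by rw [hDd]; exact herr2
        _ = 48*C^4*S^(-(4*τ))*(B/2) := by ring
        _ ≤ 48*C^4*S^(-(4*τ))*Dd := by
            apply mul_le_mul_of_nonneg_left hB2D (by positivity)
        _ ≤ (48*C^4+1)*S^(-(4*τ))*Dd := by nlinarith [mul_nonneg hx0 hDpos.le]
    · rw [hDd]
      have hne : B - (4*(r:ℝ)-10)*E ≠ 0 := by rw [← hDd]; exact hDpos.ne'
      rw [add_sub_cancel]
      field_simp
end
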